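/- arXiv:1806.10660 — 3 statements merged into one kernel-verified Lean document; each statement's English description precedes it below -/
import Mathlib

section
/- Assume unit costs. For every decision tree T evaluating the score classification function f: Σ_{j=1}^{B} C₁^j(σ¹) ≤ Σ_a C(T,a)·Pr(a), and Σ_{j=1}^{B} C₀^j(σ⁰) ≤ Σ_a C(T,a)·Pr(a), where the outer sums on the right range over all assignments a ∈ {0,1}^n. -/
open Finset

/-- Number of true bits of an assignment. -/
def N1 {n : ℕ} (a : Fin n → Bool) : ℕ :=
  (Finset.univ.filter (fun i => a i = true)).card

/-- Probability of an assignment. -/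
noncomputable def pr {n : ℕ} (p : Fin n → ℝ) (a : Fin n → Bool) : ℝ :=
  ∏ i, if a i then p i else 1 - p i

/-- Least `k` such that the first `k` entries of `l` contain at least `m`
indices selected by `sel`. -/
noncomputable def stopCount {n : ℕ} (sel : Fin n → Bool) (m : ℕ) (l : List (Fin n)) : ℕ :=
  sInf {k | m ≤ ((l.take k).filter sel).length}

/-- `C₁^j(σ)`: expected number of queries, over the block `{a | αj ≤ N₁(a) < βj}`,
until `αj` ones have been observed, querying in the order `σ(0), σ(1), …`. -/
noncomputable def C1 {n : ℕ} (p : Fin n → ℝ) (αj βj : ℕ) (σ : Equiv.Perm (Fin n)) : ℝ :=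
  ∑ a ∈ Finset.univ.filter (fun a : Fin n → Bool => αj ≤ N1 a ∧ N1 a < βj),
    (stopCount a αj (List.ofFn (fun t => σ t)) : ℝ) * pr p a

/-- `C₀^j(σ)`: expected number of queries, over the block `{a | αj ≤ N₁(a) < βj}`,
until `n − βj + 1` zeros have been observed, querying in the order `σ(0), σ(1), …`. -/
noncomputable def C0 {n : ℕ} (p : Fin n → ℝ) (αj βj : ℕ) (σ : Equiv.Perm (Fin n)) : ℝ :=
  ∑ a ∈ Finset.univ.filter (fun a : Fin n → Bool => αj ≤ N1 a ∧ N1 a < βj),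
    (stopCount (fun i => !a i) (n + 1 - βj) (List.ofFn (fun t => σ t)) : ℝ) * pr p a
/-- Binary decision trees over `n` bits, with natural-number leaf labels. -/
inductive DTree (n : ℕ) : Type where
  | leaf : ℕ → DTree n
  | node : Fin n → DTree n → DTree n → DTree n

namespace DTree

/-- Output of the tree on assignment `a`. -/
def eval {n : ℕ} : DTree n → (Fin n → Bool) → ℕ
  | .leaf v, _ => v
  | .node i t0 t1, a => if a i then eval t1 a else eval t0 a

/-- Total cost of the queries made on assignment `a`. -/
noncomputable def cost {n : ℕ} (c : Fin n → ℝ) : DTree n → (Fin n → Bool) → ℝ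
  | .leaf _, _ => 0
  | .node i t0 t1, a => c i + (if a i then cost c t1 a else cost c t0 a)

/-- The list of indices queried on assignment `a`, in order. -/
def path {n : ℕ} : DTree n → (Fin n → Bool) → List (Fin n)
  | .leaf _, _ => []
  | .node i t0 t1, a => i :: (if a i then path t1 a else path t0 a)

/-- No index occurs twice on any root-to-leaf path (given already-used indices). -/
def Proper {n : ℕ} : DTree n → Finset (Fin n) → Prop
  | .leaf _, _ => True
  | .node i t0 t1, used =>
      i ∉ used ∧ Proper t0 (insert i used) ∧ Proper t1 (insert i used)

/-- Every root-to-leaf path queries all `n` indices (and no repeats). -/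
def Full {n : ℕ} : DTree n → Finset (Fin n) → Prop
  | .leaf _, used => used = Finset.univ
  | .node i t0 t1, used =>
      i ∉ used ∧ Full t0 (insert i used) ∧ Full t1 (insert i used)

end DTree

namespace Stmt5Aux

variable {n : ℕ}

def onesL (a : Fin n → Bool) (l : List (Fin n)) : ℕ := (l.filter a).length

def onesS (a : Fin n → Bool) (S : Finset (Fin n)) : ℕ := (S.filter (fun i => a i = true)).card

noncomputable def indLe (m k : ℕ) : ℝ := if m ≤ k then 1 else 0

def Dset (used : Finset (Fin n)) (b : Fin n → Bool) : Finset (Fin n → Bool) :=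
  Finset.univ.filter (fun a => ∀ i ∈ used, a i = b i)

def topF (L : List (Fin n)) (used : Finset (Fin n)) (k : ℕ) : Finset (Fin n) :=
  ((L.filter (fun j => decide (j ∉ used))).take k).toFinset

noncomputable def SP (p : Fin n → ℝ) (Θ : (Fin n → Bool) → ℕ) (S : Finset (Fin n))
    (used : Finset (Fin n)) (b : Fin n → Bool) : ℝ :=
  ∑ a ∈ Dset used b, indLe (Θ a) (onesS a S) * pr p a

def swapE (i i' : Fin n) : (Fin n → Bool) ≃ (Fin n → Bool) where
  toFun a := fun j => a (Equiv.swap i i' j)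
  invFun a := fun j => a (Equiv.swap i i' j)
  left_inv a := by funext j; simp
  right_inv a := by funext j; simp

def notE : (Fin n → Bool) ≃ (Fin n → Bool) where
  toFun a := fun j => !a j
  invFun a := fun j => !a j
  left_inv a := by funext j; simp
  right_inv a := by funext j; simp

-- basic indLe lemmas
lemma indLe_nonneg (m k : ℕ) : 0 ≤ indLe m k := by unfold indLe; by_cases h : m ≤ k <;> simp [h]

lemma indLe_mono (m : ℕ) {k k' : ℕ} (h : k ≤ k') : indLe m k ≤ indLe m k' := by
  unfold indLe
  by_cases h1 : m ≤ k
  · rw [if_pos h1, if_pos (h1.trans h)]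
  · by_cases h2 : m ≤ k' <;> simp [h1, h2]

lemma indLe_sub_one (m x : ℕ) : indLe m (x + 1) = indLe (m - 1) x := by
  unfold indLe
  by_cases h : m ≤ x + 1
  · rw [if_pos h, if_pos (by omega)]
  · rw [if_neg h, if_neg (by omega)]

lemma ite01 (m x : ℕ) : (if m ≤ x then (0:ℝ) else 1) = 1 - indLe m x := by
  unfold indLe; by_cases h : m ≤ x <;> simp [h]

-- onesL lemmas
lemma onesL_nil (a : Fin n → Bool) : onesL a [] = 0 := rfl

lemma onesL_cons_true {a : Fin n → Bool} {i : Fin n} (h : a i = true) (l : List (Fin n)) :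
    onesL a (i :: l) = onesL a l + 1 := by
  simp [onesL, List.filter_cons, h]

lemma onesL_cons_false {a : Fin n → Bool} {i : Fin n} (h : a i = false) (l : List (Fin n)) :
    onesL a (i :: l) = onesL a l := by
  simp [onesL, List.filter_cons, h]

lemma onesL_take_le (a : Fin n → Bool) (l : List (Fin n)) {k k' : ℕ} (h : k ≤ k') :
    onesL a (l.take k) ≤ onesL a (l.take k') := by
  have h1 : l.take k = (l.take k').take k := by rw [List.take_take, Nat.min_eq_left h]
  rw [h1]
  exact List.Sublist.length_le (List.Sublist.filter _ (List.take_sublist _ _))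

lemma onesL_add_not (a : Fin n → Bool) (l : List (Fin n)) :
    onesL a l + onesL (fun i => !a i) l = l.length := by
  induction l with
  | nil => rfl
  | cons j l ih =>
    cases h : a j
    · rw [onesL_cons_false h, onesL_cons_true (by simp [h]) l, List.length_cons]; omega
    · rw [onesL_cons_true h, onesL_cons_false (by simp [h]) l, List.length_cons]; omega

lemma onesL_eq_onesS {l : List (Fin n)} (hl : l.Nodup) (a : Fin n → Bool) :
    onesS a l.toFinset = onesL a l := by
  unfold onesS onesL
  rw [← List.toFinset_filter, List.toFinset_card_of_nodup (hl.filter _)]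

-- onesS lemmas
lemma onesS_insert {S : Finset (Fin n)} {i : Fin n} (h : i ∉ S) (a : Fin n → Bool) :
    onesS a (insert i S) = onesS a S + (if a i = true then 1 else 0) := by
  unfold onesS
  rw [Finset.filter_insert]
  by_cases ha : a i = true
  · rw [if_pos ha, Finset.card_insert_of_notMem (fun hc => h (Finset.mem_filter.mp hc).1), if_pos ha]
  · rw [if_neg ha, if_neg ha, Nat.add_zero]

lemma onesS_congr {S : Finset (Fin n)} {a b : Fin n → Bool} (h : ∀ j ∈ S, a j = b j) :
    onesS a S = onesS b S := by
  unfold onesS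
  congr 1
  exact Finset.filter_congr (fun j hj => by rw [h j hj])


-- N1 lemmas
lemma N1_le (a : Fin n → Bool) : N1 a ≤ n := by
  unfold N1
  exact (Finset.card_filter_le _ _).trans (by simp)

lemma N1_comp (a : Fin n → Bool) (e : Equiv.Perm (Fin n)) : N1 (fun j => a (e j)) = N1 a := by
  unfold N1
  apply Finset.card_bij (fun j _ => e j)
  · intro j hj
    simpa using (Finset.mem_filter.mp hj).2
  · intro j1 h1 j2 h2 h
    exact e.injective h
  · intro j hj
    refine ⟨e.symm j, ?_, Equiv.apply_symm_apply e j⟩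
    simp only [Finset.mem_filter, Finset.mem_univ, true_and, Equiv.apply_symm_apply]
    simpa using (Finset.mem_filter.mp hj).2

lemma N1_swapE (i i' : Fin n) (a : Fin n → Bool) : N1 (swapE i i' a) = N1 a :=
  N1_comp a (Equiv.swap i i')

lemma N1_not (a : Fin n → Bool) : N1 (fun i => !a i) = n - N1 a := by
  unfold N1
  have h : (Finset.univ.filter fun i => (!a i) = true) = (Finset.univ.filter fun i => a i = true)ᶜ := by
    ext i
    simp
  rw [h, Finset.card_compl, Fintype.card_fin]

-- swapE lemmas
lemma swapE_apply_left (i i' : Fin n) (a : Fin n → Bool) : swapE i i' a i = a i' := by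
  simp [swapE]

lemma swapE_apply_right (i i' : Fin n) (a : Fin n → Bool) : swapE i i' a i' = a i := by
  simp [swapE]

lemma swapE_apply_ne (i i' : Fin n) (a : Fin n → Bool) {j : Fin n} (hj : j ≠ i) (hj' : j ≠ i') :
    swapE i i' a j = a j := by
  simp [swapE, Equiv.swap_apply_of_ne_of_ne hj hj']

lemma swapE_invol (i i' : Fin n) (a : Fin n → Bool) : swapE i i' (swapE i i' a) = a := by
  funext j; simp [swapE]

-- pr lemmas
lemma pr_pos {p : Fin n → ℝ} (hp : ∀ i, 0 < p i ∧ p i < 1) (a : Fin n → Bool) : 0 < pr p a := by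
  unfold pr
  apply Finset.prod_pos
  intro i _
  cases h : a i
  · simp only [h, Bool.false_eq_true, if_false]
    linarith [(hp i).2]
  · simp only [h, if_true]
    exact (hp i).1

lemma pr_nonneg {p : Fin n → ℝ} (hp : ∀ i, 0 < p i ∧ p i < 1) (a : Fin n → Bool) : 0 ≤ pr p a :=
  (pr_pos hp a).le

lemma pr_not (p : Fin n → ℝ) (b : Fin n → Bool) :
    pr p (fun i => !b i) = pr (fun i => 1 - p i) b := by
  unfold pr
  refine Finset.prod_congr rfl fun i _ => ?_
  cases h : b i <;> simp [h]

lemma pr_swap_le {p : Fin n → ℝ} (hp : ∀ i, 0 < p i ∧ p i < 1) {i i' : Fin n} (hii' : i ≠ i')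
    (hpp : p i ≤ p i') (a : Fin n → Bool) (hai : a i = true) (hai' : a i' = false) :
    pr p a ≤ pr p (swapE i i' a) := by
  set w : (Fin n → Bool) → Fin n → ℝ := fun x j => if x j then p j else 1 - p j with hw
  have hfac : ∀ x : Fin n → Bool,
      pr p x = w x i * (w x i' * ∏ j ∈ (Finset.univ.erase i).erase i', w x j) := by
    intro x
    rw [show pr p x = ∏ j, w x j from rfl,
      ← Finset.mul_prod_erase Finset.univ (w x) (Finset.mem_univ i),
      ← Finset.mul_prod_erase (Finset.univ.erase i) (w x)
        (Finset.mem_erase.mpr ⟨hii'.symm, Finset.mem_univ i'⟩)]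
  have hrest : ∏ j ∈ (Finset.univ.erase i).erase i', w (swapE i i' a) j
      = ∏ j ∈ (Finset.univ.erase i).erase i', w a j := by
    refine Finset.prod_congr rfl fun j hj => ?_
    obtain ⟨hji', hji⟩ := Finset.mem_erase.mp hj
    have hji2 := (Finset.mem_erase.mp hji).1
    rw [hw]
    simp only []
    rw [swapE_apply_ne i i' a hji2 hji']
  have hR0 : 0 ≤ ∏ j ∈ (Finset.univ.erase i).erase i', w a j := by
    apply Finset.prod_nonneg
    intro j _
    rw [hw]
    cases h : a j <;> simp [h] <;> linarith [(hp j).1, (hp j).2]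
  rw [hfac a, hfac (swapE i i' a), hrest]
  have h1 : w a i = p i := by simp [hw, hai]
  have h2 : w a i' = 1 - p i' := by simp [hw, hai']
  have h3 : w (swapE i i' a) i = 1 - p i := by
    rw [hw]; simp only []; rw [swapE_apply_left, hai']; simp
  have h4 : w (swapE i i' a) i' = p i' := by
    rw [hw]; simp only []; rw [swapE_apply_right, hai]; simp
  rw [h1, h2, h3, h4]
  nlinarith [mul_nonneg hR0 (sub_nonneg.mpr hpp)]


-- Dset lemmas
lemma mem_Dset {used : Finset (Fin n)} {b a : Fin n → Bool} :
    a ∈ Dset used b ↔ ∀ i ∈ used, a i = b i := by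
  simp [Dset]

lemma mem_Dset_insert {used : Finset (Fin n)} {b : Fin n → Bool} {i : Fin n} (hiu : i ∉ used)
    (v : Bool) {a : Fin n → Bool} :
    a ∈ Dset (insert i used) (Function.update b i v) ↔ a i = v ∧ a ∈ Dset used b := by
  rw [mem_Dset, Finset.forall_mem_insert, mem_Dset, Function.update_self]
  have hne : ∀ j ∈ used, j ≠ i := by rintro j hj rfl; exact hiu hj
  constructor
  · rintro ⟨h1, h2⟩
    exact ⟨h1, fun j hj => by rw [h2 j hj, Function.update_of_ne (hne j hj)]⟩
  · rintro ⟨h1, h2⟩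
    exact ⟨h1, fun j hj => by rw [h2 j hj, Function.update_of_ne (hne j hj)]⟩

lemma Dset_split {used : Finset (Fin n)} {b : Fin n → Bool} {i : Fin n} (hiu : i ∉ used) :
    Dset used b = Dset (insert i used) (Function.update b i true)
      ∪ Dset (insert i used) (Function.update b i false) := by
  ext a
  rw [Finset.mem_union, mem_Dset_insert hiu, mem_Dset_insert hiu]
  constructor
  · intro h
    cases hai : a i
    · exact Or.inr ⟨rfl, h⟩
    · exact Or.inl ⟨rfl, h⟩
  · rintro (⟨-, h⟩ | ⟨-, h⟩) <;> exact h

lemma Dset_disj {used : Finset (Fin n)} {b : Fin n → Bool} {i : Fin n} (hiu : i ∉ used) :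
    Disjoint (Dset (insert i used) (Function.update b i true))
      (Dset (insert i used) (Function.update b i false)) := by
  rw [Finset.disjoint_left]
  intro a h1 h0
  have e1 := ((mem_Dset_insert hiu true).mp h1).1
  have e0 := ((mem_Dset_insert hiu false).mp h0).1
  rw [e1] at e0
  exact Bool.noConfusion e0

-- topF lemmas
lemma topF_not_used {L : List (Fin n)} {used : Finset (Fin n)} {k : ℕ} {j : Fin n}
    (hj : j ∈ topF L used k) : j ∉ used := by
  have h1 : j ∈ L.filter (fun j => decide (j ∉ used)) :=
    List.mem_of_mem_take (List.mem_toFinset.mp hj)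
  simpa using (List.mem_filter.mp h1).2

lemma topF_card {L : List (Fin n)} (hLn : L.Nodup) (hLm : ∀ i, i ∈ L)
    {used : Finset (Fin n)} {k : ℕ} (hk : k + used.card ≤ n) :
    (topF L used k).card = k := by
  set F := L.filter (fun j => decide (j ∉ used)) with hF
  have hFnd : F.Nodup := hLn.filter _
  have hFlen : F.length = n - used.card := by
    have h1 : F.toFinset = usedᶜ := by
      ext j
      simp [hF, List.mem_filter, hLm j]
    have h2 := List.toFinset_card_of_nodup hFnd
    rw [h1, Finset.card_compl, Fintype.card_fin] at h2
    omega
  have h3 : (topF L used k).card = (F.take k).length :=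
    List.toFinset_card_of_nodup ((List.take_sublist _ _).nodup hFnd)
  rw [h3, List.length_take]
  omega

-- stopCount-like counting
lemma stop_eq_sum (sel : Fin n → Bool) (m : ℕ) (l : List (Fin n)) (N : ℕ)
    (hN : m ≤ onesL sel (l.take N)) :
    sInf {k | m ≤ ((l.take k).filter sel).length}
      = ∑ k ∈ Finset.range N, (if m ≤ onesL sel (l.take k) then 0 else 1) := by
  set s := sInf {k | m ≤ ((l.take k).filter sel).length} with hs
  have hmem : ∀ k, (m ≤ onesL sel (l.take k)) ↔ k ∈ {k | m ≤ ((l.take k).filter sel).length} :=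
    fun k => Iff.rfl
  have hne : {k | m ≤ ((l.take k).filter sel).length}.Nonempty := ⟨N, (hmem N).mp hN⟩
  have hsmem : m ≤ onesL sel (l.take s) := Nat.sInf_mem hne
  have hsle : s ≤ N := Nat.sInf_le ((hmem N).mp hN)
  have hiff : ∀ k, (m ≤ onesL sel (l.take k)) ↔ ¬ (k < s) := by
    intro k
    constructor
    · intro h hlt
      exact absurd (Nat.sInf_le ((hmem k).mp h)) (by omega)
    · intro h
      exact hsmem.trans (onesL_take_le sel l (by omega))
  have hfil : (Finset.range N).filter (fun k => k < s) = Finset.range s := by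
    ext k
    simp only [Finset.mem_filter, Finset.mem_range]
    omega
  calc s = ((Finset.range N).filter (fun k => k < s)).card := by rw [hfil, Finset.card_range]
    _ = ∑ k ∈ Finset.range N, (if k < s then 1 else 0) := by
        rw [Finset.sum_boole]
        simp
    _ = ∑ k ∈ Finset.range N, (if m ≤ onesL sel (l.take k) then 0 else 1) := by
        refine Finset.sum_congr rfl fun k _ => ?_
        by_cases h : k < s
        · rw [if_pos h, if_neg (fun hm => (hiff k).mp hm h)]
        · rw [if_neg h, if_pos ((hiff k).mpr h)]


lemma swap_le {p : Fin n → ℝ} (hp : ∀ i, 0 < p i ∧ p i < 1)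
    {Θ : (Fin n → Bool) → ℕ} (hΘ : ∀ a a', N1 a = N1 a' → Θ a = Θ a')
    (used : Finset (Fin n)) (b : Fin n → Bool) (S : Finset (Fin n)) (i i' : Fin n)
    (hiS : i ∈ S) (hi'S : i' ∉ S) (hiu : i ∉ used) (hi'u : i' ∉ used)
    (hpp : p i ≤ p i') :
    SP p Θ S used b ≤ SP p Θ (insert i' (S.erase i)) used b := by
  have hii' : i ≠ i' := fun h => hi'S (h ▸ hiS)
  unfold SP
  rw [← sub_nonneg, ← Finset.sum_sub_distrib]
  set g : (Fin n → Bool) → ℝ := fun a =>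
    indLe (Θ a) (onesS a (insert i' (S.erase i))) * pr p a
      - indLe (Θ a) (onesS a S) * pr p a with hg
  show 0 ≤ ∑ a ∈ Dset used b, g a
  have hDmem : ∀ a : Fin n → Bool, a ∈ Dset used b ↔ swapE i i' a ∈ Dset used b := by
    intro a
    rw [mem_Dset, mem_Dset]
    have key : ∀ (x : Fin n → Bool), (∀ j ∈ used, x j = b j) →
        ∀ j ∈ used, swapE i i' x j = b j := by
      intro x hx j hj
      rw [swapE_apply_ne i i' x (by rintro rfl; exact hiu hj) (by rintro rfl; exact hi'u hj)]
      exact hx j hj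
    constructor
    · exact key a
    · intro h
      have := key _ h
      simpa [swapE_invol] using this
  have hsum : ∑ a ∈ Dset used b, g a = ∑ a ∈ Dset used b, g (swapE i i' a) :=
    (Finset.sum_equiv (swapE i i') (fun a => hDmem a) (fun a _ => rfl)).symm
  have key : ∀ a : Fin n → Bool, 0 ≤ g a + g (swapE i i' a) := by
    intro a
    set a' := swapE i i' a with ha'
    have hΘ' : Θ a' = Θ a := hΘ _ _ (N1_swapE i i' a)
    have hi'e : i' ∉ S.erase i := fun h => hi'S (Finset.mem_erase.mp h).2
    have hie : i ∉ S.erase i := Finset.notMem_erase i S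
    have hagree : ∀ j ∈ S.erase i, a' j = a j := by
      intro j hj
      obtain ⟨hji, hjS⟩ := Finset.mem_erase.mp hj
      exact swapE_apply_ne i i' a hji (fun h => hi'S (h ▸ hjS))
    set o := onesS a (S.erase i) with ho
    have hoa' : onesS a' (S.erase i) = o := onesS_congr hagree
    have hSa : onesS a S = o + (if a i = true then 1 else 0) := by
      conv_lhs => rw [← Finset.insert_erase hiS]
      rw [onesS_insert hie]
    have hS'a : onesS a (insert i' (S.erase i)) = o + (if a i' = true then 1 else 0) := by
      rw [onesS_insert hi'e]
    have hvl : a' i = a i' := by rw [ha']; exact swapE_apply_left i i' a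
    have hvr : a' i' = a i := by rw [ha']; exact swapE_apply_right i i' a
    have hSa' : onesS a' S = o + (if a i' = true then 1 else 0) := by
      conv_lhs => rw [← Finset.insert_erase hiS]
      rw [onesS_insert hie, hoa', hvl]
    have hS'a' : onesS a' (insert i' (S.erase i)) = o + (if a i = true then 1 else 0) := by
      rw [onesS_insert hi'e, hoa', hvr]
    simp only [hg]
    rw [hΘ', hSa, hS'a, hSa', hS'a']
    cases hai : a i <;> cases hai' : a i' <;> norm_num
    · -- a i = false, a i' = true : g a = (indLe (o+1) - indLe o) * pr a, g a' = -(...) * pr a'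
      have hple : pr p a' ≤ pr p a := by
        have h1 : a' i = true := by rw [ha', swapE_apply_left, hai']
        have h2 : a' i' = false := by rw [ha', swapE_apply_right, hai]
        have := pr_swap_le hp hii' hpp a' h1 h2
        rwa [ha', swapE_invol] at this
      have hd : indLe (Θ a) o ≤ indLe (Θ a) (o + 1) := indLe_mono _ (Nat.le_succ o)
      nlinarith [mul_nonneg (sub_nonneg.mpr hd) (sub_nonneg.mpr hple)]
    · -- a i = true, a i' = false
      have hple : pr p a ≤ pr p a' := pr_swap_le hp hii' hpp a hai hai'
      have hd : indLe (Θ a) o ≤ indLe (Θ a) (o + 1) := indLe_mono _ (Nat.le_succ o)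
      nlinarith [mul_nonneg (sub_nonneg.mpr hd) (sub_nonneg.mpr hple)]
  have h2 : (2:ℝ) * ∑ a ∈ Dset used b, g a
      = ∑ a ∈ Dset used b, (g a + g (swapE i i' a)) := by
    rw [Finset.sum_add_distrib, ← hsum]
    ring
  have h3 : 0 ≤ ∑ a ∈ Dset used b, (g a + g (swapE i i' a)) :=
    Finset.sum_nonneg fun a _ => key a
  linarith


lemma chain {p : Fin n → ℝ} (hp : ∀ i, 0 < p i ∧ p i < 1)
    {L : List (Fin n)} (hLn : L.Nodup) (hLm : ∀ i, i ∈ L)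
    (hLp : L.Pairwise fun x y => p y ≤ p x)
    {Θ : (Fin n → Bool) → ℕ} (hΘ : ∀ a a', N1 a = N1 a' → Θ a = Θ a')
    (used : Finset (Fin n)) (b : Fin n → Bool) (k : ℕ) (hk : k + used.card ≤ n) :
    ∀ S : Finset (Fin n), (∀ j ∈ S, j ∉ used) → S.card = k →
      SP p Θ S used b ≤ SP p Θ (topF L used k) used b := by
  set T := topF L used k with hT
  have hTcard : T.card = k := topF_card hLn hLm hk
  suffices H : ∀ d (S : Finset (Fin n)), (∀ j ∈ S, j ∉ used) → S.card = k →
      (S \ T).card = d → SP p Θ S used b ≤ SP p Θ T used b by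
    exact fun S h1 h2 => H _ S h1 h2 rfl
  intro d
  induction d using Nat.strong_induction_on with
  | _ d IH =>
  intro S hS hcard hd
  by_cases hST : S = T
  · rw [hST]
  · have h1 : (S \ T).Nonempty := by
      rw [Finset.sdiff_nonempty]
      intro hsub
      exact hST (Finset.eq_of_subset_of_card_le hsub (by omega))
    have h2 : (T \ S).Nonempty := by
      rw [Finset.sdiff_nonempty]
      intro hsub
      exact hST (Finset.eq_of_subset_of_card_le hsub (by omega)).symm
    obtain ⟨i, himem⟩ := h1
    obtain ⟨i', hi'mem⟩ := h2
    have hiS : i ∈ S := (Finset.mem_sdiff.mp himem).1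
    have hiT : i ∉ T := (Finset.mem_sdiff.mp himem).2
    have hi'T : i' ∈ T := (Finset.mem_sdiff.mp hi'mem).1
    have hi'S : i' ∉ S := (Finset.mem_sdiff.mp hi'mem).2
    have hiu : i ∉ used := hS i hiS
    have hi'u : i' ∉ used := topF_not_used hi'T
    -- p i ≤ p i'
    set F := L.filter (fun j => decide (j ∉ used)) with hF
    have hFpw : F.Pairwise (fun x y => p y ≤ p x) :=
      List.Pairwise.sublist List.filter_sublist hLp
    have hi'take : i' ∈ F.take k := List.mem_toFinset.mp hi'T
    have hiF : i ∈ F := by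
      rw [hF, List.mem_filter]
      exact ⟨hLm i, by simpa using hiu⟩
    have hidrop : i ∈ F.drop k := by
      have hsplit : i ∈ F.take k ++ F.drop k := by rw [List.take_append_drop]; exact hiF
      rcases List.mem_append.mp hsplit with h | h
      · exact absurd (List.mem_toFinset.mpr h) hiT
      · exact h
    have hpp : p i ≤ p i' := by
      have hpw2 : List.Pairwise (fun x y => p y ≤ p x) (F.take k ++ F.drop k) := by
        rw [List.take_append_drop]; exact hFpw
      exact (List.pairwise_append.mp hpw2).2.2 i' hi'take i hidrop
    have hstep := swap_le hp hΘ used b S i i' hiS hi'S hiu hi'u hpp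
    set S' := insert i' (S.erase i) with hS'
    have hS'sub : ∀ j ∈ S', j ∉ used := by
      intro j hj
      rcases Finset.mem_insert.mp hj with rfl | hj2
      · exact hi'u
      · exact hS j (Finset.mem_erase.mp hj2).2
    have hi'e : i' ∉ S.erase i := fun h => hi'S (Finset.mem_erase.mp h).2
    have hS'card : S'.card = k := by
      rw [hS', Finset.card_insert_of_notMem hi'e, Finset.card_erase_of_mem hiS]
      have : 1 ≤ S.card := Finset.card_pos.mpr ⟨i, hiS⟩
      omega
    have hdiff : S' \ T = (S \ T).erase i := by
      ext j
      simp only [hS', Finset.mem_sdiff, Finset.mem_insert, Finset.mem_erase]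
      constructor
      · rintro ⟨rfl | ⟨hji, hjS⟩, hjT⟩
        · exact absurd hi'T hjT
        · exact ⟨hji, hjS, hjT⟩
      · rintro ⟨hji, hjS, hjT⟩
        exact ⟨Or.inr ⟨hji, hjS⟩, hjT⟩
    have hdlt : ((S' \ T).card) < d := by
      rw [hdiff, Finset.card_erase_of_mem himem, hd]
      have : 1 ≤ (S \ T).card := Finset.card_pos.mpr ⟨i, himem⟩
      omega
    exact hstep.trans (IH _ hdlt S' hS'sub hS'card rfl)


-- DTree lemmas
lemma path_nodup (T : DTree n) : ∀ (used : Finset (Fin n)), T.Proper used → ∀ a,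
    (T.path a).Nodup ∧ ∀ i ∈ T.path a, i ∉ used := by
  induction T with
  | leaf v => intro used h a; simp [DTree.path]
  | node i t0 t1 IH0 IH1 =>
    intro used h a
    obtain ⟨hiu, h0, h1⟩ := h
    have key : ∀ (l : List (Fin n)), l.Nodup → (∀ j ∈ l, j ∉ insert i used) →
        ((i :: l).Nodup ∧ ∀ j ∈ i :: l, j ∉ used) := by
      intro l hnd hmem
      refine ⟨List.nodup_cons.mpr ⟨fun h' => hmem i h' (Finset.mem_insert_self _ _), hnd⟩, ?_⟩
      intro j hj
      rcases List.mem_cons.mp hj with rfl | hj2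
      · exact hiu
      · exact fun hju => hmem j hj2 (Finset.mem_insert_of_mem hju)
    cases ha : a i
    · have h' := IH0 _ h0 a
      have := key (t0.path a) h'.1 h'.2
      simpa [DTree.path, ha] using this
    · have h' := IH1 _ h1 a
      have := key (t1.path a) h'.1 h'.2
      simpa [DTree.path, ha] using this

lemma path_eval_agree (T : DTree n) : ∀ a b : Fin n → Bool,
    (∀ i ∈ T.path a, b i = a i) → T.path b = T.path a ∧ T.eval b = T.eval a := by
  induction T with
  | leaf v => intro a b h; exact ⟨rfl, rfl⟩
  | node i t0 t1 IH0 IH1 =>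
    intro a b h
    have hbi : b i = a i := h i (by simp [DTree.path])
    cases ha : a i
    · have ht := IH0 a b (fun j hj => h j (by simp [DTree.path, ha, hj]))
      constructor <;> simp [DTree.path, DTree.eval, ha, hbi, ht.1, ht.2]
    · have ht := IH1 a b (fun j hj => h j (by simp [DTree.path, ha, hj]))
      constructor <;> simp [DTree.path, DTree.eval, ha, hbi, ht.1, ht.2]

lemma cost_eq_length (c : Fin n → ℝ) (hc : ∀ i, c i = 1) (T : DTree n) :
    ∀ a, T.cost c a = ((T.path a).length : ℝ) := by
  induction T with
  | leaf v => intro a; simp [DTree.cost, DTree.path]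
  | node i t0 t1 IH0 IH1 =>
    intro a
    cases ha : a i <;> simp [DTree.cost, DTree.path, ha, hc i, IH0 a, IH1 a] <;> push_cast <;> ring

def flipT : DTree n → DTree n
  | .leaf v => .leaf v
  | .node i t0 t1 => .node i (flipT t1) (flipT t0)

lemma flipT_path (T : DTree n) : ∀ b : Fin n → Bool, (flipT T).path b = T.path (fun i => !b i) := by
  induction T with
  | leaf v => intro b; rfl
  | node i t0 t1 IH0 IH1 =>
    intro b
    cases hb : b i <;> simp [flipT, DTree.path, hb, IH0, IH1]

lemma flipT_proper (T : DTree n) : ∀ used, T.Proper used → (flipT T).Proper used := by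
  induction T with
  | leaf v => intro used h; trivial
  | node i t0 t1 IH0 IH1 =>
    intro used h
    obtain ⟨h1, h2, h3⟩ := h
    exact ⟨h1, IH1 _ h3, IH0 _ h2⟩


lemma adapt {p : Fin n → ℝ} (hp : ∀ i, 0 < p i ∧ p i < 1)
    {L : List (Fin n)} (hLn : L.Nodup) (hLm : ∀ i, i ∈ L)
    (hLp : L.Pairwise fun x y => p y ≤ p x) :
    ∀ (U : DTree n) (used : Finset (Fin n)) (b : Fin n → Bool)
      (Θ : (Fin n → Bool) → ℕ), (∀ a a', N1 a = N1 a' → Θ a = Θ a') →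
      ∀ k, U.Proper used → k + used.card ≤ n →
      ∑ a ∈ Dset used b, indLe (Θ a) (onesL a ((U.path a).take k)) * pr p a
        ≤ SP p Θ (topF L used k) used b := by
  intro U
  induction U with
  | leaf v =>
    intro used b Θ hΘ k hU hk
    unfold SP
    refine Finset.sum_le_sum fun a _ => ?_
    refine mul_le_mul_of_nonneg_right ?_ (pr_nonneg hp a)
    have h0 : onesL a ((DTree.path (DTree.leaf v) a).take k) = 0 := by
      simp [DTree.path, onesL]
    rw [h0]
    exact indLe_mono _ (Nat.zero_le _)
  | node i t0 t1 IH0 IH1 =>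
    intro used b Θ hΘ k hU hk
    obtain ⟨hiu, hP0, hP1⟩ := hU
    cases k with
    | zero =>
      unfold SP
      refine Finset.sum_le_sum fun a _ => ?_
      refine mul_le_mul_of_nonneg_right ?_ (pr_nonneg hp a)
      have h0 : onesL a (((DTree.node i t0 t1).path a).take 0) = 0 := by
        simp [onesL]
      rw [h0]
      exact indLe_mono _ (Nat.zero_le _)
    | succ k =>
      set used' := insert i used with hused'
      set b1 := Function.update b i true with hb1
      set b0 := Function.update b i false with hb0
      set S' := topF L used' k with hS'def
      have hk' : k + used'.card ≤ n := by
        rw [hused', Finset.card_insert_of_notMem hiu]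
        omega
      have hS'notused' : ∀ j ∈ S', j ∉ used' := fun j hj => topF_not_used hj
      have hiS' : i ∉ S' := fun h => hS'notused' i h (Finset.mem_insert_self _ _)
      have hS'card : S'.card = k := topF_card hLn hLm hk'
      -- true branch
      have htrue : ∑ a ∈ Dset used' b1, indLe (Θ a) (onesL a (((DTree.node i t0 t1).path a).take (k+1))) * pr p a
          ≤ ∑ a ∈ Dset used' b1, indLe (Θ a) (onesS a (insert i S')) * pr p a := by
        have e1 : ∀ a ∈ Dset used' b1,
            indLe (Θ a) (onesL a (((DTree.node i t0 t1).path a).take (k+1))) * pr p a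
              = indLe (Θ a - 1) (onesL a ((t1.path a).take k)) * pr p a := by
          intro a ha
          have hai : a i = true := ((mem_Dset_insert hiu true).mp ha).1
          have hpath : (DTree.node i t0 t1).path a = i :: t1.path a := by
            simp [DTree.path, hai]
          rw [hpath, List.take_succ_cons, onesL_cons_true hai, indLe_sub_one]
        have e2 : ∀ a ∈ Dset used' b1,
            indLe (Θ a - 1) (onesS a S') * pr p a
              = indLe (Θ a) (onesS a (insert i S')) * pr p a := by
          intro a ha
          have hai : a i = true := ((mem_Dset_insert hiu true).mp ha).1
          rw [onesS_insert hiS', hai, if_pos rfl, indLe_sub_one]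
        calc ∑ a ∈ Dset used' b1, indLe (Θ a) (onesL a (((DTree.node i t0 t1).path a).take (k+1))) * pr p a
            = ∑ a ∈ Dset used' b1, indLe (Θ a - 1) (onesL a ((t1.path a).take k)) * pr p a :=
              Finset.sum_congr rfl e1
          _ ≤ SP p (fun a => Θ a - 1) S' used' b1 :=
              IH1 used' b1 (fun a => Θ a - 1) (fun a a' h => by simp only [hΘ a a' h]) k hP1 hk'
          _ = ∑ a ∈ Dset used' b1, indLe (Θ a) (onesS a (insert i S')) * pr p a :=
              Finset.sum_congr rfl e2
      -- false branch
      have hfalse : ∑ a ∈ Dset used' b0, indLe (Θ a) (onesL a (((DTree.node i t0 t1).path a).take (k+1))) * pr p a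
          ≤ ∑ a ∈ Dset used' b0, indLe (Θ a) (onesS a (insert i S')) * pr p a := by
        have e1 : ∀ a ∈ Dset used' b0,
            indLe (Θ a) (onesL a (((DTree.node i t0 t1).path a).take (k+1))) * pr p a
              = indLe (Θ a) (onesL a ((t0.path a).take k)) * pr p a := by
          intro a ha
          have hai : a i = false := ((mem_Dset_insert hiu false).mp ha).1
          have hpath : (DTree.node i t0 t1).path a = i :: t0.path a := by
            simp [DTree.path, hai]
          rw [hpath, List.take_succ_cons, onesL_cons_false hai]
        have e2 : ∀ a ∈ Dset used' b0,
            indLe (Θ a) (onesS a S') * pr p a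
              = indLe (Θ a) (onesS a (insert i S')) * pr p a := by
          intro a ha
          have hai : a i = false := ((mem_Dset_insert hiu false).mp ha).1
          rw [onesS_insert hiS', hai]
          norm_num
        calc ∑ a ∈ Dset used' b0, indLe (Θ a) (onesL a (((DTree.node i t0 t1).path a).take (k+1))) * pr p a
            = ∑ a ∈ Dset used' b0, indLe (Θ a) (onesL a ((t0.path a).take k)) * pr p a :=
              Finset.sum_congr rfl e1
          _ ≤ SP p Θ S' used' b0 := IH0 used' b0 Θ hΘ k hP0 hk'
          _ = ∑ a ∈ Dset used' b0, indLe (Θ a) (onesS a (insert i S')) * pr p a :=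
              Finset.sum_congr rfl e2
      -- combine
      have hins_used : ∀ j ∈ insert i S', j ∉ used := by
        intro j hj
        rcases Finset.mem_insert.mp hj with rfl | hj2
        · exact hiu
        · exact fun hju => hS'notused' j hj2 (Finset.mem_insert_of_mem hju)
      have hins_card : (insert i S').card = k + 1 := by
        rw [Finset.card_insert_of_notMem hiS', hS'card]
      calc ∑ a ∈ Dset used b, indLe (Θ a) (onesL a (((DTree.node i t0 t1).path a).take (k+1))) * pr p a
          = (∑ a ∈ Dset used' b1, indLe (Θ a) (onesL a (((DTree.node i t0 t1).path a).take (k+1))) * pr p a)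
            + ∑ a ∈ Dset used' b0, indLe (Θ a) (onesL a (((DTree.node i t0 t1).path a).take (k+1))) * pr p a := by
            rw [Dset_split hiu, Finset.sum_union (Dset_disj hiu)]
        _ ≤ (∑ a ∈ Dset used' b1, indLe (Θ a) (onesS a (insert i S')) * pr p a)
            + ∑ a ∈ Dset used' b0, indLe (Θ a) (onesS a (insert i S')) * pr p a :=
            add_le_add htrue hfalse
        _ = ∑ a ∈ Dset used b, indLe (Θ a) (onesS a (insert i S')) * pr p a := by
            rw [Dset_split hiu, Finset.sum_union (Dset_disj hiu)]
        _ = SP p Θ (insert i S') used b := rfl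
        _ ≤ SP p Θ (topF L used (k+1)) used b :=
            chain hp hLn hLm hLp hΘ used b (k+1) hk (insert i S') hins_used hins_card


lemma keyk {p : Fin n → ℝ} (hp : ∀ i, 0 < p i ∧ p i < 1)
    {L : List (Fin n)} (hLn : L.Nodup) (hLm : ∀ i, i ∈ L)
    (hLp : L.Pairwise fun x y => p y ≤ p x)
    {Θ : (Fin n → Bool) → ℕ} (hΘ : ∀ a a', N1 a = N1 a' → Θ a = Θ a')
    (U : DTree n) (hU : U.Proper ∅) (k : ℕ) (hk : k ≤ n) :
    ∑ a : Fin n → Bool, (if Θ a ≤ onesL a (L.take k) then (0:ℝ) else 1) * pr p a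
      ≤ ∑ a : Fin n → Bool, (if Θ a ≤ onesL a ((U.path a).take k) then (0:ℝ) else 1) * pr p a := by
  have hred : ∀ S : (Fin n → Bool) → ℕ,
      ∑ a : Fin n → Bool, (if Θ a ≤ S a then (0:ℝ) else 1) * pr p a
        = (∑ a : Fin n → Bool, pr p a) - ∑ a : Fin n → Bool, indLe (Θ a) (S a) * pr p a := by
    intro S
    rw [← Finset.sum_sub_distrib]
    refine Finset.sum_congr rfl fun a _ => ?_
    rw [ite01]
    ring
  rw [hred (fun a => onesL a (L.take k)), hred (fun a => onesL a ((U.path a).take k))]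
  apply sub_le_sub_left
  have hDuniv : Dset (∅ : Finset (Fin n)) (fun _ => false) = Finset.univ := by
    unfold Dset
    apply Finset.filter_true_of_mem
    intro a _
    simp
  have h1 := adapt hp hLn hLm hLp U ∅ (fun _ => false) Θ hΘ k hU (by simpa using hk)
  rw [hDuniv] at h1
  have h2 : SP p Θ (topF L ∅ k) ∅ (fun _ => false)
      = ∑ a : Fin n → Bool, indLe (Θ a) (onesL a (L.take k)) * pr p a := by
    unfold SP
    rw [hDuniv]
    refine Finset.sum_congr rfl fun a _ => ?_
    have htop : topF L (∅ : Finset (Fin n)) k = (L.take k).toFinset := by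
      unfold topF
      simp
    rw [htop, onesL_eq_onesS ((List.take_sublist _ _).nodup hLn) a]
  rw [h2] at h1
  exact h1

lemma main {p : Fin n → ℝ} (hp : ∀ i, 0 < p i ∧ p i < 1)
    {L : List (Fin n)} (hLn : L.Nodup) (hLm : ∀ i, i ∈ L)
    (hLp : L.Pairwise fun x y => p y ≤ p x)
    {Θ : (Fin n → Bool) → ℕ} (hΘ : ∀ a a', N1 a = N1 a' → Θ a = Θ a')
    (hΘN : ∀ a, Θ a ≤ N1 a)
    (U : DTree n) (hU : U.Proper ∅)
    (hUT : ∀ a, Θ a ≤ onesL a (U.path a)) :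
    ∑ a : Fin n → Bool, (stopCount a (Θ a) L : ℝ) * pr p a
      ≤ ∑ a : Fin n → Bool, ((U.path a).length : ℝ) * pr p a := by
  have hLlen : L.length ≤ n := by simpa using hLn.length_le_card
  have hLtake : L.take n = L := List.take_of_length_le hLlen
  have hLfull : ∀ a : Fin n → Bool, onesL a L = N1 a := by
    intro a
    unfold onesL N1
    rw [← List.toFinset_card_of_nodup (hLn.filter _), List.toFinset_filter]
    congr 1
    ext i
    simp [hLm i]
  have hpathn : ∀ a : Fin n → Bool, (U.path a).length ≤ n := by
    intro a
    simpa using (path_nodup U ∅ hU a).1.length_le_card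
  have hstopL : ∀ a : Fin n → Bool, stopCount a (Θ a) L
      = ∑ k ∈ Finset.range n, (if Θ a ≤ onesL a (L.take k) then 0 else 1) := by
    intro a
    exact stop_eq_sum a (Θ a) L n (by rw [hLtake]; rw [show onesL a L = N1 a from hLfull a]; exact hΘN a)
  have hstopP : ∀ a : Fin n → Bool, stopCount a (Θ a) (U.path a)
      = ∑ k ∈ Finset.range n, (if Θ a ≤ onesL a ((U.path a).take k) then 0 else 1) := by
    intro a
    exact stop_eq_sum a (Θ a) (U.path a) n
      (by rw [List.take_of_length_le (hpathn a)]; exact hUT a)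
  calc ∑ a : Fin n → Bool, (stopCount a (Θ a) L : ℝ) * pr p a
      = ∑ k ∈ Finset.range n, ∑ a : Fin n → Bool,
          (if Θ a ≤ onesL a (L.take k) then (0:ℝ) else 1) * pr p a := by
        rw [Finset.sum_comm]
        refine Finset.sum_congr rfl fun a _ => ?_
        rw [← Finset.sum_mul]
        congr 1
        rw [hstopL a]
        push_cast
        rfl
    _ ≤ ∑ k ∈ Finset.range n, ∑ a : Fin n → Bool,
          (if Θ a ≤ onesL a ((U.path a).take k) then (0:ℝ) else 1) * pr p a := by
        refine Finset.sum_le_sum fun k hk => ?_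
        exact keyk hp hLn hLm hLp hΘ U hU k (Finset.mem_range.mp hk).le
    _ = ∑ a : Fin n → Bool, (stopCount a (Θ a) (U.path a) : ℝ) * pr p a := by
        rw [Finset.sum_comm]
        refine Finset.sum_congr rfl fun a _ => ?_
        rw [← Finset.sum_mul]
        congr 1
        rw [hstopP a]
        push_cast
        rfl
    _ ≤ ∑ a : Fin n → Bool, ((U.path a).length : ℝ) * pr p a := by
        refine Finset.sum_le_sum fun a _ => ?_
        refine mul_le_mul_of_nonneg_right ?_ (pr_nonneg hp a)
        have hle : stopCount a (Θ a) (U.path a) ≤ (U.path a).length := by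
          apply Nat.sInf_le
          show Θ a ≤ (((U.path a).take (U.path a).length).filter a).length
          rw [List.take_length]
          exact hUT a
        exact_mod_cast hle

end Stmt5Aux

theorem stmt5 {n : ℕ} (hn : 1 ≤ n) (p c : Fin n → ℝ)
    (hp : ∀ i, 0 < p i ∧ p i < 1) (hc : ∀ i, c i = 1)
    (B : ℕ) (hB : 2 ≤ B) (α : ℕ → ℕ)
    (hα1 : α 1 = 0) (hαtop : α (B + 1) = n + 1)
    (hmono : ∀ j, 1 ≤ j → j ≤ B → α j < α (j + 1))
    (f : (Fin n → Bool) → ℕ)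
    (hf : ∀ a, 1 ≤ f a ∧ f a ≤ B ∧ α (f a) ≤ N1 a ∧ N1 a < α (f a + 1))
    (σ1 σ0 : Equiv.Perm (Fin n))
    (hσ1 : ∀ s t : Fin n, s ≤ t → p (σ1 t) ≤ p (σ1 s))
    (hσ0 : ∀ s t : Fin n, s ≤ t → p (σ0 s) ≤ p (σ0 t))
    (T : DTree n) (hTp : T.Proper ∅) (hTe : ∀ a, T.eval a = f a) :
    (∑ j ∈ Finset.Icc 1 B, C1 p (α j) (α (j + 1)) σ1
      ≤ ∑ a : Fin n → Bool, T.cost c a * pr p a) ∧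
    (∑ j ∈ Finset.Icc 1 B, C0 p (α j) (α (j + 1)) σ0
      ≤ ∑ a : Fin n → Bool, T.cost c a * pr p a) := by
  classical
  have amono : ∀ j' j, 1 ≤ j → j ≤ j' → j' ≤ B + 1 → α j ≤ α j' := by
    intro j'
    induction j' with
    | zero => intro j h1 hle hub; omega
    | succ m ih =>
      intro j h1 hle hub
      rcases Nat.lt_or_ge j (m+1) with h | h
      · have h2 : α j ≤ α m := ih j h1 (by omega) (by omega)
        have h3 : α m < α (m+1) := hmono m (by omega) (by omega)
        omega
      · have hje : j = m + 1 := by omega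
        rw [hje]
  have funiq : ∀ (j : ℕ) (a : Fin n → Bool), 1 ≤ j → j ≤ B → α j ≤ N1 a → N1 a < α (j+1) → j = f a := by
    intro j a h1 hB' hlo hhi
    have hfa1 := (hf a).1
    have hfa2 := (hf a).2.1
    by_contra hne
    rcases Nat.lt_or_ge j (f a) with h | h
    · have h2 : α (j+1) ≤ α (f a) := amono (f a) (j+1) (by omega) (by omega) (by omega)
      have h3 := (hf a).2.2.1
      omega
    · have h4 : f a < j := by omega
      have h2 : α (f a + 1) ≤ α j := amono j (f a + 1) (by omega) (by omega) (by omega)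
      have h3 := (hf a).2.2.2
      omega
  have f_eq : ∀ a b : Fin n → Bool, N1 a = N1 b → f a = f b := by
    intro a b hab
    exact funiq (f a) b (hf a).1 (hf a).2.1 (hab ▸ (hf a).2.2.1) (hab ▸ (hf a).2.2.2)
  have block_sum : ∀ g : ℕ → (Fin n → Bool) → ℝ,
      (∑ j ∈ Finset.Icc 1 B, ∑ a ∈ Finset.univ.filter
          (fun a : Fin n → Bool => α j ≤ N1 a ∧ N1 a < α (j+1)), g j a)
        = ∑ a : Fin n → Bool, g (f a) a := by
    intro g
    calc (∑ j ∈ Finset.Icc 1 B, ∑ a ∈ Finset.univ.filter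
          (fun a : Fin n → Bool => α j ≤ N1 a ∧ N1 a < α (j+1)), g j a)
        = ∑ j ∈ Finset.Icc 1 B, ∑ a : Fin n → Bool,
            if α j ≤ N1 a ∧ N1 a < α (j+1) then g j a else 0 := by
          refine Finset.sum_congr rfl fun j _ => ?_
          rw [Finset.sum_filter]
      _ = ∑ a : Fin n → Bool, ∑ j ∈ Finset.Icc 1 B,
            if α j ≤ N1 a ∧ N1 a < α (j+1) then g j a else 0 := Finset.sum_comm
      _ = ∑ a : Fin n → Bool, g (f a) a := by
          refine Finset.sum_congr rfl fun a _ => ?_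
          rw [Finset.sum_eq_single_of_mem (f a) (Finset.mem_Icc.mpr ⟨(hf a).1, (hf a).2.1⟩)]
          · rw [if_pos ⟨(hf a).2.2.1, (hf a).2.2.2⟩]
          · intro j hj hne
            rw [if_neg]
            rintro ⟨hlo, hhi⟩
            obtain ⟨hj1, hj2⟩ := Finset.mem_Icc.mp hj
            exact hne (funiq j a hj1 hj2 hlo hhi)
  have claimA : ∀ a : Fin n → Bool, α (f a) ≤ Stmt5Aux.onesL a (T.path a) ∧
      n + 1 ≤ α (f a + 1) + Stmt5Aux.onesL (fun i => !a i) (T.path a) := by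
    intro a
    obtain ⟨hnd, -⟩ := Stmt5Aux.path_nodup T ∅ hTp a
    have hlen : (T.path a).length ≤ n := by simpa using hnd.length_le_card
    set P := T.path a with hP
    set a0 : Fin n → Bool := fun i => if i ∈ P then a i else false with ha0
    have hag0 : ∀ i ∈ P, a0 i = a i := fun i hi => by rw [ha0]; simp [hi]
    obtain ⟨hpath0, heval0⟩ := Stmt5Aux.path_eval_agree T a a0 hag0
    have hN0 : N1 a0 = Stmt5Aux.onesL a P := by
      unfold N1 Stmt5Aux.onesL
      rw [← List.toFinset_card_of_nodup (hnd.filter _), List.toFinset_filter]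
      congr 1
      ext i
      by_cases hi : i ∈ P <;> simp [ha0, hi]
    have hfa0 : f a0 = f a := by rw [← hTe a0, ← hTe a, heval0]
    set a1 : Fin n → Bool := fun i => if i ∈ P then a i else true with ha1
    have hag1 : ∀ i ∈ P, a1 i = a i := fun i hi => by rw [ha1]; simp [hi]
    obtain ⟨hpath1, heval1⟩ := Stmt5Aux.path_eval_agree T a a1 hag1
    have hfa1 : f a1 = f a := by rw [← hTe a1, ← hTe a, heval1]
    have hsetsplit : Finset.univ.filter (fun i => a1 i = true)
        = P.toFinset.filter (fun x => a x = true) ∪ P.toFinsetᶜ := by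
      ext i
      by_cases hi : i ∈ P <;> simp [ha1, hi]
    have hdisj : Disjoint (P.toFinset.filter (fun x => a x = true)) P.toFinsetᶜ := by
      rw [Finset.disjoint_left]
      intro x hx hx2
      exact (Finset.mem_compl.mp hx2) (Finset.mem_filter.mp hx).1
    have hcnt : (P.toFinset.filter (fun x => a x = true)).card = Stmt5Aux.onesL a P :=
      Stmt5Aux.onesL_eq_onesS hnd a
    have hN1c : N1 a1 = Stmt5Aux.onesL a P + (n - P.length) := by
      unfold N1
      rw [hsetsplit, Finset.card_union_of_disjoint hdisj, Finset.card_compl,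
        List.toFinset_card_of_nodup hnd, Fintype.card_fin, hcnt]
    have hones_add := Stmt5Aux.onesL_add_not a P
    have hfh := (hf a1).2.2.2
    rw [hfa1, hN1c] at hfh
    constructor
    · have h := (hf a0).2.2.1
      rw [hfa0, hN0] at h
      exact h
    · omega
  have hcost : ∀ a : Fin n → Bool, T.cost c a = ((T.path a).length : ℝ) :=
    Stmt5Aux.cost_eq_length c hc T
  constructor
  · -- ones side
    have hL1n : (List.ofFn (fun t => σ1 t)).Nodup := by
      rw [List.nodup_ofFn]
      exact σ1.injective
    have hL1m : ∀ i : Fin n, i ∈ List.ofFn (fun t => σ1 t) := by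
      intro i
      rw [List.mem_ofFn]
      exact ⟨σ1.symm i, σ1.apply_symm_apply i⟩
    have hL1p : (List.ofFn (fun t => σ1 t)).Pairwise (fun x y => p y ≤ p x) := by
      rw [List.pairwise_ofFn]
      intro s t hst
      exact hσ1 s t hst.le
    have hblock := block_sum
      (fun j a => (stopCount a (α j) (List.ofFn (fun t => σ1 t)) : ℝ) * pr p a)
    have hC1 : ∑ j ∈ Finset.Icc 1 B, C1 p (α j) (α (j+1)) σ1
        = ∑ a : Fin n → Bool,
            (stopCount a (α (f a)) (List.ofFn (fun t => σ1 t)) : ℝ) * pr p a := by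
      rw [← hblock]
      rfl
    rw [hC1]
    have hmain := Stmt5Aux.main hp hL1n hL1m hL1p (Θ := fun a => α (f a))
      (fun a a' h => congrArg α (f_eq a a' h))
      (fun a => (hf a).2.2.1) T hTp (fun a => (claimA a).1)
    refine hmain.trans (le_of_eq ?_)
    exact Finset.sum_congr rfl fun a _ => by rw [hcost a]
  · -- zeros side
    set p' : Fin n → ℝ := fun i => 1 - p i with hp'def
    have hp' : ∀ i, 0 < p' i ∧ p' i < 1 := by
      intro i
      constructor
      · simp only [hp'def]
        linarith [(hp i).2]
      · simp only [hp'def]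
        linarith [(hp i).1]
    have hL0n : (List.ofFn (fun t => σ0 t)).Nodup := by
      rw [List.nodup_ofFn]
      exact σ0.injective
    have hL0m : ∀ i : Fin n, i ∈ List.ofFn (fun t => σ0 t) := by
      intro i
      rw [List.mem_ofFn]
      exact ⟨σ0.symm i, σ0.apply_symm_apply i⟩
    have hL0p : (List.ofFn (fun t => σ0 t)).Pairwise (fun x y => p' y ≤ p' x) := by
      rw [List.pairwise_ofFn]
      intro s t hst
      have := hσ0 s t hst.le
      simp only [hp'def]
      linarith
    set Θ0 : (Fin n → Bool) → ℕ := fun b => n + 1 - α (f (fun i => !b i) + 1) with hΘ0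
    have hΘ0det : ∀ b b', N1 b = N1 b' → Θ0 b = Θ0 b' := by
      intro b b' h
      have hnn : N1 (fun i => !b i) = N1 (fun i => !b' i) := by
        rw [Stmt5Aux.N1_not, Stmt5Aux.N1_not, h]
      simp only [hΘ0]
      rw [f_eq _ _ hnn]
    have hΘ0N : ∀ b, Θ0 b ≤ N1 b := by
      intro b
      have h1 := (hf (fun i => !b i)).2.2.2
      have h2 : N1 (fun i => !b i) = n - N1 b := Stmt5Aux.N1_not b
      have h3 : N1 b ≤ n := Stmt5Aux.N1_le b
      simp only [hΘ0]
      omega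
    have hflipP : (Stmt5Aux.flipT T).Proper ∅ := Stmt5Aux.flipT_proper T ∅ hTp
    have hUT0 : ∀ b : Fin n → Bool, Θ0 b ≤ Stmt5Aux.onesL b ((Stmt5Aux.flipT T).path b) := by
      intro b
      rw [Stmt5Aux.flipT_path]
      have h2 := (claimA (fun i => !b i)).2
      simp only [Bool.not_not] at h2
      have h2' : n + 1 ≤ α (f (fun i => !b i) + 1)
          + Stmt5Aux.onesL b (T.path fun i => !b i) := h2
      simp only [hΘ0]
      omega
    have hblock := block_sum
      (fun j a => (stopCount (fun i => !a i) (n + 1 - α (j+1)) (List.ofFn (fun t => σ0 t)) : ℝ) * pr p a)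
    have hC0 : ∑ j ∈ Finset.Icc 1 B, C0 p (α j) (α (j+1)) σ0
        = ∑ a : Fin n → Bool,
            (stopCount (fun i => !a i) (n + 1 - α (f a + 1)) (List.ofFn (fun t => σ0 t)) : ℝ) * pr p a := by
      rw [← hblock]
      rfl
    rw [hC0]
    have hreindex : ∑ a : Fin n → Bool,
          (stopCount (fun i => !a i) (n + 1 - α (f a + 1)) (List.ofFn (fun t => σ0 t)) : ℝ) * pr p a
        = ∑ b : Fin n → Bool,
            (stopCount b (Θ0 b) (List.ofFn (fun t => σ0 t)) : ℝ) * pr p' b := by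
      refine (Fintype.sum_equiv Stmt5Aux.notE _ _ ?_).symm
      intro b
      have h1 : Stmt5Aux.notE b = fun i => !b i := rfl
      have h2 : (fun i => !(Stmt5Aux.notE b) i) = b := by
        funext i
        simp [Stmt5Aux.notE]
      simp only [h1, hΘ0]
      rw [show (fun i => !(!b i)) = b from funext fun i => Bool.not_not _]
      rw [show pr p (fun i => !b i) = pr p' b from Stmt5Aux.pr_not p b]
    rw [hreindex]
    have hRHS : ∑ a : Fin n → Bool, T.cost c a * pr p a
        = ∑ b : Fin n → Bool, (((Stmt5Aux.flipT T).path b).length : ℝ) * pr p' b := by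
      refine (Fintype.sum_equiv Stmt5Aux.notE _ _ ?_).symm
      intro b
      rw [Stmt5Aux.flipT_path, hcost]
      have h1 : Stmt5Aux.notE b = fun i => !b i := rfl
      simp only [h1]
      rw [show pr p (fun i => !b i) = pr p' b from Stmt5Aux.pr_not p b]
    rw [hRHS]
    exact Stmt5Aux.main hp' hL0n hL0m hL0p hΘ0det hΘ0N (Stmt5Aux.flipT T) hflipP hUT0
end

section
/- Assume unit costs. The expected nonadaptive cost of the round-robin permutation τ_RR for evaluating the score classification function f is at most 4·OPT(f), the minimum expected cost over all (adaptive) decision trees evaluating f. -/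
open Finset

/-- Expected-cost-minimizing value over all decision trees evaluating `h`. -/
noncomputable def OPTcost {n : ℕ} (p c : Fin n → ℝ) (h : (Fin n → Bool) → ℕ) : ℝ :=
  sInf {x : ℝ | ∃ T : DTree n, T.Proper ∅ ∧ (∀ a, T.eval a = h a) ∧
    x = ∑ a : Fin n → Bool, T.cost c a * pr p a}

/-- Nonadaptive cost of querying in the order given by the list `l` on assignment `a`:
the total cost of the shortest prefix of `l` whose outcomes determine the value `h a`. -/
noncomputable def naCost {n : ℕ} (c : Fin n → ℝ) (h : (Fin n → Bool) → ℕ)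
    (a : Fin n → Bool) (l : List (Fin n)) : ℝ :=
  ((l.take (sInf {k | ∀ b : Fin n → Bool,
      (∀ i ∈ l.take k, b i = a i) → h b = h a})).map c).sum

/-- Expected nonadaptive cost of the query order `l` for evaluating `h`. -/
noncomputable def naExpCost {n : ℕ} (p c : Fin n → ℝ) (h : (Fin n → Bool) → ℕ)
    (l : List (Fin n)) : ℝ :=
  ∑ a : Fin n → Bool, naCost c h a l * pr p a

/-- Round-robin merge: alternately take the next not-yet-chosen element of the first
list and of the second list, starting with the first. -/
def rrMerge {α : Type*} [DecidableEq α] : List α → List α → List α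
  | [], l2 => l2
  | a :: l1, l2 => a :: rrMerge (l2.filter (fun x => x ≠ a)) l1
  termination_by l1 l2 => l1.length + l2.length
  decreasing_by
    have := List.length_filter_le (fun x => decide (x ≠ a)) l2
    simp only [List.length_cons]
    first
      | omega
      | (simp only [List.length_unattach]
         have h2 : ∀ P : {x // x ∈ l2} → Bool, (l2.attach.filter P).length ≤ l2.length :=
           fun P => (List.length_filter_le P _).trans (by simp)
         generalize hP : List.filter _ l2.attach = L
         have h3 := hP ▸ h2 _
         omega)


-- infrastructure part 1
section Dev
open Finset
variable {n : ℕ}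

/-- weight of value `b` at coordinate `i`. -/
noncomputable def wt (p : Fin n → ℝ) (i : Fin n) (b : Bool) : ℝ := if b then p i else 1 - p i

lemma pr_eq_prod_wt (p : Fin n → ℝ) (a : Fin n → Bool) :
    pr p a = ∏ i, wt p i (a i) := rfl

lemma wt_nonneg {p : Fin n → ℝ} (hp : ∀ i, 0 < p i ∧ p i < 1) (i : Fin n) (b : Bool) :
    0 ≤ wt p i b := by
  rcases (hp i) with ⟨h1, h2⟩
  cases b <;> simp [wt] <;> linarith

lemma pr_nonneg {p : Fin n → ℝ} (hp : ∀ i, 0 < p i ∧ p i < 1) (a : Fin n → Bool) :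
    0 ≤ pr p a := by
  rw [pr_eq_prod_wt]
  exact Finset.prod_nonneg fun i _ => wt_nonneg hp i (a i)

/-- product of weights over all coordinates except `i`. -/
noncomputable def prX (p : Fin n → ℝ) (i : Fin n) (a : Fin n → Bool) : ℝ :=
  ∏ j ∈ Finset.univ.erase i, wt p j (a j)

lemma pr_eq_wt_mul_prX (p : Fin n → ℝ) (i : Fin n) (a : Fin n → Bool) :
    pr p a = wt p i (a i) * prX p i a := by
  rw [pr_eq_prod_wt, prX,
    ← Finset.mul_prod_erase Finset.univ (fun j => wt p j (a j)) (Finset.mem_univ i)]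

lemma prX_update (p : Fin n → ℝ) (i : Fin n) (a : Fin n → Bool) (v : Bool) :
    prX p i (Function.update a i v) = prX p i a := by
  unfold prX
  refine Finset.prod_congr rfl fun j hj => ?_
  rw [Function.update_of_ne (Finset.ne_of_mem_erase hj)]

/-- flipping coordinate `i` is an involutive equivalence on assignments -/
def flipAt (i : Fin n) : (Fin n → Bool) ≃ (Fin n → Bool) where
  toFun a := Function.update a i (!(a i))
  invFun a := Function.update a i (!(a i))
  left_inv a := by
    funext j
    by_cases h : j = i
    · subst h; simp
    · simp [Function.update_of_ne h]
  right_inv a := by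
    funext j
    by_cases h : j = i
    · subst h; simp
    · simp [Function.update_of_ne h]

lemma half_eq (p : Fin n → ℝ) (i : Fin n) (K : (Fin n → Bool) → ℝ)
    (hK : ∀ a v, K (Function.update a i v) = K a) :
    ∑ a : Fin n → Bool, (if a i then K a * prX p i a else 0)
      = ∑ a : Fin n → Bool, (if a i then 0 else K a * prX p i a) := by
  rw [← Equiv.sum_comp (flipAt i) (fun a => if a i then (0:ℝ) else K a * prX p i a)]
  refine Finset.sum_congr rfl fun a _ => ?_
  have h1 : (flipAt i) a i = !(a i) := by simp [flipAt]
  have h2 : K ((flipAt i) a) = K a := hK a _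
  have h3 : prX p i ((flipAt i) a) = prX p i a := prX_update p i a _
  rw [h1, h2, h3]
  cases h : a i <;> simp [h]

lemma sum_pr_eq_half (p : Fin n → ℝ) (i : Fin n) (K : (Fin n → Bool) → ℝ)
    (hK : ∀ a v, K (Function.update a i v) = K a) :
    ∑ a : Fin n → Bool, K a * pr p a
      = ∑ a : Fin n → Bool, (if a i then K a * prX p i a else 0) := by
  have expand : ∀ a : Fin n → Bool, K a * pr p a
      = p i * (if a i then K a * prX p i a else 0)
        + (1 - p i) * (if a i then 0 else K a * prX p i a) := by
    intro a
    rw [pr_eq_wt_mul_prX p i a]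
    cases h : a i <;> simp [wt, h] <;> ring
  rw [Finset.sum_congr rfl fun a _ => expand a, Finset.sum_add_distrib,
    ← Finset.mul_sum, ← Finset.mul_sum, ← half_eq p i K hK]
  ring

/-- Conditioning on coordinate `i`. -/
lemma cond_split (p : Fin n → ℝ) (i : Fin n) (F1 F0 : (Fin n → Bool) → ℝ)
    (h1 : ∀ a v, F1 (Function.update a i v) = F1 a)
    (h0 : ∀ a v, F0 (Function.update a i v) = F0 a) :
    ∑ a : Fin n → Bool, (if a i then F1 a else F0 a) * pr p a
      = p i * ∑ a : Fin n → Bool, F1 a * pr p a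
        + (1 - p i) * ∑ a : Fin n → Bool, F0 a * pr p a := by
  rw [sum_pr_eq_half p i F1 h1, sum_pr_eq_half p i F0 h0]
  have h0' : ∑ a : Fin n → Bool, (if a i then F0 a * prX p i a else 0)
      = ∑ a : Fin n → Bool, (if a i then 0 else F0 a * prX p i a) := half_eq p i F0 h0
  rw [h0']
  have expand : ∀ a : Fin n → Bool, (if a i then F1 a else F0 a) * pr p a
      = p i * (if a i then F1 a * prX p i a else 0)
        + (1 - p i) * (if a i then 0 else F0 a * prX p i a) := by
    intro a
    rw [pr_eq_wt_mul_prX p i a]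
    cases h : a i <;> simp [wt, h] <;> ring
  rw [Finset.sum_congr rfl fun a _ => expand a, Finset.sum_add_distrib,
    ← Finset.mul_sum, ← Finset.mul_sum]

end Dev

-- part 2 : counting and the swap lemma
section Dev2
variable {n : ℕ}

/-- number of indices in `l` where `a` takes value `bb`. -/
def cnt (bb : Bool) (a : Fin n → Bool) (l : List (Fin n)) : ℕ :=
  l.countP (fun j => a j == bb)

lemma cnt_nil (bb : Bool) (a : Fin n → Bool) : cnt bb a ([] : List (Fin n)) = 0 := rfl

lemma cnt_cons (bb : Bool) (a : Fin n → Bool) (i : Fin n) (l : List (Fin n)) :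
    cnt bb a (i :: l) = cnt bb a l + (if a i = bb then 1 else 0) := by
  simp [cnt, List.countP_cons]

lemma cnt_congr {bb : Bool} {a b : Fin n → Bool} {l : List (Fin n)}
    (h : ∀ j ∈ l, a j = b j) : cnt bb a l = cnt bb b l := by
  unfold cnt
  apply List.countP_congr
  intro j hj
  simp [h j hj]

lemma cnt_perm (bb : Bool) (a : Fin n → Bool) {l l' : List (Fin n)} (h : l.Perm l') :
    cnt bb a l = cnt bb a l' := h.countP_eq _

lemma cnt_update {bb : Bool} {a : Fin n → Bool} {l : List (Fin n)} {i : Fin n}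
    (hi : i ∉ l) (v : Bool) : cnt bb (Function.update a i v) l = cnt bb a l := by
  apply cnt_congr
  intro j hj
  have hji : j ≠ i := by rintro rfl; exact hi hj
  exact Function.update_of_ne hji v a

lemma cnt_le_take (bb : Bool) (a : Fin n → Bool) (l : List (Fin n)) {r r' : ℕ} (h : r ≤ r') :
    cnt bb a (l.take r) ≤ cnt bb a (l.take r') := by
  have : l.take r = (l.take r').take r := by rw [List.take_take, min_eq_left h]
  rw [this]
  exact List.Sublist.countP_le (List.take_sublist _ _)

lemma cnt_le_of_subset {bb : Bool} {a : Fin n → Bool} {P Q : List (Fin n)}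
    (hP : P.Nodup) (hQ : Q.Nodup) (hsub : ∀ x ∈ P, x ∈ Q) : cnt bb a P ≤ cnt bb a Q := by
  unfold cnt
  rw [List.countP_eq_length_filter, List.countP_eq_length_filter]
  have hPn : (P.filter (fun j => a j == bb)).Nodup := hP.filter _
  have hQn : (Q.filter (fun j => a j == bb)).Nodup := hQ.filter _
  rw [← List.toFinset_card_of_nodup hPn, ← List.toFinset_card_of_nodup hQn]
  apply Finset.card_le_card
  intro x hx
  simp only [List.mem_toFinset, List.mem_filter] at hx ⊢
  exact ⟨hsub x hx.1, hx.2⟩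

/-- the indicator of a proposition, as a real number. -/
noncomputable def indic (P : Prop) : ℝ := by classical exact if P then 1 else 0

lemma indic_def (P : Prop) [Decidable P] : indic P = if P then 1 else 0 := by
  unfold indic; congr

lemma indic_nonneg (P : Prop) : 0 ≤ indic P := by
  unfold indic; split <;> norm_num

lemma indic_le_one (P : Prop) : indic P ≤ 1 := by
  unfold indic; split <;> norm_num

lemma indic_le_indic {P Q : Prop} (h : P → Q) : indic P ≤ indic Q := by
  unfold indic
  split
  · rename_i hP
    rw [if_pos (h hP)]
  · split <;> norm_num

lemma indic_congr {P Q : Prop} (h : P ↔ Q) : indic P = indic Q := by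
  unfold indic
  split
  · rename_i hP; rw [if_pos (h.mp hP)]
  · rename_i hP; rw [if_neg (fun q => hP (h.mpr q))]

lemma wt_not (p : Fin n → ℝ) (i : Fin n) (b : Bool) : wt p i (!b) = 1 - wt p i b := by
  cases b <;> simp [wt]

/-- swapping two coordinates is an equivalence on assignments -/
def swapEq (i m : Fin n) : (Fin n → Bool) ≃ (Fin n → Bool) where
  toFun a := a ∘ Equiv.swap i m
  invFun a := a ∘ Equiv.swap i m
  left_inv a := by funext j; simp [Function.comp]
  right_inv a := by funext j; simp [Function.comp]

lemma swap_step (p : Fin n → ℝ) (hp : ∀ i, 0 < p i ∧ p i < 1) (bb : Bool)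
    (L M : List (Fin n)) (g : ℕ → ℤ) (i m : Fin n)
    (him : i ≠ m) (hiM : i ∉ M) (hmM : m ∉ M) (hiL : i ∈ L) (hmL : m ∈ L)
    (hLnd : L.Nodup)
    (hw : wt p i bb ≤ wt p m bb) :
    ∑ a : Fin n → Bool, indic (g (cnt bb a L) ≤ (cnt bb a (i :: M) : ℤ)) * pr p a
      ≤ ∑ a : Fin n → Bool, indic (g (cnt bb a L) ≤ (cnt bb a (m :: M) : ℤ)) * pr p a := by
  classical
  set s : (Fin n → Bool) → (Fin n → Bool) := fun a => a ∘ Equiv.swap i m with hs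
  have hs_i : ∀ a, s a i = a m := fun a => by simp [hs, Function.comp]
  have hs_m : ∀ a, s a m = a i := fun a => by simp [hs, Function.comp]
  have hs_other : ∀ (a : Fin n → Bool) j, j ≠ i → j ≠ m → s a j = a j := fun a j h1 h2 => by
    simp [hs, Function.comp, Equiv.swap_apply_of_ne_of_ne h1 h2]
  have hss : ∀ a, s (s a) = a := by
    intro a; funext j; simp [hs, Function.comp]
  -- cnt over M is invariant under s
  have hcM : ∀ a, cnt bb (s a) M = cnt bb a M := by
    intro a
    apply cnt_congr
    intro j hj
    exact hs_other a j (fun h => hiM (h ▸ hj)) (fun h => hmM (h ▸ hj))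
  -- cnt over L is invariant under s
  have hmL' : m ∈ L.erase i := (List.mem_erase_of_ne (Ne.symm him)).mpr hmL
  have hcL : ∀ a, cnt bb (s a) L = cnt bb a L := by
    intro a
    have hperm : L.Perm (i :: m :: ((L.erase i).erase m)) :=
      (List.perm_cons_erase hiL).trans (List.Perm.cons i (List.perm_cons_erase hmL'))
    rw [cnt_perm bb (s a) hperm, cnt_perm bb a hperm]
    rw [cnt_cons, cnt_cons, cnt_cons, cnt_cons, hs_i, hs_m]
    have hL2 : cnt bb (s a) ((L.erase i).erase m) = cnt bb a ((L.erase i).erase m) := by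
      apply cnt_congr
      intro j hj
      have hj1 : j ∈ L.erase i := List.mem_of_mem_erase hj
      have hji : j ≠ i := fun h => (hLnd.not_mem_erase) (h ▸ hj1)
      have hjm : j ≠ m := fun h => ((hLnd.erase i).not_mem_erase) (h ▸ hj)
      exact hs_other a j hji hjm
    rw [hL2]
    omega
  have hcim : ∀ a, cnt bb (s a) (i :: M) = cnt bb a (m :: M) := by
    intro a
    rw [cnt_cons, cnt_cons, hcM, hs_i]
  have hcmi : ∀ a, cnt bb (s a) (m :: M) = cnt bb a (i :: M) := by
    intro a
    rw [cnt_cons, cnt_cons, hcM, hs_m]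
  -- factorization of pr
  have hmi : m ∈ Finset.univ.erase i :=
    Finset.mem_erase.mpr ⟨Ne.symm him, Finset.mem_univ m⟩
  set rest : (Fin n → Bool) → ℝ :=
    fun a => ∏ j ∈ (Finset.univ.erase i).erase m, wt p j (a j) with hrst
  have hrest_nonneg : ∀ a, 0 ≤ rest a :=
    fun a => Finset.prod_nonneg fun j _ => wt_nonneg hp j (a j)
  have hfac : ∀ a : Fin n → Bool, pr p a = wt p i (a i) * (wt p m (a m) * rest a) := by
    intro a
    rw [pr_eq_prod_wt,
      ← Finset.mul_prod_erase Finset.univ (fun j => wt p j (a j)) (Finset.mem_univ i),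
      ← Finset.mul_prod_erase (Finset.univ.erase i) (fun j => wt p j (a j)) hmi]
  have hrest_s : ∀ a, rest (s a) = rest a := by
    intro a
    refine Finset.prod_congr rfl fun j hj => ?_
    have hji : j ≠ i := Finset.ne_of_mem_erase (Finset.mem_of_mem_erase hj)
    have hjm : j ≠ m := Finset.ne_of_mem_erase hj
    rw [hs_other a j hji hjm]
  have hpr_s : ∀ a, pr p (s a) = wt p i (a m) * (wt p m (a i) * rest a) := by
    intro a
    rw [hfac (s a), hs_i, hs_m, hrest_s]
  -- pointwise inequality
  have hpoint : ∀ a : Fin n → Bool,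
      0 ≤ (indic (g (cnt bb a L) ≤ (cnt bb a (m :: M) : ℤ))
            - indic (g (cnt bb a L) ≤ (cnt bb a (i :: M) : ℤ)))
          * (pr p a - pr p (s a)) := by
    intro a
    rcases Bool.eq_or_eq_not (a i) (a m) with heq | hne
    · have hz : pr p a - pr p (s a) = 0 := by
        rw [hfac a, hpr_s a, heq]; ring
      rw [hz, mul_zero]
    · have hxm : a m = !(a i) := by rw [hne, Bool.not_not]
      have hdiffpr : pr p a - pr p (s a) = (wt p i (a i) - wt p m (a i)) * rest a := by
        rw [hfac a, hpr_s a, hxm, wt_not p i (a i), wt_not p m (a i)]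
        ring
      have hcntM_i : cnt bb a (i :: M) = cnt bb a M + (if a i = bb then 1 else 0) :=
        cnt_cons bb a i M
      have hcntM_m : cnt bb a (m :: M) = cnt bb a M + (if a m = bb then 1 else 0) :=
        cnt_cons bb a m M
      rcases Bool.eq_or_eq_not (a i) bb with hx | hx
      · -- a i = bb, a m = !bb
        have hmbb : a m ≠ bb := by rw [hxm, hx]; exact Bool.not_ne_self bb
        have hf1 : indic (g (cnt bb a L) ≤ (cnt bb a (m :: M) : ℤ))
            - indic (g (cnt bb a L) ≤ (cnt bb a (i :: M) : ℤ)) ≤ 0 := by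
          have := indic_le_indic (P := g (cnt bb a L) ≤ (cnt bb a (m :: M) : ℤ))
            (Q := g (cnt bb a L) ≤ (cnt bb a (i :: M) : ℤ)) (by
              intro h
              refine le_trans h ?_
              rw [hcntM_i, hcntM_m, if_pos hx, if_neg hmbb]
              push_cast; omega)
          linarith
        have hf2 : pr p a - pr p (s a) ≤ 0 := by
          rw [hdiffpr, hx]
          have : wt p i bb - wt p m bb ≤ 0 := by linarith
          exact mul_nonpos_of_nonpos_of_nonneg this (hrest_nonneg a)
        nlinarith [hf1, hf2]
      · -- a i = !bb, a m = bb
        have hmbb : a m = bb := by rw [hxm, hx, Bool.not_not]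
        have hibb : a i ≠ bb := by rw [hx]; exact Bool.not_ne_self bb
        have hf1 : 0 ≤ indic (g (cnt bb a L) ≤ (cnt bb a (m :: M) : ℤ))
            - indic (g (cnt bb a L) ≤ (cnt bb a (i :: M) : ℤ)) := by
          have := indic_le_indic (P := g (cnt bb a L) ≤ (cnt bb a (i :: M) : ℤ))
            (Q := g (cnt bb a L) ≤ (cnt bb a (m :: M) : ℤ)) (by
              intro h
              refine le_trans h ?_
              rw [hcntM_i, hcntM_m, if_pos hmbb, if_neg hibb]
              push_cast; omega)
          linarith
        have hf2 : 0 ≤ pr p a - pr p (s a) := by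
          rw [hdiffpr, hx, wt_not p i bb, wt_not p m bb]
          have : 0 ≤ (1 - wt p i bb) - (1 - wt p m bb) := by linarith
          exact mul_nonneg this (hrest_nonneg a)
        exact mul_nonneg hf1 hf2
  -- sum manipulations via the equivalence
  have hIis : ∀ a : Fin n → Bool,
      indic (g (cnt bb (s a) L) ≤ (cnt bb (s a) (i :: M) : ℤ))
        = indic (g (cnt bb a L) ≤ (cnt bb a (m :: M) : ℤ)) := by
    intro a; exact indic_congr (by rw [hcim, hcL])
  have hIms : ∀ a : Fin n → Bool,
      indic (g (cnt bb (s a) L) ≤ (cnt bb (s a) (m :: M) : ℤ))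
        = indic (g (cnt bb a L) ≤ (cnt bb a (i :: M) : ℤ)) := by
    intro a; exact indic_congr (by rw [hcmi, hcL])
  have hswap_pt : ∀ a : Fin n → Bool, (swapEq i m) a = s a := fun a => rfl
  have hsum1 : ∑ a : Fin n → Bool,
        indic (g (cnt bb a L) ≤ (cnt bb a (i :: M) : ℤ)) * pr p a
      = ∑ a : Fin n → Bool,
        indic (g (cnt bb a L) ≤ (cnt bb a (m :: M) : ℤ)) * pr p (s a) := by
    rw [← Equiv.sum_comp (swapEq i m)
      (fun a => indic (g (cnt bb a L) ≤ (cnt bb a (i :: M) : ℤ)) * pr p a)]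
    refine Finset.sum_congr rfl fun a _ => ?_
    simp only [hswap_pt]
    rw [hIis]
  have hsum2 : ∑ a : Fin n → Bool,
        indic (g (cnt bb a L) ≤ (cnt bb a (i :: M) : ℤ)) * pr p (s a)
      = ∑ a : Fin n → Bool,
        indic (g (cnt bb a L) ≤ (cnt bb a (m :: M) : ℤ)) * pr p a := by
    rw [← Equiv.sum_comp (swapEq i m)
      (fun a => indic (g (cnt bb a L) ≤ (cnt bb a (i :: M) : ℤ)) * pr p (s a))]
    refine Finset.sum_congr rfl fun a _ => ?_
    simp only [hswap_pt]
    rw [hIis, hss]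
  have hdiff : 0 ≤ ∑ a : Fin n → Bool,
      (indic (g (cnt bb a L) ≤ (cnt bb a (m :: M) : ℤ))
        - indic (g (cnt bb a L) ≤ (cnt bb a (i :: M) : ℤ))) * (pr p a - pr p (s a)) :=
    Finset.sum_nonneg fun a _ => hpoint a
  have hexpand : ∑ a : Fin n → Bool,
      (indic (g (cnt bb a L) ≤ (cnt bb a (m :: M) : ℤ))
        - indic (g (cnt bb a L) ≤ (cnt bb a (i :: M) : ℤ))) * (pr p a - pr p (s a))
      = (∑ a : Fin n → Bool, indic (g (cnt bb a L) ≤ (cnt bb a (m :: M) : ℤ)) * pr p a)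
        - (∑ a : Fin n → Bool, indic (g (cnt bb a L) ≤ (cnt bb a (m :: M) : ℤ)) * pr p (s a))
        - (∑ a : Fin n → Bool, indic (g (cnt bb a L) ≤ (cnt bb a (i :: M) : ℤ)) * pr p a)
        + (∑ a : Fin n → Bool, indic (g (cnt bb a L) ≤ (cnt bb a (i :: M) : ℤ)) * pr p (s a)) := by
    rw [← Finset.sum_sub_distrib, ← Finset.sum_sub_distrib, ← Finset.sum_add_distrib]
    refine Finset.sum_congr rfl fun a _ => ?_
    ring
  rw [hexpand, ← hsum1, hsum2] at hdiff
  linarith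

end Dev2

-- part 3 : tree predicates and the key adaptive-vs-sorted lemma
section Dev3
variable {n : ℕ}

/-- The tree only queries indices in `L`, without repetition along paths. -/
def GoodT : DTree n → List (Fin n) → Prop
  | .leaf _, _ => True
  | .node i t0 t1, L => i ∈ L ∧ GoodT t0 (L.erase i) ∧ GoodT t1 (L.erase i)

lemma goodT_of_proper : ∀ (T : DTree n) (u : Finset (Fin n)) (L : List (Fin n)),
    T.Proper u → L.Nodup → (∀ j, j ∈ L ↔ j ∉ u) → GoodT T L := by
  intro T
  induction T with
  | leaf v => intro u L _ _ _; trivial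
  | node i t0 t1 ih0 ih1 =>
    intro u L hprop hnd hmem
    obtain ⟨hiu, h0, h1⟩ := hprop
    have hiL : i ∈ L := (hmem i).mpr hiu
    have hmem' : ∀ j, j ∈ L.erase i ↔ j ∉ insert i u := by
      intro j
      rw [hnd.mem_erase_iff, Finset.mem_insert, hmem j]
      tauto
    exact ⟨hiL, ih0 _ _ h0 (hnd.erase i) hmem', ih1 _ _ h1 (hnd.erase i) hmem'⟩

lemma path_subset : ∀ (T : DTree n) (L : List (Fin n)), GoodT T L →
    ∀ (a : Fin n → Bool), ∀ j ∈ T.path a, j ∈ L := by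
  intro T
  induction T with
  | leaf v => intro L _ a j hj; simp [DTree.path] at hj
  | node i t0 t1 ih0 ih1 =>
    intro L hg a j hj
    obtain ⟨hiL, h0, h1⟩ := hg
    rw [DTree.path] at hj
    rcases List.mem_cons.mp hj with rfl | hj'
    · exact hiL
    · by_cases hai : a i
      · rw [if_pos hai] at hj'
        exact List.mem_of_mem_erase (ih1 _ h1 a j hj')
      · rw [if_neg hai] at hj'
        exact List.mem_of_mem_erase (ih0 _ h0 a j hj')

lemma path_nodup : ∀ (T : DTree n) (L : List (Fin n)), GoodT T L → L.Nodup →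
    ∀ (a : Fin n → Bool), (T.path a).Nodup := by
  intro T
  induction T with
  | leaf v => intro L _ _ a; simp [DTree.path]
  | node i t0 t1 ih0 ih1 =>
    intro L hg hnd a
    obtain ⟨hiL, h0, h1⟩ := hg
    rw [DTree.path]
    by_cases hai : a i
    · rw [if_pos hai]
      refine List.nodup_cons.mpr ⟨?_, ih1 _ h1 (hnd.erase i) a⟩
      intro hmem
      exact hnd.not_mem_erase (path_subset t1 _ h1 a i hmem)
    · rw [if_neg hai]
      refine List.nodup_cons.mpr ⟨?_, ih0 _ h0 (hnd.erase i) a⟩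
      intro hmem
      exact hnd.not_mem_erase (path_subset t0 _ h0 a i hmem)

lemma path_length_le : ∀ (T : DTree n) (L : List (Fin n)), GoodT T L →
    ∀ (a : Fin n → Bool), (T.path a).length ≤ L.length := by
  intro T
  induction T with
  | leaf v => intro L _ a; simp [DTree.path]
  | node i t0 t1 ih0 ih1 =>
    intro L hg a
    obtain ⟨hiL, h0, h1⟩ := hg
    have hlenL : (L.erase i).length = L.length - 1 := List.length_erase_of_mem hiL
    have hLpos : 1 ≤ L.length := List.length_pos_iff.mpr (List.ne_nil_of_mem hiL)
    rw [DTree.path]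
    by_cases hai : a i
    · rw [if_pos hai]
      have := ih1 _ h1 a
      simp only [List.length_cons]
      omega
    · rw [if_neg hai]
      have := ih0 _ h0 a
      simp only [List.length_cons]
      omega

lemma path_update : ∀ (T : DTree n) (L : List (Fin n)), GoodT T L →
    ∀ (i : Fin n), i ∉ L → ∀ (a : Fin n → Bool) (v : Bool),
      T.path (Function.update a i v) = T.path a := by
  intro T
  induction T with
  | leaf w => intro L _ i _ a v; rfl
  | node j t0 t1 ih0 ih1 =>
    intro L hg i hiL a v
    obtain ⟨hjL, h0, h1⟩ := hg
    have hji : j ≠ i := fun h => hiL (h ▸ hjL)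
    have hval : Function.update a i v j = a j := Function.update_of_ne hji v a
    have hiL' : i ∉ L.erase j := fun h => hiL (List.mem_of_mem_erase h)
    rw [DTree.path, DTree.path, hval]
    by_cases hai : a j
    · rw [if_pos hai, if_pos hai, ih1 _ h1 i hiL' a v]
    · rw [if_neg hai, if_neg hai, ih0 _ h0 i hiL' a v]

lemma agree_eval : ∀ (T : DTree n) (a b : Fin n → Bool),
    (∀ j ∈ T.path a, b j = a j) → T.eval b = T.eval a := by
  intro T
  induction T with
  | leaf v => intro a b _; rfl
  | node i t0 t1 ih0 ih1 =>
    intro a b h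
    have hi : b i = a i := h i (by rw [DTree.path]; exact List.mem_cons_self)
    rw [DTree.eval, DTree.eval, hi]
    by_cases hai : a i
    · rw [if_pos hai, if_pos hai]
      refine ih1 a b fun j hj => h j ?_
      rw [DTree.path, if_pos hai]
      exact List.mem_cons_of_mem i hj
    · rw [if_neg hai, if_neg hai]
      refine ih0 a b fun j hj => h j ?_
      rw [DTree.path, if_neg hai]
      exact List.mem_cons_of_mem i hj

lemma cost_eq_length (c : Fin n → ℝ) (hc : ∀ i, c i = 1) :
    ∀ (T : DTree n) (a : Fin n → Bool), T.cost c a = ((T.path a).length : ℝ) := by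
  intro T
  induction T with
  | leaf v => intro a; simp [DTree.cost, DTree.path]
  | node i t0 t1 ih0 ih1 =>
    intro a
    rw [DTree.cost, DTree.path, hc i]
    by_cases hai : a i
    · rw [if_pos hai, if_pos hai, ih1]
      simp only [List.length_cons]
      push_cast
      ring
    · rw [if_neg hai, if_neg hai, ih0]
      simp only [List.length_cons]
      push_cast
      ring

/-- erasing inside a prefix commutes with take -/
lemma erase_take_of_mem {α : Type*} [DecidableEq α] :
    ∀ (l : List α) (s : ℕ) (i : α), i ∈ l.take (s+1) →
      (l.erase i).take s = (l.take (s+1)).erase i := by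
  intro l
  induction l with
  | nil => intro s i h; simp at h
  | cons x xs ih =>
    intro s i h
    by_cases hx : x = i
    · subst hx
      rw [List.erase_cons_head, List.take_succ_cons, List.erase_cons_head]
    · have hbe : ¬(x == i) = true := by simp [hx]
      rw [List.take_succ_cons] at h
      rcases List.mem_cons.mp h with rfl | h'
      · exact absurd rfl hx
      · cases s with
        | zero => simp at h'
        | succ s' =>
          rw [List.erase_cons_tail hbe, List.take_succ_cons, List.take_succ_cons,
            List.erase_cons_tail hbe, ih s' i h']

/-- prefix of erase equals prefix when the erased element is past it -/
lemma erase_take_of_not_mem {α : Type*} [DecidableEq α] (l : List α) (s : ℕ) (i : α)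
    (hs : s ≤ l.length) (h : i ∉ l.take s) :
    (l.erase i).take s = l.take s := by
  conv_lhs => rw [← List.take_append_drop s l]
  rw [List.erase_append_right _ h]
  exact List.take_left' (by rw [List.length_take]; omega)

end Dev3

-- part 4 : the key lemma: sorted nonadaptive prefix beats any adaptive tree prefix
section Dev4
variable {n : ℕ}

lemma keyG (p : Fin n → ℝ) (hp : ∀ i, 0 < p i ∧ p i < 1) (bb : Bool) :
    ∀ (T : DTree n) (L : List (Fin n)) (g : ℕ → ℤ) (t : ℕ),
      L.Nodup →
      L.Pairwise (fun i j => wt p j bb ≤ wt p i bb) →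
      GoodT T L →
      ∑ a : Fin n → Bool,
          indic (g (cnt bb a L) ≤ (cnt bb a ((T.path a).take t) : ℤ)) * pr p a
        ≤ ∑ a : Fin n → Bool,
          indic (g (cnt bb a L) ≤ (cnt bb a (L.take t) : ℤ)) * pr p a := by
  intro T
  induction T with
  | leaf v =>
    intro L g t hnd hsort _
    refine Finset.sum_le_sum fun a _ => ?_
    refine mul_le_mul_of_nonneg_right ?_ (pr_nonneg hp a)
    refine indic_le_indic fun h => ?_
    refine le_trans h ?_
    have h0 : cnt bb a ((DTree.path (DTree.leaf v) a).take t) = 0 := by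
      show cnt bb a (([] : List (Fin n)).take t) = 0
      rw [List.take_nil, cnt_nil]
    rw [h0]
    exact_mod_cast Int.natCast_nonneg _
  | node i t0 t1 ih0 ih1 =>
    intro L g t hnd hsort hgood
    obtain ⟨hiL, hg0, hg1⟩ := hgood
    cases t with
    | zero =>
      refine le_of_eq (Finset.sum_congr rfl fun a _ => ?_)
      rw [List.take_zero, List.take_zero]
    | succ s =>
      have hiE : i ∉ L.erase i := hnd.not_mem_erase
      -- branch-conditional integrands
      set e : Bool → ℕ := fun v => if v = bb then 1 else 0 with he
      set F1 : (Fin n → Bool) → ℝ := fun a =>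
        indic (g (cnt bb a (L.erase i) + e true) - (e true : ℤ)
          ≤ (cnt bb a ((t1.path a).take s) : ℤ)) with hF1
      set F0 : (Fin n → Bool) → ℝ := fun a =>
        indic (g (cnt bb a (L.erase i) + e false) - (e false : ℤ)
          ≤ (cnt bb a ((t0.path a).take s) : ℤ)) with hF0
      set G1 : (Fin n → Bool) → ℝ := fun a =>
        indic (g (cnt bb a (L.erase i) + e true) - (e true : ℤ)
          ≤ (cnt bb a ((L.erase i).take s) : ℤ)) with hG1
      set G0 : (Fin n → Bool) → ℝ := fun a =>
        indic (g (cnt bb a (L.erase i) + e false) - (e false : ℤ)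
          ≤ (cnt bb a ((L.erase i).take s) : ℤ)) with hG0
      have hcntL : ∀ a : Fin n → Bool,
          cnt bb a L = cnt bb a (L.erase i) + (if a i = bb then 1 else 0) := by
        intro a
        rw [cnt_perm bb a (List.perm_cons_erase hiL), cnt_cons]
      -- independence of coordinate i
      have hind1 : ∀ (a : Fin n → Bool) (v : Bool), F1 (Function.update a i v) = F1 a := by
        intro a v
        simp only [hF1]
        have hpath : t1.path (Function.update a i v) = t1.path a :=
          path_update t1 (L.erase i) hg1 i hiE a v
        rw [hpath, cnt_update hiE v]
        have hnot : i ∉ (t1.path a).take s := fun hmem =>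
          hiE (path_subset t1 (L.erase i) hg1 a i (List.mem_of_mem_take hmem))
        rw [cnt_update hnot v]
      have hind0 : ∀ (a : Fin n → Bool) (v : Bool), F0 (Function.update a i v) = F0 a := by
        intro a v
        simp only [hF0]
        have hpath : t0.path (Function.update a i v) = t0.path a :=
          path_update t0 (L.erase i) hg0 i hiE a v
        rw [hpath, cnt_update hiE v]
        have hnot : i ∉ (t0.path a).take s := fun hmem =>
          hiE (path_subset t0 (L.erase i) hg0 a i (List.mem_of_mem_take hmem))
        rw [cnt_update hnot v]
      have hindG1 : ∀ (a : Fin n → Bool) (v : Bool), G1 (Function.update a i v) = G1 a := by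
        intro a v
        simp only [hG1]
        have hnot : i ∉ (L.erase i).take s := fun hmem => hiE (List.mem_of_mem_take hmem)
        rw [cnt_update hiE v, cnt_update hnot v]
      have hindG0 : ∀ (a : Fin n → Bool) (v : Bool), G0 (Function.update a i v) = G0 a := by
        intro a v
        simp only [hG0]
        have hnot : i ∉ (L.erase i).take s := fun hmem => hiE (List.mem_of_mem_take hmem)
        rw [cnt_update hiE v, cnt_update hnot v]
      -- pointwise rewriting of the LHS integrand
      have hpt : ∀ a : Fin n → Bool,
          indic (g (cnt bb a L)
              ≤ (cnt bb a ((DTree.path (DTree.node i t0 t1) a).take (s+1)) : ℤ))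
            = (if a i then F1 a else F0 a) := by
        intro a
        by_cases hai : a i
        · rw [if_pos hai]
          have hpath : DTree.path (DTree.node i t0 t1) a = i :: t1.path a := by
            rw [DTree.path, if_pos hai]
          rw [hpath, List.take_succ_cons]
          simp only [hF1]
          refine indic_congr ?_
          rw [cnt_cons, hcntL a, hai]
          have hee : (if (true : Bool) = bb then (1:ℕ) else 0) = e true := rfl
          rw [hee]
          generalize (cnt bb a ((t1.path a).take s)) = d
          generalize (cnt bb a (L.erase i)) = cE
          generalize hX : g (cE + e true) = X
          push_cast
          omega
        · rw [if_neg hai]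
          have hai' : a i = false := Bool.eq_false_iff.mpr hai
          have hpath : DTree.path (DTree.node i t0 t1) a = i :: t0.path a := by
            rw [DTree.path, if_neg hai]
          rw [hpath, List.take_succ_cons]
          simp only [hF0]
          refine indic_congr ?_
          rw [cnt_cons, hcntL a, hai']
          have hee : (if (false : Bool) = bb then (1:ℕ) else 0) = e false := rfl
          rw [hee]
          generalize (cnt bb a ((t0.path a).take s)) = d
          generalize (cnt bb a (L.erase i)) = cE
          generalize hX : g (cE + e false) = X
          push_cast
          omega
      -- pointwise rewriting of the merged RHS integrand
      have hpt' : ∀ a : Fin n → Bool,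
          (if a i then G1 a else G0 a)
            = indic (g (cnt bb a L)
                ≤ (cnt bb a (i :: (L.erase i).take s) : ℤ)) := by
        intro a
        by_cases hai : a i
        · rw [if_pos hai]
          simp only [hG1]
          refine indic_congr ?_
          rw [cnt_cons, hcntL a, hai]
          have hee : (if (true : Bool) = bb then (1:ℕ) else 0) = e true := rfl
          rw [hee]
          generalize (cnt bb a ((L.erase i).take s)) = d
          generalize (cnt bb a (L.erase i)) = cE
          generalize hX : g (cE + e true) = X
          push_cast
          omega
        · rw [if_neg hai]
          have hai' : a i = false := Bool.eq_false_iff.mpr hai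
          simp only [hG0]
          refine indic_congr ?_
          rw [cnt_cons, hcntL a, hai']
          have hee : (if (false : Bool) = bb then (1:ℕ) else 0) = e false := rfl
          rw [hee]
          generalize (cnt bb a ((L.erase i).take s)) = d
          generalize (cnt bb a (L.erase i)) = cE
          generalize hX : g (cE + e false) = X
          push_cast
          omega
      -- chain of (in)equalities
      have hnd' : (L.erase i).Nodup := hnd.erase i
      have hsort' : (L.erase i).Pairwise (fun i' j => wt p j bb ≤ wt p i' bb) :=
        hsort.sublist (List.erase_sublist)
      have hih1 : ∑ a : Fin n → Bool, F1 a * pr p a ≤ ∑ a : Fin n → Bool, G1 a * pr p a :=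
        ih1 (L.erase i) (fun m => g (m + e true) - (e true : ℤ)) s hnd' hsort' hg1
      have hih0 : ∑ a : Fin n → Bool, F0 a * pr p a ≤ ∑ a : Fin n → Bool, G0 a * pr p a :=
        ih0 (L.erase i) (fun m => g (m + e false) - (e false : ℤ)) s hnd' hsort' hg0
      have hpi0 : (0:ℝ) ≤ p i := (hp i).1.le
      have hpi1 : (0:ℝ) ≤ 1 - p i := by linarith [(hp i).2]
      have step1 : ∑ a : Fin n → Bool,
          indic (g (cnt bb a L)
            ≤ (cnt bb a ((DTree.path (DTree.node i t0 t1) a).take (s+1)) : ℤ)) * pr p a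
          ≤ ∑ a : Fin n → Bool,
            indic (g (cnt bb a L) ≤ (cnt bb a (i :: (L.erase i).take s) : ℤ)) * pr p a := by
        calc ∑ a : Fin n → Bool,
            indic (g (cnt bb a L)
              ≤ (cnt bb a ((DTree.path (DTree.node i t0 t1) a).take (s+1)) : ℤ)) * pr p a
            = ∑ a : Fin n → Bool, (if a i then F1 a else F0 a) * pr p a :=
              Finset.sum_congr rfl fun a _ => by rw [hpt a]
          _ = p i * ∑ a : Fin n → Bool, F1 a * pr p a
              + (1 - p i) * ∑ a : Fin n → Bool, F0 a * pr p a :=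
              cond_split p i F1 F0 hind1 hind0
          _ ≤ p i * ∑ a : Fin n → Bool, G1 a * pr p a
              + (1 - p i) * ∑ a : Fin n → Bool, G0 a * pr p a :=
              add_le_add (mul_le_mul_of_nonneg_left hih1 hpi0)
                (mul_le_mul_of_nonneg_left hih0 hpi1)
          _ = ∑ a : Fin n → Bool, (if a i then G1 a else G0 a) * pr p a :=
              (cond_split p i G1 G0 hindG1 hindG0).symm
          _ = ∑ a : Fin n → Bool,
              indic (g (cnt bb a L) ≤ (cnt bb a (i :: (L.erase i).take s) : ℤ)) * pr p a :=
              Finset.sum_congr rfl fun a _ => by rw [hpt' a]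
      refine le_trans step1 ?_
      -- final step : compare the fixed set {i} ∪ first s of (L.erase i) with L.take (s+1)
      by_cases hmem : i ∈ L.take (s+1)
      · -- they are permutations of each other
        have he' : (L.erase i).take s = (L.take (s+1)).erase i := erase_take_of_mem L s i hmem
        have hperm : (i :: (L.erase i).take s).Perm (L.take (s+1)) := by
          rw [he']
          exact (List.perm_cons_erase hmem).symm
        refine le_of_eq (Finset.sum_congr rfl fun a _ => ?_)
        congr 1
        exact indic_congr (by rw [cnt_perm bb a hperm])
      · -- swap i with the s-th element of L
        have hslen : s + 1 ≤ L.length := by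
          by_contra hcon
          push_neg at hcon
          rw [List.take_of_length_le (by omega)] at hmem
          exact hmem hiL
        have hsl : s < L.length := by omega
        set m : Fin n := L.get ⟨s, hsl⟩ with hm
        have htk : L.take (s+1) = L.take s ++ [m] := by
          rw [List.take_succ]
          congr 1
          rw [List.getElem?_eq_getElem hsl]
          rfl
        have hmTk : m ∈ L.take (s+1) := by
          rw [htk]; exact List.mem_append_right _ (List.mem_singleton_self m)
        have hmL : m ∈ L := List.get_mem L ⟨s, hsl⟩
        have him : i ≠ m := fun h => hmem (h ▸ hmTk)
        have hiTs : i ∉ L.take s := fun h => by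
          apply hmem
          rw [htk]
          exact List.mem_append_left _ h
        have hndTk : (L.take (s+1)).Nodup := (List.take_sublist (s+1) L).nodup hnd
        have hmTs : m ∉ L.take s := by
          rw [htk] at hndTk
          have := (List.nodup_append.mp hndTk).2.2
          intro hcon
          exact this m hcon m (List.mem_singleton_self m) rfl
        have hw : wt p i bb ≤ wt p m bb := by
          have hLsplit := (List.take_append_drop (s+1) L).symm
          have hpair := hsort
          rw [hLsplit] at hpair
          have h3 := (List.pairwise_append.mp hpair).2.2
          have hiDrop : i ∈ L.drop (s+1) := by
            have : i ∈ L.take (s+1) ++ L.drop (s+1) := by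
              rw [List.take_append_drop]; exact hiL
            rcases List.mem_append.mp this with h | h
            · exact absurd h hmem
            · exact h
          exact h3 m hmTk i hiDrop
        have herase : (L.erase i).take s = L.take s :=
          erase_take_of_not_mem L s i (by omega) hiTs
        rw [herase]
        have hswap := swap_step p hp bb L (L.take s) g i m him hiTs hmTs hiL hmL hnd hw
        refine le_trans hswap (le_of_eq (Finset.sum_congr rfl fun a _ => ?_))
        congr 1
        refine indic_congr ?_
        have hperm2 : (m :: L.take s).Perm (L.take (s+1)) := by
          rw [htk]
          exact (List.perm_append_singleton m (L.take s)).symm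
        rw [cnt_perm bb a hperm2]

end Dev4

-- part 5 : score bands and certificates
section Dev5
variable {n : ℕ}

lemma alpha_lt_of_lt (B : ℕ) (α : ℕ → ℕ) (hmono : ∀ j, 1 ≤ j → j ≤ B → α j < α (j+1)) :
    ∀ k j, 1 ≤ k → k < j → j ≤ B + 1 → α k < α j := by
  intro k j hk hkj hj
  induction j with
  | zero => omega
  | succ j' ih =>
    rcases Nat.lt_or_ge k j' with h | h
    · exact lt_trans (ih h (by omega)) (hmono j' (by omega) (by omega))
    · have : k = j' := by omega
      subst this
      exact hmono k (by omega) (by omega)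

lemma band_unique (B : ℕ) (α : ℕ → ℕ) (hmono : ∀ j, 1 ≤ j → j ≤ B → α j < α (j+1))
    (j j' m : ℕ) (hj1 : 1 ≤ j) (hjB : j ≤ B) (hj'1 : 1 ≤ j') (hj'B : j' ≤ B)
    (h1 : α j ≤ m) (h2 : m < α (j+1)) (h3 : α j' ≤ m) (h4 : m < α (j'+1)) : j = j' := by
  have key : ∀ u u', 1 ≤ u → u ≤ B → 1 ≤ u' → u' ≤ B → u < u' →
      α u ≤ m → m < α (u+1) → α u' ≤ m → False := by
    intro u u' hu1 huB hu'1 hu'B huu' ha hb hc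
    have : α (u+1) ≤ α u' := by
      rcases Nat.eq_or_lt_of_le (Nat.succ_le_of_lt huu') with h | h
      · rw [show u + 1 = u' from h]
      · exact le_of_lt (alpha_lt_of_lt B α hmono (u+1) u' (by omega) h (by omega))
    omega
  rcases Nat.lt_trichotomy j j' with h | h | h
  · exact absurd (key j j' hj1 hjB hj'1 hj'B h h1 h2 h3) not_false
  · exact h
  · exact absurd (key j' j hj'1 hj'B hj1 hjB h h3 h4 h1) not_false

lemma cnt_true_eq_N1 (l : List (Fin n)) (hnd : l.Nodup) (hall : ∀ i, i ∈ l)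
    (a : Fin n → Bool) : cnt true a l = N1 a := by
  unfold cnt N1
  rw [List.countP_eq_length_filter, ← List.toFinset_card_of_nodup (hnd.filter _)]
  congr 1
  ext j
  simp [List.mem_filter, hall j]

lemma N1_le (a : Fin n → Bool) : N1 a ≤ n := by
  unfold N1
  calc (Finset.univ.filter (fun i => a i = true)).card
      ≤ Finset.univ.card := Finset.card_filter_le _ _
    _ = n := by rw [Finset.card_univ, Fintype.card_fin]

lemma cnt_false_eq (l : List (Fin n)) (hnd : l.Nodup) (hall : ∀ i, i ∈ l)
    (a : Fin n → Bool) : cnt false a l + N1 a = n := by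
  unfold cnt N1
  rw [List.countP_eq_length_filter, ← List.toFinset_card_of_nodup (hnd.filter _)]
  have hset : (l.filter (fun j => a j == false)).toFinset
      = Finset.univ.filter (fun i => ¬ (a i = true)) := by
    ext j
    simp [List.mem_filter, hall j]
  rw [hset, add_comm]
  rw [Finset.card_filter_add_card_filter_not (p := fun i => a i = true)]
  rw [Finset.card_univ, Fintype.card_fin]

lemma cnt_true_le_N1 (Q : List (Fin n)) (hQ : Q.Nodup) (a : Fin n → Bool) :
    cnt true a Q ≤ N1 a := by
  rw [← cnt_true_eq_N1 (List.finRange n) (List.nodup_finRange n) (List.mem_finRange) a]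
  exact cnt_le_of_subset hQ (List.nodup_finRange n) (fun x _ => List.mem_finRange x)

lemma cnt_false_le (Q : List (Fin n)) (hQ : Q.Nodup) (a : Fin n → Bool) :
    cnt false a Q + N1 a ≤ n := by
  have h := cnt_false_eq (List.finRange n) (List.nodup_finRange n) (List.mem_finRange) a
  have : cnt false a Q ≤ cnt false a (List.finRange n) :=
    cnt_le_of_subset hQ (List.nodup_finRange n) (fun x _ => List.mem_finRange x)
  omega

lemma N1_restrict_false (a : Fin n → Bool) (Q : List (Fin n)) (hQ : Q.Nodup) :
    N1 (fun j => if j ∈ Q then a j else false) = cnt true a Q := by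
  unfold N1 cnt
  rw [List.countP_eq_length_filter, ← List.toFinset_card_of_nodup (hQ.filter _)]
  congr 1
  ext j
  by_cases hj : j ∈ Q <;> simp [List.mem_filter, hj]

lemma N1_restrict_true (a : Fin n → Bool) (Q : List (Fin n)) (hQ : Q.Nodup) :
    N1 (fun j => if j ∈ Q then a j else true) + cnt false a Q = n := by
  unfold N1 cnt
  rw [List.countP_eq_length_filter, ← List.toFinset_card_of_nodup (hQ.filter _)]
  have hset : (Q.filter (fun j => a j == false)).toFinset
      = Finset.univ.filter (fun i => ¬ ((if i ∈ Q then a i else true) = true)) := by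
    ext j
    by_cases hj : j ∈ Q <;> simp [List.mem_filter, hj]
  rw [hset,
    Finset.card_filter_add_card_filter_not
      (p := fun i => (if i ∈ Q then a i else true) = true),
    Finset.card_univ, Fintype.card_fin]

/-- The certificate characterization: a nodup query set determines `f a` iff it
contains enough trues and enough falses of `a`. -/
lemma cert_iff (B : ℕ) (α : ℕ → ℕ) (f : (Fin n → Bool) → ℕ)
    (hmono : ∀ j, 1 ≤ j → j ≤ B → α j < α (j+1))
    (hf : ∀ a, 1 ≤ f a ∧ f a ≤ B ∧ α (f a) ≤ N1 a ∧ N1 a < α (f a + 1))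
    (a : Fin n → Bool) (Q : List (Fin n)) (hQ : Q.Nodup) :
    (∀ b, (∀ j ∈ Q, b j = a j) → f b = f a)
      ↔ (α (f a) ≤ cnt true a Q ∧ n + 1 ≤ α (f a + 1) + cnt false a Q) := by
  constructor
  · intro h
    constructor
    · by_contra hlt
      push_neg at hlt
      set b : Fin n → Bool := fun j => if j ∈ Q then a j else false with hb
      have hab : ∀ j ∈ Q, b j = a j := fun j hj => if_pos hj
      have hfb : f b = f a := h b hab
      have hN1 : N1 b = cnt true a Q := N1_restrict_false a Q hQ
      have := (hf b).2.2.1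
      rw [hfb, hN1] at this
      omega
    · by_contra hlt
      push_neg at hlt
      set b : Fin n → Bool := fun j => if j ∈ Q then a j else true with hb
      have hab : ∀ j ∈ Q, b j = a j := fun j hj => if_pos hj
      have hfb : f b = f a := h b hab
      have hN1 : N1 b + cnt false a Q = n := N1_restrict_true a Q hQ
      have := (hf b).2.2.2
      rw [hfb] at this
      omega
  · rintro ⟨h1, h2⟩ b hb
    have e1 : cnt true b Q = cnt true a Q := cnt_congr hb
    have e0 : cnt false b Q = cnt false a Q := cnt_congr hb
    have hge : α (f a) ≤ N1 b := le_trans h1 (e1 ▸ cnt_true_le_N1 Q hQ b)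
    have hle : cnt false b Q + N1 b ≤ n := cnt_false_le Q hQ b
    have hlt : N1 b < α (f a + 1) := by omega
    exact band_unique B α hmono (f b) (f a) (N1 b) (hf b).1 (hf b).2.1 (hf a).1 (hf a).2.1
      (hf b).2.2.1 (hf b).2.2.2 hge hlt

end Dev5

-- part 6 : round-robin merge lemmas
section Dev6

lemma mem_take_mono {α : Type*} {l : List α} {j k : ℕ} {x : α}
    (hjk : j ≤ k) (h : x ∈ l.take j) : x ∈ l.take k := by
  have : l.take j = (l.take k).take j := by rw [List.take_take, min_eq_left hjk]
  rw [this] at h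
  exact List.mem_of_mem_take h

lemma mem_filter_take {α : Type*} [DecidableEq α] {l : List α} {k : ℕ} {x b : α}
    (hx : x ∈ l.take k) (hxb : x ≠ b) :
    x ∈ (l.filter (fun y => y ≠ b)).take k := by
  have hsplit : l.filter (fun y => y ≠ b)
      = (l.take k).filter (fun y => y ≠ b) ++ (l.drop k).filter (fun y => y ≠ b) := by
    rw [← List.filter_append, List.take_append_drop]
  have hxf : x ∈ (l.take k).filter (fun y => y ≠ b) := by
    rw [List.mem_filter]
    exact ⟨hx, by simp [hxb]⟩
  have hlen : ((l.take k).filter (fun y => y ≠ b)).length ≤ k := by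
    calc ((l.take k).filter (fun y => y ≠ b)).length ≤ (l.take k).length :=
          List.length_filter_le _ _
      _ ≤ k := by rw [List.length_take]; omega
  have : x ∈ (l.filter (fun y => y ≠ b)).take (((l.take k).filter (fun y => y ≠ b)).length) := by
    rw [hsplit, List.take_left' rfl]
    exact hxf
  exact mem_take_mono hlen this

lemma rr_unattach_filter {α : Type*} [DecidableEq α] (l : List α) (a : α)
    (P : {x // x ∈ l} → Bool) (hP : ∀ x, P x = decide (x.1 ≠ a)) :
    (l.attach.filter P).unattach = l.filter (fun x => decide (x ≠ a)) := by
  rw [List.unattach_filter (g := fun x => decide (x ≠ a)) (hf := fun x h => hP ⟨x, h⟩),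
    List.unattach_attach]

lemma mem_rrMerge {α : Type*} [DecidableEq α] :
    ∀ (l1 l2 : List α) (x : α), x ∈ rrMerge l1 l2 → x ∈ l1 ∨ x ∈ l2 := by
  intro l1 l2
  induction l1, l2 using rrMerge.induct with
  | case1 l2 => intro x hx; right; rw [rrMerge] at hx; exact hx
  | case2 a l1 l2 ih =>
    rw [rr_unattach_filter l2 a _ (fun _ => rfl)] at ih
    intro x hx
    rw [rrMerge] at hx
    rcases List.mem_cons.mp hx with rfl | hx'
    · left; exact List.mem_cons_self
    · rcases ih x hx' with h | h
      · right; exact List.mem_of_mem_filter h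
      · left; exact List.mem_cons_of_mem a h

lemma nodup_rrMerge {α : Type*} [DecidableEq α] :
    ∀ (l1 l2 : List α), l1.Nodup → l2.Nodup → (rrMerge l1 l2).Nodup := by
  intro l1 l2
  induction l1, l2 using rrMerge.induct with
  | case1 l2 => intro _ h2; rw [rrMerge]; exact h2
  | case2 a l1 l2 ih =>
    rw [rr_unattach_filter l2 a _ (fun _ => rfl)] at ih
    intro h1 h2
    rw [rrMerge]
    refine List.nodup_cons.mpr ⟨?_, ih (h2.filter _) (List.nodup_cons.mp h1).2⟩
    intro hmem
    rcases mem_rrMerge _ _ a hmem with h | h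
    · have := List.mem_filter.mp h
      simp at this
    · exact (List.nodup_cons.mp h1).1 h

lemma rrMerge_take :
    ∀ {α : Type*} [DecidableEq α] (l1 l2 : List α) (k : ℕ),
      (∀ x ∈ l1.take k, x ∈ (rrMerge l1 l2).take (2*k - 1))
      ∧ (∀ x ∈ l2.take k, x ∈ (rrMerge l1 l2).take (2*k)) := by
  intro α _ l1 l2
  induction l1, l2 using rrMerge.induct with
  | case1 l2 =>
    intro k
    constructor
    · intro x hx; simp at hx
    · intro x hx
      rw [rrMerge]
      exact mem_take_mono (by omega) hx
  | case2 a l1 l2 ih =>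
    rw [rr_unattach_filter l2 a _ (fun _ => rfl)] at ih
    intro k
    constructor
    · intro x hx
      cases k with
      | zero => simp at hx
      | succ k' =>
        rw [List.take_succ_cons] at hx
        rw [rrMerge]
        have h21 : 2 * (k' + 1) - 1 = (2 * k') + 1 := by omega
        rw [h21, List.take_succ_cons]
        rcases List.mem_cons.mp hx with rfl | hx'
        · exact List.mem_cons_self
        · exact List.mem_cons_of_mem a ((ih k').2 x hx')
    · intro x hx
      cases k with
      | zero => simp at hx
      | succ k' =>
        rw [rrMerge]
        have h2k : 2 * (k' + 1) = (2 * (k'+1) - 1) + 1 := by omega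
        rw [h2k, List.take_succ_cons]
        by_cases hxa : x = a
        · subst hxa; exact List.mem_cons_self
        · refine List.mem_cons_of_mem a ?_
          have hxf : x ∈ (l2.filter (fun y => y ≠ a)).take (k'+1) :=
            mem_filter_take hx hxa
          exact (ih (k'+1)).1 x hxf

lemma sum_map_const_one {n : ℕ} (c : Fin n → ℝ) (hc : ∀ i, c i = 1) :
    ∀ (q : List (Fin n)), (q.map c).sum = (q.length : ℝ) := by
  intro q
  induction q with
  | nil => simp
  | cons x xs ih => simp [hc, ih]; ring

end Dev6

-- part 7 : a full decision tree evaluating any function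
section Dev7
variable {n : ℕ}

def fullTree (f : (Fin n → Bool) → ℕ) : List (Fin n) → (Fin n → Bool) → DTree n
  | [], ρ => .leaf (f ρ)
  | i :: l, ρ => .node i (fullTree f l (Function.update ρ i false))
                         (fullTree f l (Function.update ρ i true))

lemma fullTree_eval (f : (Fin n → Bool) → ℕ) :
    ∀ (l : List (Fin n)) (ρ a : Fin n → Bool), l.Nodup →
      (fullTree f l ρ).eval a = f (fun j => if j ∈ l then a j else ρ j) := by
  intro l
  induction l with
  | nil =>
    intro ρ a _
    show f ρ = _
    congr 1
  | cons i l ih =>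
    intro ρ a hnd
    obtain ⟨hil, hndl⟩ := List.nodup_cons.mp hnd
    show DTree.eval (.node i _ _) a = _
    rw [DTree.eval]
    by_cases hai : a i
    · rw [if_pos hai, ih (Function.update ρ i true) a hndl]
      congr 1
      funext j
      by_cases hjl : j ∈ l
      · rw [if_pos hjl, if_pos (List.mem_cons_of_mem i hjl)]
      · by_cases hji : j = i
        · subst hji
          rw [if_neg hjl, if_pos List.mem_cons_self, Function.update_self, hai]
        · rw [if_neg hjl, if_neg (by simp [hji, hjl]), Function.update_of_ne hji]
    · rw [if_neg hai, ih (Function.update ρ i false) a hndl]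
      congr 1
      funext j
      by_cases hjl : j ∈ l
      · rw [if_pos hjl, if_pos (List.mem_cons_of_mem i hjl)]
      · by_cases hji : j = i
        · subst hji
          rw [if_neg hjl, if_pos List.mem_cons_self, Function.update_self,
            Bool.eq_false_iff.mpr hai]
        · rw [if_neg hjl, if_neg (by simp [hji, hjl]), Function.update_of_ne hji]

lemma fullTree_proper (f : (Fin n → Bool) → ℕ) :
    ∀ (l : List (Fin n)) (ρ : Fin n → Bool) (u : Finset (Fin n)), l.Nodup →
      (∀ j ∈ l, j ∉ u) → (fullTree f l ρ).Proper u := by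
  intro l
  induction l with
  | nil => intro ρ u _ _; trivial
  | cons i l ih =>
    intro ρ u hnd hdisj
    obtain ⟨hil, hndl⟩ := List.nodup_cons.mp hnd
    refine ⟨hdisj i (List.mem_cons_self), ?_, ?_⟩
    · exact ih _ (insert i u) hndl (fun j hj => by
        rw [Finset.mem_insert]
        push_neg
        exact ⟨fun h => hil (h ▸ hj), hdisj j (List.mem_cons_of_mem i hj)⟩)
    · exact ih _ (insert i u) hndl (fun j hj => by
        rw [Finset.mem_insert]
        push_neg
        exact ⟨fun h => hil (h ▸ hj), hdisj j (List.mem_cons_of_mem i hj)⟩)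

lemma indic_not (P : Prop) : indic (¬ P) = 1 - indic P := by
  unfold indic
  by_cases h : P <;> simp [h]

end Dev7

-- part 8 : the main theorem
theorem stmt6 {n : ℕ} (hn : 1 ≤ n) (p c : Fin n → ℝ)
    (hp : ∀ i, 0 < p i ∧ p i < 1) (hc : ∀ i, c i = 1)
    (B : ℕ) (hB : 2 ≤ B) (α : ℕ → ℕ)
    (hα1 : α 1 = 0) (hαtop : α (B + 1) = n + 1)
    (hmono : ∀ j, 1 ≤ j → j ≤ B → α j < α (j + 1))
    (f : (Fin n → Bool) → ℕ)
    (hf : ∀ a, 1 ≤ f a ∧ f a ≤ B ∧ α (f a) ≤ N1 a ∧ N1 a < α (f a + 1))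
    (l1 l0 : List (Fin n))
    (hl1 : l1.Nodup ∧ (∀ i, i ∈ l1) ∧ l1.Pairwise (fun i j => p j ≤ p i))
    (hl0 : l0.Nodup ∧ (∀ i, i ∈ l0) ∧ l0.Pairwise (fun i j => p i ≤ p j)) :
    naExpCost p c f (rrMerge l1 l0) ≤ 4 * OPTcost p c f := by
  classical
  obtain ⟨hl1nd, hl1mem, hl1sort⟩ := hl1
  obtain ⟨hl0nd, hl0mem, hl0sort⟩ := hl0
  have hlenfull : ∀ (l : List (Fin n)), l.Nodup → (∀ i, i ∈ l) → l.length = n := by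
    intro l hnd hall
    rw [← List.toFinset_card_of_nodup hnd]
    have : l.toFinset = Finset.univ := by ext j; simp [hall j]
    rw [this, Finset.card_univ, Fintype.card_fin]
  have hlen1 : l1.length = n := hlenfull l1 hl1nd hl1mem
  have hlen0 : l0.length = n := hlenfull l0 hl0nd hl0mem
  have hfN1 : ∀ a b : Fin n → Bool, N1 a = N1 b → f a = f b := by
    intro a b h
    exact band_unique B α hmono (f a) (f b) (N1 a) (hf a).1 (hf a).2.1 (hf b).1 (hf b).2.1
      (hf a).2.2.1 (hf a).2.2.2 (h ▸ (hf b).2.2.1) (h ▸ (hf b).2.2.2)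
  -- requirement functions depending only on counts
  set g1 : ℕ → ℤ := fun m =>
    if h : ∃ a : Fin n → Bool, N1 a = m then (α (f (Classical.choose h)) : ℤ) else 0 with hg1def
  set g0 : ℕ → ℤ := fun m =>
    if h : ∃ a : Fin n → Bool, n - N1 a = m then
      (n:ℤ) + 1 - (α (f (Classical.choose h) + 1) : ℤ) else 0 with hg0def
  have hg1 : ∀ a : Fin n → Bool, g1 (N1 a) = (α (f a) : ℤ) := by
    intro a
    have hex : ∃ b : Fin n → Bool, N1 b = N1 a := ⟨a, rfl⟩
    simp only [hg1def]
    rw [dif_pos hex, hfN1 (Classical.choose hex) a (Classical.choose_spec hex)]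
  have hg0 : ∀ a : Fin n → Bool, g0 (n - N1 a) = (n:ℤ) + 1 - (α (f a + 1) : ℤ) := by
    intro a
    have hex : ∃ b : Fin n → Bool, n - N1 b = n - N1 a := ⟨a, rfl⟩
    simp only [hg0def]
    rw [dif_pos hex]
    have hNb : N1 (Classical.choose hex) = N1 a := by
      have h1 := Classical.choose_spec hex
      have h2 := N1_le (Classical.choose hex)
      have h3 := N1_le a
      omega
    rw [hfN1 (Classical.choose hex) a hNb]
  have hcnt1 : ∀ a : Fin n → Bool, cnt true a l1 = N1 a := fun a =>
    cnt_true_eq_N1 l1 hl1nd hl1mem a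
  have hcnt0 : ∀ a : Fin n → Bool, cnt false a l0 = n - N1 a := by
    intro a; have := cnt_false_eq l0 hl0nd hl0mem a; omega
  -- minimal prefixes of the sorted lists
  set W1 : (Fin n → Bool) → ℕ := fun a => sInf {r | α (f a) ≤ cnt true a (l1.take r)}
    with hW1def
  set W0 : (Fin n → Bool) → ℕ := fun a =>
    sInf {r | n + 1 ≤ α (f a + 1) + cnt false a (l0.take r)} with hW0def
  have hW1memn : ∀ a : Fin n → Bool, n ∈ {r | α (f a) ≤ cnt true a (l1.take r)} := by
    intro a
    show α (f a) ≤ cnt true a (l1.take n)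
    rw [List.take_of_length_le (le_of_eq hlen1), hcnt1 a]
    exact (hf a).2.2.1
  have hW0memn : ∀ a : Fin n → Bool,
      n ∈ {r | n + 1 ≤ α (f a + 1) + cnt false a (l0.take r)} := by
    intro a
    show n + 1 ≤ α (f a + 1) + cnt false a (l0.take n)
    rw [List.take_of_length_le (le_of_eq hlen0), hcnt0 a]
    have h1 := (hf a).2.2.2
    have h2 := N1_le a
    omega
  have hW1le : ∀ a, W1 a ≤ n := fun a => Nat.sInf_le (hW1memn a)
  have hW0le : ∀ a, W0 a ≤ n := fun a => Nat.sInf_le (hW0memn a)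
  have hW1spec : ∀ a : Fin n → Bool, α (f a) ≤ cnt true a (l1.take (W1 a)) := fun a =>
    Nat.sInf_mem ⟨n, hW1memn a⟩
  have hW0spec : ∀ a : Fin n → Bool,
      n + 1 ≤ α (f a + 1) + cnt false a (l0.take (W0 a)) := fun a =>
    Nat.sInf_mem ⟨n, hW0memn a⟩
  have hW1iff : ∀ (a : Fin n → Bool) (t : ℕ),
      (α (f a) ≤ cnt true a (l1.take t)) ↔ W1 a ≤ t := by
    intro a t
    constructor
    · intro h; exact Nat.sInf_le h
    · intro h; exact le_trans (hW1spec a) (cnt_le_take true a l1 h)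
  have hW0iff : ∀ (a : Fin n → Bool) (t : ℕ),
      (n + 1 ≤ α (f a + 1) + cnt false a (l0.take t)) ↔ W0 a ≤ t := by
    intro a t
    constructor
    · intro h; exact Nat.sInf_le h
    · intro h
      have hmono2 := cnt_le_take false a l0 h
      have := hW0spec a
      omega
  -- counting representation of expectations
  have hsum_repr : ∀ (w : (Fin n → Bool) → ℕ), (∀ a, w a ≤ n) →
      ∑ a : Fin n → Bool, (w a : ℝ) * pr p a
        = ∑ t ∈ Finset.range n, ∑ a : Fin n → Bool, indic (t < w a) * pr p a := by
    intro w hw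
    have hpt : ∀ a : Fin n → Bool, (w a : ℝ) = ∑ t ∈ Finset.range n, indic (t < w a) := by
      intro a
      have h1 : ∑ t ∈ Finset.range n, indic (t < w a)
          = (((Finset.range n).filter (fun t => t < w a)).card : ℝ) := by
        rw [← Finset.sum_boole]
        exact Finset.sum_congr rfl fun t _ => indic_def _
      have h2 : (Finset.range n).filter (fun t => t < w a) = Finset.range (w a) := by
        ext t
        simp only [Finset.mem_filter, Finset.mem_range]
        constructor
        · rintro ⟨_, h⟩; exact h
        · intro h; exact ⟨lt_of_lt_of_le h (hw a), h⟩
      rw [h1, h2, Finset.card_range]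
    rw [Finset.sum_congr rfl fun a _ => by rw [hpt a, Finset.sum_mul]]
    exact Finset.sum_comm
  -- sortedness in terms of weights
  have hsorted1 : l1.Pairwise (fun i j => wt p j true ≤ wt p i true) :=
    hl1sort.imp (fun h => by simpa [wt] using h)
  have hsorted0 : l0.Pairwise (fun i j => wt p j false ≤ wt p i false) :=
    hl0sort.imp (fun h => by simp only [wt, if_neg Bool.false_ne_true]; linarith)
  -- main estimate for a fixed tree
  have main : ∀ T : DTree n, T.Proper ∅ → (∀ a, T.eval a = f a) →
      naExpCost p c f (rrMerge l1 l0) ≤ 4 * ∑ a : Fin n → Bool, T.cost c a * pr p a := by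
    intro T hprop heval
    have hgood1 : GoodT T l1 := goodT_of_proper T ∅ l1 hprop hl1nd (fun j => by simp [hl1mem j])
    have hgood0 : GoodT T l0 := goodT_of_proper T ∅ l0 hprop hl0nd (fun j => by simp [hl0mem j])
    have hcertpath : ∀ a : Fin n → Bool, α (f a) ≤ cnt true a (T.path a)
        ∧ n + 1 ≤ α (f a + 1) + cnt false a (T.path a) := by
      intro a
      have hnd : (T.path a).Nodup := path_nodup T l1 hgood1 hl1nd a
      refine (cert_iff B α f hmono hf a (T.path a) hnd).mp ?_
      intro b hb
      rw [← heval b, ← heval a]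
      exact agree_eval T a b hb
    have hpathlen : ∀ a : Fin n → Bool, (T.path a).length ≤ n := by
      intro a
      have h := path_length_le T l1 hgood1 a
      rw [hlen1] at h
      exact h
    -- per-step comparison, "true" side
    have hpert1 : ∀ t : ℕ, ∑ a : Fin n → Bool, indic (t < W1 a) * pr p a
        ≤ ∑ a : Fin n → Bool, indic (t < (T.path a).length) * pr p a := by
      intro t
      have hkey := keyG p hp true T l1 g1 t hl1nd hsorted1 hgood1
      have hLrw : ∀ a : Fin n → Bool, indic (t < W1 a)
          = 1 - indic (g1 (cnt true a l1) ≤ (cnt true a (l1.take t) : ℤ)) := by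
        intro a
        have h1 : (g1 (cnt true a l1) ≤ (cnt true a (l1.take t) : ℤ))
            ↔ (α (f a) ≤ cnt true a (l1.take t)) := by
          rw [hcnt1 a, hg1 a]
          exact Nat.cast_le
        have h2 : (t < W1 a) ↔ ¬ (g1 (cnt true a l1) ≤ (cnt true a (l1.take t) : ℤ)) := by
          rw [h1, hW1iff a t]
          omega
        rw [indic_congr h2, indic_not]
      have hRrw : ∀ a : Fin n → Bool,
          1 - indic (g1 (cnt true a l1) ≤ (cnt true a ((T.path a).take t) : ℤ))
            ≤ indic (t < (T.path a).length) := by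
        intro a
        by_cases hlt : t < (T.path a).length
        · have heq1 : indic (t < (T.path a).length) = 1 := by rw [indic_def, if_pos hlt]
          rw [heq1]
          have := indic_nonneg (g1 (cnt true a l1) ≤ (cnt true a ((T.path a).take t) : ℤ))
          linarith
        · push_neg at hlt
          have htake : (T.path a).take t = T.path a := List.take_of_length_le hlt
          have hev : g1 (cnt true a l1) ≤ (cnt true a ((T.path a).take t) : ℤ) := by
            rw [htake, hcnt1 a, hg1 a]
            exact_mod_cast (hcertpath a).1
          have heq1 : indic (g1 (cnt true a l1)
              ≤ (cnt true a ((T.path a).take t) : ℤ)) = 1 := by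
            rw [indic_def, if_pos hev]
          rw [heq1]
          have := indic_nonneg (t < (T.path a).length)
          linarith
      calc ∑ a : Fin n → Bool, indic (t < W1 a) * pr p a
          = ∑ a : Fin n → Bool,
              (1 - indic (g1 (cnt true a l1) ≤ (cnt true a (l1.take t) : ℤ))) * pr p a :=
            Finset.sum_congr rfl fun a _ => by rw [hLrw a]
        _ = (∑ a : Fin n → Bool, pr p a)
            - ∑ a : Fin n → Bool,
              indic (g1 (cnt true a l1) ≤ (cnt true a (l1.take t) : ℤ)) * pr p a := by
            rw [← Finset.sum_sub_distrib]
            exact Finset.sum_congr rfl fun a _ => by ring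
        _ ≤ (∑ a : Fin n → Bool, pr p a)
            - ∑ a : Fin n → Bool,
              indic (g1 (cnt true a l1) ≤ (cnt true a ((T.path a).take t) : ℤ)) * pr p a := by
            linarith [hkey]
        _ = ∑ a : Fin n → Bool,
              (1 - indic (g1 (cnt true a l1) ≤ (cnt true a ((T.path a).take t) : ℤ))) * pr p a := by
            rw [← Finset.sum_sub_distrib]
            exact Finset.sum_congr rfl fun a _ => by ring
        _ ≤ ∑ a : Fin n → Bool, indic (t < (T.path a).length) * pr p a :=
            Finset.sum_le_sum fun a _ => mul_le_mul_of_nonneg_right (hRrw a) (pr_nonneg hp a)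
    -- per-step comparison, "false" side
    have hpert0 : ∀ t : ℕ, ∑ a : Fin n → Bool, indic (t < W0 a) * pr p a
        ≤ ∑ a : Fin n → Bool, indic (t < (T.path a).length) * pr p a := by
      intro t
      have hkey := keyG p hp false T l0 g0 t hl0nd hsorted0 hgood0
      have hLrw : ∀ a : Fin n → Bool, indic (t < W0 a)
          = 1 - indic (g0 (cnt false a l0) ≤ (cnt false a (l0.take t) : ℤ)) := by
        intro a
        have h1 : (g0 (cnt false a l0) ≤ (cnt false a (l0.take t) : ℤ))
            ↔ (n + 1 ≤ α (f a + 1) + cnt false a (l0.take t)) := by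
          rw [hcnt0 a, hg0 a]
          constructor
          · intro h; omega
          · intro h; omega
        have h2 : (t < W0 a) ↔ ¬ (g0 (cnt false a l0) ≤ (cnt false a (l0.take t) : ℤ)) := by
          rw [h1, hW0iff a t]
          omega
        rw [indic_congr h2, indic_not]
      have hRrw : ∀ a : Fin n → Bool,
          1 - indic (g0 (cnt false a l0) ≤ (cnt false a ((T.path a).take t) : ℤ))
            ≤ indic (t < (T.path a).length) := by
        intro a
        by_cases hlt : t < (T.path a).length
        · have heq1 : indic (t < (T.path a).length) = 1 := by rw [indic_def, if_pos hlt]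
          rw [heq1]
          have := indic_nonneg (g0 (cnt false a l0) ≤ (cnt false a ((T.path a).take t) : ℤ))
          linarith
        · push_neg at hlt
          have htake : (T.path a).take t = T.path a := List.take_of_length_le hlt
          have hev : g0 (cnt false a l0) ≤ (cnt false a ((T.path a).take t) : ℤ) := by
            rw [htake, hcnt0 a, hg0 a]
            have := (hcertpath a).2
            omega
          have heq1 : indic (g0 (cnt false a l0)
              ≤ (cnt false a ((T.path a).take t) : ℤ)) = 1 := by
            rw [indic_def, if_pos hev]
          rw [heq1]
          have := indic_nonneg (t < (T.path a).length)
          linarith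
      calc ∑ a : Fin n → Bool, indic (t < W0 a) * pr p a
          = ∑ a : Fin n → Bool,
              (1 - indic (g0 (cnt false a l0) ≤ (cnt false a (l0.take t) : ℤ))) * pr p a :=
            Finset.sum_congr rfl fun a _ => by rw [hLrw a]
        _ = (∑ a : Fin n → Bool, pr p a)
            - ∑ a : Fin n → Bool,
              indic (g0 (cnt false a l0) ≤ (cnt false a (l0.take t) : ℤ)) * pr p a := by
            rw [← Finset.sum_sub_distrib]
            exact Finset.sum_congr rfl fun a _ => by ring
        _ ≤ (∑ a : Fin n → Bool, pr p a)
            - ∑ a : Fin n → Bool,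
              indic (g0 (cnt false a l0) ≤ (cnt false a ((T.path a).take t) : ℤ)) * pr p a := by
            linarith [hkey]
        _ = ∑ a : Fin n → Bool,
              (1 - indic (g0 (cnt false a l0)
                ≤ (cnt false a ((T.path a).take t) : ℤ))) * pr p a := by
            rw [← Finset.sum_sub_distrib]
            exact Finset.sum_congr rfl fun a _ => by ring
        _ ≤ ∑ a : Fin n → Bool, indic (t < (T.path a).length) * pr p a :=
            Finset.sum_le_sum fun a _ => mul_le_mul_of_nonneg_right (hRrw a) (pr_nonneg hp a)
    have hEW1 : ∑ a : Fin n → Bool, (W1 a : ℝ) * pr p a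
        ≤ ∑ a : Fin n → Bool, ((T.path a).length : ℝ) * pr p a := by
      rw [hsum_repr W1 hW1le, hsum_repr (fun a => (T.path a).length) hpathlen]
      exact Finset.sum_le_sum fun t _ => hpert1 t
    have hEW0 : ∑ a : Fin n → Bool, (W0 a : ℝ) * pr p a
        ≤ ∑ a : Fin n → Bool, ((T.path a).length : ℝ) * pr p a := by
      rw [hsum_repr W0 hW0le, hsum_repr (fun a => (T.path a).length) hpathlen]
      exact Finset.sum_le_sum fun t _ => hpert0 t
    -- pointwise bound on the round-robin cost
    have hna : ∀ a : Fin n → Bool,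
        naCost c f a (rrMerge l1 l0) ≤ 2 * (W1 a : ℝ) + 2 * (W0 a : ℝ) := by
      intro a
      have hRRnd : (rrMerge l1 l0).Nodup := nodup_rrMerge l1 l0 hl1nd hl0nd
      unfold naCost
      set K : Set ℕ := {k | ∀ b : Fin n → Bool,
        (∀ i ∈ (rrMerge l1 l0).take k, b i = a i) → f b = f a} with hKdef
      have hmemK : (2 * W1 a + 2 * W0 a) ∈ K := by
        have hQnd : ((rrMerge l1 l0).take (2 * W1 a + 2 * W0 a)).Nodup :=
          (List.take_sublist _ _).nodup hRRnd
        refine (cert_iff B α f hmono hf a _ hQnd).mpr ⟨?_, ?_⟩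
        · refine le_trans (hW1spec a) ?_
          refine cnt_le_of_subset ((List.take_sublist _ l1).nodup hl1nd) hQnd ?_
          intro x hx
          have hh := (rrMerge_take l1 l0 (W1 a)).1 x hx
          exact mem_take_mono (by omega) hh
        · have hsub : cnt false a (l0.take (W0 a))
              ≤ cnt false a ((rrMerge l1 l0).take (2 * W1 a + 2 * W0 a)) := by
            refine cnt_le_of_subset ((List.take_sublist _ l0).nodup hl0nd) hQnd ?_
            intro x hx
            have hh := (rrMerge_take l1 l0 (W0 a)).2 x hx
            exact mem_take_mono (by omega) hh
          have := hW0spec a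
          omega
      have hsInf_le : sInf K ≤ 2 * W1 a + 2 * W0 a := Nat.sInf_le hmemK
      rw [sum_map_const_one c hc]
      have hlen : ((rrMerge l1 l0).take (sInf K)).length ≤ sInf K := by
        rw [List.length_take]; omega
      have hcast : (((rrMerge l1 l0).take (sInf K)).length : ℝ)
          ≤ ((2 * W1 a + 2 * W0 a : ℕ) : ℝ) := by
        exact_mod_cast le_trans hlen hsInf_le
      push_cast at hcast
      linarith
    have hcostlen : ∀ a : Fin n → Bool, T.cost c a = ((T.path a).length : ℝ) :=
      cost_eq_length c hc T
    calc naExpCost p c f (rrMerge l1 l0)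
        = ∑ a : Fin n → Bool, naCost c f a (rrMerge l1 l0) * pr p a := rfl
      _ ≤ ∑ a : Fin n → Bool, (2 * (W1 a : ℝ) + 2 * (W0 a : ℝ)) * pr p a :=
          Finset.sum_le_sum fun a _ => mul_le_mul_of_nonneg_right (hna a) (pr_nonneg hp a)
      _ = 2 * (∑ a : Fin n → Bool, (W1 a : ℝ) * pr p a)
          + 2 * (∑ a : Fin n → Bool, (W0 a : ℝ) * pr p a) := by
          rw [Finset.mul_sum, Finset.mul_sum, ← Finset.sum_add_distrib]
          exact Finset.sum_congr rfl fun a _ => by ring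
      _ ≤ 2 * (∑ a : Fin n → Bool, ((T.path a).length : ℝ) * pr p a)
          + 2 * (∑ a : Fin n → Bool, ((T.path a).length : ℝ) * pr p a) :=
          add_le_add (mul_le_mul_of_nonneg_left hEW1 (by norm_num))
            (mul_le_mul_of_nonneg_left hEW0 (by norm_num))
      _ = 4 * ∑ a : Fin n → Bool, T.cost c a * pr p a := by
          have hsc : ∑ a : Fin n → Bool, T.cost c a * pr p a
              = ∑ a : Fin n → Bool, ((T.path a).length : ℝ) * pr p a :=
            Finset.sum_congr rfl fun a _ => by rw [hcostlen a]
          rw [hsc]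
          ring
  -- nonemptiness of the OPT set
  have hne : {x : ℝ | ∃ T : DTree n, T.Proper ∅ ∧ (∀ a, T.eval a = f a) ∧
      x = ∑ a : Fin n → Bool, T.cost c a * pr p a}.Nonempty := by
    refine ⟨∑ a : Fin n → Bool,
        (fullTree f (List.finRange n) (fun _ => false)).cost c a * pr p a,
      fullTree f (List.finRange n) (fun _ => false), ?_, ?_, rfl⟩
    · exact fullTree_proper f _ _ ∅ (List.nodup_finRange n) (by simp)
    · intro a
      rw [fullTree_eval f _ _ a (List.nodup_finRange n)]
      congr 1
      funext j
      rw [if_pos (List.mem_finRange j)]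
  have hquarter : naExpCost p c f (rrMerge l1 l0) / 4 ≤ OPTcost p c f := by
    unfold OPTcost
    apply le_csInf hne
    rintro x ⟨T, h1, h2, rfl⟩
    have := main T h1 h2
    linarith
  linarith
end

section
/- Assume unit costs. There exists a permutation τ of Fin n whose expected nonadaptive cost for evaluating the score classification function f is at most 4·OPT(f); that is, the adaptivity gap of the unit-cost unweighted stochastic score classification problem is at most 4. -/
open Finset

namespace AG
open Function

open Classical in
noncomputable def ind (P : Prop) : ℝ := if P then 1 else 0

lemma ind_nonneg (P : Prop) : 0 ≤ ind P := by
  unfold ind; split <;> norm_num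

lemma ind_le_one (P : Prop) : ind P ≤ 1 := by
  unfold ind; split <;> norm_num

lemma ind_of {P : Prop} (h : P) : ind P = 1 := by unfold ind; exact if_pos h
lemma ind_of_not {P : Prop} (h : ¬ P) : ind P = 0 := by unfold ind; exact if_neg h

lemma ind_mono {P Q : Prop} (h : P → Q) : ind P ≤ ind Q := by
  by_cases hP : P
  · rw [ind_of hP, ind_of (h hP)]
  · rw [ind_of_not hP]; exact ind_nonneg Q

variable {n : ℕ}

def ones (S : Finset (Fin n)) (a : Fin n → Bool) : ℕ :=
  (S.filter (fun k => a k = true)).card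

lemma ones_mono {S T : Finset (Fin n)} (h : S ⊆ T) (a : Fin n → Bool) :
    ones S a ≤ ones T a :=
  Finset.card_le_card (Finset.filter_subset_filter _ h)

lemma ones_le_card {S : Finset (Fin n)} (a : Fin n → Bool) : ones S a ≤ S.card :=
  Finset.card_le_card (Finset.filter_subset _ _)

lemma ones_congr {S : Finset (Fin n)} {a b : Fin n → Bool}
    (h : ∀ k ∈ S, a k = b k) : ones S a = ones S b := by
  unfold ones
  congr 1
  apply Finset.filter_congr
  intro k hk; rw [h k hk]

lemma ones_insert {S : Finset (Fin n)} {i : Fin n} (hi : i ∉ S) (a : Fin n → Bool) :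
    ones (insert i S) a = (if a i then 1 else 0) + ones S a := by
  unfold ones
  rw [Finset.filter_insert]
  split
  · rw [Finset.card_insert_of_notMem (by simp [hi])]; omega
  · simp

lemma ones_update {S : Finset (Fin n)} {i : Fin n} (hi : i ∉ S) (a : Fin n → Bool)
    (c : Bool) : ones S (Function.update a i c) = ones S a := by
  apply ones_congr
  intro k hk
  rw [Function.update_of_ne (by rintro rfl; exact hi hk)]

lemma N1_eq_ones (a : Fin n → Bool) : N1 a = ones Finset.univ a := rfl

lemma ones_flip (S : Finset (Fin n)) (a : Fin n → Bool) :
    ones S (fun k => !a k) = S.card - ones S a := by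
  unfold ones
  have h1 := Finset.card_filter_add_card_filter_not (s := S)
    (p := fun k => a k = true)
  have h2 : (S.filter (fun k => (!a k) = true))
      = (S.filter (fun k => ¬ (a k = true))) := by
    apply Finset.filter_congr; intro k _; simp
  rw [h2]; omega

lemma pr_nonneg {p : Fin n → ℝ} (hp : ∀ i, 0 < p i ∧ p i < 1) (a : Fin n → Bool) :
    0 ≤ pr p a := by
  apply Finset.prod_nonneg
  intro i _
  have := hp i
  split <;> linarith

end AG
namespace AG
variable {n : ℕ}

noncomputable def prRest (p : Fin n → ℝ) (i : Fin n) (a : Fin n → Bool) : ℝ :=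
  ∏ k ∈ Finset.univ.erase i, (if a k then p k else 1 - p k)

lemma pr_eq_factor (p : Fin n → ℝ) (i : Fin n) (a : Fin n → Bool) :
    pr p a = (if a i then p i else 1 - p i) * prRest p i a := by
  unfold pr prRest
  exact (Finset.mul_prod_erase Finset.univ _ (Finset.mem_univ i)).symm

lemma prRest_update (p : Fin n → ℝ) (i : Fin n) (a : Fin n → Bool) (c : Bool) :
    prRest p i (Function.update a i c) = prRest p i a := by
  unfold prRest
  apply Finset.prod_congr rfl
  intro k hk
  rw [Function.update_of_ne (Finset.ne_of_mem_erase hk)]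

/-- flip coordinate i -/
def flipAt (i : Fin n) : Equiv.Perm (Fin n → Bool) :=
  Function.Involutive.toPerm (fun a => Function.update a i (!a i)) (by
    intro a
    funext k
    by_cases h : k = i
    · subst h; simp
    · simp [Function.update_of_ne h])

lemma flipAt_apply (i : Fin n) (a : Fin n → Bool) :
    flipAt i a = Function.update a i (!a i) := rfl

lemma cond_split (p : Fin n → ℝ) (i : Fin n) (b : Bool) (X : (Fin n → Bool) → ℝ)
    (hX : ∀ a c, X (Function.update a i c) = X a) :
    ∑ a : Fin n → Bool, (if a i = b then pr p a * X a else 0)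
      = (if b then p i else 1 - p i) * ∑ a : Fin n → Bool, pr p a * X a := by
  classical
  -- prRest and X are invariant under flipAt i
  have hRflip : ∀ a, prRest p i (flipAt i a) = prRest p i a := fun a =>
    prRest_update p i a _
  have hXflip : ∀ a, X (flipAt i a) = X a := fun a => hX a _
  set T : ℝ := ∑ a : Fin n → Bool, (if a i = true then prRest p i a * X a else 0) with hT
  have key : ∀ b' : Bool, ∑ a : Fin n → Bool, (if a i = b' then prRest p i a * X a else 0) = T := by
    intro b'
    cases b'
    · -- reindex by flipAt i
      rw [hT, ← Equiv.sum_comp (flipAt i)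
        (fun a => if a i = true then prRest p i a * X a else 0)]
      apply Finset.sum_congr rfl
      intro a _
      have hai : (flipAt i a) i = !a i := by rw [flipAt_apply]; simp
      rw [hRflip, hXflip, hai]
      cases h : a i <;> simp [h]
    · rfl
  have hmass : ∀ b' : Bool,
      ∑ a : Fin n → Bool, (if a i = b' then pr p a * X a else 0)
        = (if b' then p i else 1 - p i) * T := by
    intro b'
    rw [← key b', Finset.mul_sum]
    apply Finset.sum_congr rfl
    intro a _
    by_cases h : a i = b'
    · rw [if_pos h, if_pos h, pr_eq_factor p i a, h]
      ring
    · rw [if_neg h, if_neg h, mul_zero]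
  have htot : ∑ a : Fin n → Bool, pr p a * X a = T := by
    have split : ∀ a : Fin n → Bool, pr p a * X a
        = (if a i = true then pr p a * X a else 0)
          + (if a i = false then pr p a * X a else 0) := by
      intro a; cases h : a i <;> simp [h]
    rw [Finset.sum_congr rfl (fun a _ => split a), Finset.sum_add_distrib,
      hmass true, hmass false]
    simp; ring
  rw [hmass b, htot]

end AG
namespace AG
variable {n : ℕ}

noncomputable def NPr (p : Fin n → ℝ) (S : Finset (Fin n)) (w : (Fin n → Bool) → ℕ) : ℝ :=
  ∑ a : Fin n → Bool, pr p a * ind (w a ≤ ones S a)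

def W1 (V : Finset (Fin n)) (w : (Fin n → Bool) → ℕ) : Prop :=
  ∀ a b : Fin n → Bool, (∀ k, k ∉ V → a k = b k) → ones V a = ones V b → w a = w b

lemma NPr_mono_set {p : Fin n → ℝ} (hp : ∀ i, 0 < p i ∧ p i < 1)
    {S T : Finset (Fin n)} (h : S ⊆ T) (w : (Fin n → Bool) → ℕ) :
    NPr p S w ≤ NPr p T w := by
  apply Finset.sum_le_sum
  intro a _
  exact mul_le_mul_of_nonneg_left
    (ind_mono (fun hle => le_trans hle (ones_mono h a))) (pr_nonneg hp a)

lemma ones_le_of_pointwise {S : Finset (Fin n)} {a b : Fin n → Bool}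
    (h : ∀ k ∈ S, b k = true → a k = true) : ones S b ≤ ones S a := by
  apply Finset.card_le_card
  intro k hk
  rw [Finset.mem_filter] at hk ⊢
  exact ⟨hk.1, h k hk.1 hk.2⟩

lemma ones_swap_set (i j : Fin n) (S' S : Finset (Fin n))
    (h : ∀ k, k ∈ S' ↔ Equiv.swap i j k ∈ S) (a : Fin n → Bool) :
    ones S' (fun k => a (Equiv.swap i j k)) = ones S a := by
  unfold ones
  apply Finset.card_bij' (fun k _ => Equiv.swap i j k) (fun k _ => Equiv.swap i j k)
  · intro k hk
    rw [Finset.mem_filter] at hk ⊢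
    exact ⟨(h k).1 hk.1, hk.2⟩
  · intro k hk
    rw [Finset.mem_filter] at hk ⊢
    constructor
    · rw [h _, Equiv.swap_apply_self]; exact hk.1
    · simp only [Equiv.swap_apply_self]; exact hk.2
  · intro k _; exact Equiv.swap_apply_self i j k
  · intro k _; exact Equiv.swap_apply_self i j k

/-- value-swap of two coordinates, as a permutation of assignments -/
def swapVals (i j : Fin n) : Equiv.Perm (Fin n → Bool) :=
  Function.Involutive.toPerm (fun a => fun k => a (Equiv.swap i j k)) (by
    intro a; funext k; simp [Equiv.swap_apply_self])

lemma swapVals_apply (i j : Fin n) (a : Fin n → Bool) (k : Fin n) :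
    swapVals i j a k = a (Equiv.swap i j k) := rfl

noncomputable def prRest2 (p : Fin n → ℝ) (i j : Fin n) (a : Fin n → Bool) : ℝ :=
  ∏ k ∈ (Finset.univ.erase i).erase j, (if a k then p k else 1 - p k)

lemma prRest2_nonneg {p : Fin n → ℝ} (hp : ∀ i, 0 < p i ∧ p i < 1)
    (i j : Fin n) (a : Fin n → Bool) : 0 ≤ prRest2 p i j a := by
  apply Finset.prod_nonneg
  intro k _
  have := hp k
  split <;> linarith

lemma pr_eq_factor2 (p : Fin n → ℝ) {i j : Fin n} (hij : i ≠ j) (a : Fin n → Bool) :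
    pr p a = (if a i then p i else 1 - p i) * ((if a j then p j else 1 - p j)
      * prRest2 p i j a) := by
  unfold pr prRest2
  rw [← Finset.mul_prod_erase Finset.univ _ (Finset.mem_univ i),
    ← Finset.mul_prod_erase (Finset.univ.erase i) _
      (Finset.mem_erase.mpr ⟨Ne.symm hij, Finset.mem_univ j⟩)]

lemma prRest2_swap (p : Fin n → ℝ) (i j : Fin n) (a : Fin n → Bool) :
    prRest2 p i j (swapVals i j a) = prRest2 p i j a := by
  unfold prRest2
  apply Finset.prod_congr rfl
  intro k hk
  have hki : k ≠ i := Finset.ne_of_mem_erase (Finset.mem_of_mem_erase hk)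
  have hkj : k ≠ j := Finset.ne_of_mem_erase hk
  rw [swapVals_apply, Equiv.swap_apply_of_ne_of_ne hki hkj]

lemma swap_le (p : Fin n → ℝ) (hp : ∀ i, 0 < p i ∧ p i < 1)
    (V : Finset (Fin n)) (w : (Fin n → Bool) → ℕ) (hw : W1 V w)
    (i j : Fin n) (hij : i ≠ j) (hiV : i ∈ V) (hjV : j ∈ V) (hpij : p i ≤ p j)
    (S : Finset (Fin n)) (hiS : i ∈ S) (hjS : j ∉ S) :
    NPr p S w ≤ NPr p (insert j (S.erase i)) w := by
  classical
  set σ := Equiv.swap i j with hσ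
  set e := swapVals i j with he
  set S' := insert j (S.erase i) with hS'
  -- membership correspondence
  have hmemS : ∀ k, k ∈ S' ↔ σ k ∈ S := by
    intro k
    by_cases hkj : k = j
    · subst hkj
      simp [hS', hσ, Equiv.swap_apply_right, hiS]
    · by_cases hki : k = i
      · subst hki
        simp [hS', hσ, Equiv.swap_apply_left, hjS, hij, Ne.symm hij]
      · rw [hσ, Equiv.swap_apply_of_ne_of_ne hki hkj]
        simp [hS', hkj, hki]
  have hmemV : ∀ k, k ∈ V ↔ σ k ∈ V := by
    intro k
    by_cases hkj : k = j
    · subst hkj; simp [hσ, Equiv.swap_apply_right, hiV, hjV]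
    · by_cases hki : k = i
      · subst hki; simp [hσ, Equiv.swap_apply_left, hiV, hjV]
      · rw [hσ, Equiv.swap_apply_of_ne_of_ne hki hkj]
  have honesS' : ∀ a, ones S' (e a) = ones S a := fun a =>
    ones_swap_set i j S' S hmemS a
  have honesV : ∀ a, ones V (e a) = ones V a := fun a =>
    ones_swap_set i j V V hmemV a
  have hwflip : ∀ a, w (e a) = w a := by
    intro a
    apply hw
    · intro k hk
      rw [swapVals_apply, Equiv.swap_apply_of_ne_of_ne]
      · rintro rfl; exact hk hiV
      · rintro rfl; exact hk hjV
    · exact honesV a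
  have hee : ∀ a, e (e a) = a := by
    intro a
    funext k
    rw [he]
    show a (Equiv.swap i j (Equiv.swap i j k)) = a k
    rw [Equiv.swap_apply_self]
  -- Step A
  have stepA : NPr p S' w = ∑ a : Fin n → Bool, pr p (e a) * ind (w a ≤ ones S a) := by
    unfold NPr
    rw [← Equiv.sum_comp e (fun a => pr p a * ind (w a ≤ ones S' a))]
    apply Finset.sum_congr rfl
    intro a _
    rw [hwflip, honesS']
  -- difference
  set D : (Fin n → Bool) → ℝ := fun a => (pr p (e a) - pr p a) * ind (w a ≤ ones S a)
    with hD
  have stepB : NPr p S' w - NPr p S w = ∑ a : Fin n → Bool, D a := by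
    rw [stepA]
    unfold NPr
    rw [← Finset.sum_sub_distrib]
    apply Finset.sum_congr rfl
    intro a _
    rw [hD]; ring
  -- symmetrize
  have stepC : (2:ℝ) * ∑ a : Fin n → Bool, D a
      = ∑ a : Fin n → Bool, (D a + D (e a)) := by
    rw [Finset.sum_add_distrib, Equiv.sum_comp e D, two_mul]
  -- pointwise nonneg
  have stepD : ∀ a : Fin n → Bool, 0 ≤ D a + D (e a) := by
    intro a
    have hDe : D (e a) = (pr p a - pr p (e a)) * ind (w a ≤ ones S (e a)) := by
      rw [hD]
      simp only [hee a, hwflip a]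
    have combined : D a + D (e a)
        = (pr p (e a) - pr p a) * (ind (w a ≤ ones S a) - ind (w a ≤ ones S (e a))) := by
      rw [hDe, hD]; ring
    by_cases hsame : a i = a j
    · have heqa : e a = a := by
        funext k
        rw [he, swapVals_apply]
        by_cases hki : k = i
        · subst hki; rw [Equiv.swap_apply_left, ← hsame]
        · by_cases hkj : k = j
          · subst hkj; rw [Equiv.swap_apply_right, hsame]
          · rw [Equiv.swap_apply_of_ne_of_ne hki hkj]
      rw [combined, heqa, sub_self, zero_mul]
    -- values of e a at i, j
    · have heai : e a i = a j := by
        rw [he, swapVals_apply, Equiv.swap_apply_left]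
      have heaj : e a j = a i := by
        rw [he, swapVals_apply, Equiv.swap_apply_right]
      have heak : ∀ k, k ≠ i → k ≠ j → e a k = a k := by
        intro k h1 h2; rw [he, swapVals_apply, Equiv.swap_apply_of_ne_of_ne h1 h2]
      have hfac := pr_eq_factor2 p hij a
      have hface : pr p (e a) = (if a j then p i else 1 - p i)
          * ((if a i then p j else 1 - p j) * prRest2 p i j a) := by
        rw [pr_eq_factor2 p hij (e a), heai, heaj, prRest2_swap]
      have hR := prRest2_nonneg hp i j a
      have hpi := hp i
      have hpj := hp j
      rw [combined]
      cases hai : a i <;> cases haj : a j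
      · exact absurd (hai.trans haj.symm) hsame
      · -- a i = false, a j = true : pr(e a) ≤ pr a, ones S (e a) ≥ ones S a
        have h1 : pr p (e a) - pr p a ≤ 0 := by
          rw [hfac, hface, hai, haj]
          norm_num
          nlinarith [mul_nonneg (sub_nonneg.2 hpij) hR]
        have h2 : ones S a ≤ ones S (e a) := by
          apply ones_le_of_pointwise
          intro k hk hak
          by_cases hki : k = i
          · subst hki; rw [hai] at hak; exact absurd hak (by simp)
          · have hkj : k ≠ j := fun h => hjS (h ▸ hk)
            rw [heak k hki hkj]; exact hak
        have h3 : ind (w a ≤ ones S a) - ind (w a ≤ ones S (e a)) ≤ 0 := by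
          have := ind_mono (fun h : w a ≤ ones S a => le_trans h h2)
          linarith
        nlinarith [h1, h3]
      · -- a i = true, a j = false : pr(e a) ≥ pr a, ones S (e a) ≤ ones S a
        have h1 : 0 ≤ pr p (e a) - pr p a := by
          rw [hfac, hface, hai, haj]
          norm_num
          nlinarith [mul_nonneg (sub_nonneg.2 hpij) hR]
        have h2 : ones S (e a) ≤ ones S a := by
          apply ones_le_of_pointwise
          intro k hk hak
          by_cases hki : k = i
          · subst hki; exact hai
          · have hkj : k ≠ j := fun h => hjS (h ▸ hk)
            rw [← heak k hki hkj]; exact hak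
        have h3 : 0 ≤ ind (w a ≤ ones S a) - ind (w a ≤ ones S (e a)) := by
          have := ind_mono (fun h : w a ≤ ones S (e a) => le_trans h h2)
          linarith
        exact mul_nonneg h1 h3
      · exact absurd (hai.trans haj.symm) hsame
  have : 0 ≤ ∑ a : Fin n → Bool, D a := by
    have h2 : 0 ≤ (2:ℝ) * ∑ a : Fin n → Bool, D a := by
      rw [stepC]
      exact Finset.sum_nonneg (fun a _ => stepD a)
    linarith
  linarith [stepB]

end AG
namespace AG
variable {n : ℕ}

def rel (p : Fin n → ℝ) : Fin n → Fin n → Prop := fun i j => p j ≤ p i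

open Classical in
noncomputable def sList (p : Fin n → ℝ) : List (Fin n) :=
  List.insertionSort (rel p) (List.finRange n)

open Classical in
lemma sList_sorted (p : Fin n → ℝ) : List.Pairwise (rel p) (sList p) := by
  haveI : IsTotal (Fin n) (rel p) := ⟨fun i j => le_total (p j) (p i)⟩
  haveI : IsTrans (Fin n) (rel p) := ⟨fun i j k h1 h2 => le_trans h2 h1⟩
  exact List.pairwise_insertionSort (rel p) (List.finRange n)

open Classical in
lemma sList_perm (p : Fin n → ℝ) : List.Perm (sList p) (List.finRange n) :=
  List.perm_insertionSort (rel p) (List.finRange n)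

lemma sList_nodup (p : Fin n → ℝ) : (sList p).Nodup :=
  (sList_perm p).nodup_iff.mpr (List.nodup_finRange n)

lemma sList_length (p : Fin n → ℝ) : (sList p).length = n := by
  rw [(sList_perm p).length_eq, List.length_finRange]

lemma sList_mem (p : Fin n → ℝ) (i : Fin n) : i ∈ sList p :=
  ((sList_perm p).mem_iff).mpr (List.mem_finRange i)

-- reverse is sorted for the complementary probabilities
lemma sList_reverse_sorted (p : Fin n → ℝ) {l : List (Fin n)}
    (hl : List.Pairwise (rel p) l) :
    List.Pairwise (rel (fun i => 1 - p i)) l.reverse := by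
  rw [List.pairwise_reverse]
  apply List.Pairwise.imp _ hl
  intro a b hab
  unfold rel at *
  beta_reduce
  linarith

section MaxSet
variable (ℓ : List (Fin n))

noncomputable def maxSet (V : Finset (Fin n)) (k : ℕ) : Finset (Fin n) :=
  ((ℓ.filter (fun x => decide (x ∈ V))).take k).toFinset

lemma maxSet_subset (V : Finset (Fin n)) (k : ℕ) : maxSet ℓ V k ⊆ V := by
  intro x hx
  rw [maxSet, List.mem_toFinset] at hx
  have := List.mem_of_mem_take hx
  have := List.of_mem_filter this
  simpa using this

lemma maxSet_mono (V : Finset (Fin n)) {k k' : ℕ} (h : k ≤ k') :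
    maxSet ℓ V k ⊆ maxSet ℓ V k' := by
  intro x hx
  rw [maxSet, List.mem_toFinset] at hx ⊢
  set lf := ℓ.filter (fun x => decide (x ∈ V))
  have : lf.take k = (lf.take k').take k := by
    rw [List.take_take, min_eq_left h]
  rw [this] at hx
  exact List.mem_of_mem_take hx

lemma maxSet_card_le (V : Finset (Fin n)) (k : ℕ) : (maxSet ℓ V k).card ≤ k := by
  refine le_trans (List.toFinset_card_le _) ?_
  rw [List.length_take]
  omega

lemma filter_list_props (hnd : ℓ.Nodup) (hfull : ∀ i, i ∈ ℓ) (V : Finset (Fin n)) :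
    (ℓ.filter (fun x => decide (x ∈ V))).length = V.card := by
  have hnd' : (ℓ.filter (fun x => decide (x ∈ V))).Nodup := hnd.filter _
  rw [← List.toFinset_card_of_nodup hnd']
  congr 1
  ext x
  simp [List.mem_filter, hfull x]

lemma maxSet_card (hnd : ℓ.Nodup) (hfull : ∀ i, i ∈ ℓ) (V : Finset (Fin n)) (k : ℕ)
    (hk : k ≤ V.card) : (maxSet ℓ V k).card = k := by
  rw [maxSet, List.toFinset_card_of_nodup ((hnd.filter _).sublist (List.take_sublist _ _)),
    List.length_take, filter_list_props ℓ hnd hfull, min_eq_left hk]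

lemma maxSet_dom (p : Fin n → ℝ) (hs : List.Pairwise (rel p) ℓ)
    (V : Finset (Fin n)) (k : ℕ) {i j : Fin n}
    (hj : j ∈ maxSet ℓ V k) (hiV : i ∈ V) (hi : i ∉ maxSet ℓ V k)
    (hiℓ : i ∈ ℓ) : p i ≤ p j := by
  set lf := ℓ.filter (fun x => decide (x ∈ V)) with hlf
  have hslf : List.Pairwise (rel p) lf := List.Pairwise.sublist (List.filter_sublist (l := ℓ)) hs
  have hilf : i ∈ lf := by
    rw [hlf, List.mem_filter]
    exact ⟨hiℓ, by simpa using hiV⟩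
  have hidrop : i ∈ lf.drop k := by
    have := (List.take_append_drop k lf) ▸ hilf
    rcases List.mem_append.mp this with h | h
    · exact absurd (List.mem_toFinset.mpr h) hi
    · exact h
  have hjtake : j ∈ lf.take k := List.mem_toFinset.mp hj
  have := (List.pairwise_append (l₁ := lf.take k) (l₂ := lf.drop k)
    (R := rel p)).mp (by rw [List.take_append_drop]; exact hslf)
  exact this.2.2 j hjtake i hidrop

lemma greedy_aux (p : Fin n → ℝ) (hp : ∀ i, 0 < p i ∧ p i < 1)
    (hs : List.Pairwise (rel p) ℓ) (hnd : ℓ.Nodup) (hfull : ∀ i, i ∈ ℓ)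
    (V : Finset (Fin n)) (w : (Fin n → Bool) → ℕ) (hw : W1 V w) :
    ∀ d (S : Finset (Fin n)), S ⊆ V → (S \ maxSet ℓ V S.card).card ≤ d →
      NPr p S w ≤ NPr p (maxSet ℓ V S.card) w := by
  intro d
  induction d with
  | zero =>
    intro S hSV hd
    have hsub : S ⊆ maxSet ℓ V S.card := by
      rw [← Finset.sdiff_eq_empty_iff_subset]
      exact Finset.card_eq_zero.mp (Nat.le_zero.mp hd)
    have heq := Finset.eq_of_subset_of_card_le hsub (maxSet_card_le ℓ V S.card)
    exact le_of_eq (by rw [← heq])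
  | succ d ih =>
    intro S hSV hd
    set M := maxSet ℓ V S.card with hM
    by_cases h0 : (S \ M).card = 0
    · have hsub : S ⊆ M := by
        rw [← Finset.sdiff_eq_empty_iff_subset]
        exact Finset.card_eq_zero.mp h0
      have heq := Finset.eq_of_subset_of_card_le hsub (maxSet_card_le ℓ V S.card)
      exact le_of_eq (by rw [← heq])
    · obtain ⟨i, hi⟩ := Finset.card_pos.mp (Nat.pos_of_ne_zero h0)
      have hiS : i ∈ S := (Finset.mem_sdiff.mp hi).1
      have hiM : i ∉ M := (Finset.mem_sdiff.mp hi).2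
      have hMcard : M.card = S.card :=
        maxSet_card ℓ hnd hfull V S.card (Finset.card_le_card hSV)
      have hMS : (M \ S).Nonempty := by
        by_contra hne
        rw [Finset.not_nonempty_iff_eq_empty, Finset.sdiff_eq_empty_iff_subset] at hne
        have := Finset.eq_of_subset_of_card_le hne (le_of_eq hMcard.symm)
        rw [← this] at hi
        exact hiM (Finset.mem_sdiff.mp hi).1
      obtain ⟨j, hj⟩ := hMS
      have hjM : j ∈ M := (Finset.mem_sdiff.mp hj).1
      have hjS : j ∉ S := (Finset.mem_sdiff.mp hj).2
      have hij : i ≠ j := fun h => hiM (h ▸ hjM)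
      have hiV : i ∈ V := hSV hiS
      have hjV : j ∈ V := maxSet_subset ℓ V S.card hjM
      have hpij : p i ≤ p j := maxSet_dom ℓ p hs V S.card hjM hiV hiM (hfull i)
      have step := swap_le p hp V w hw i j hij hiV hjV hpij S hiS hjS
      set S' := insert j (S.erase i) with hS'
      have hca : S'.card = S.card := by
        rw [hS', Finset.card_insert_of_notMem (fun h => hjS (Finset.mem_of_mem_erase h)),
          Finset.card_erase_of_mem hiS]
        have : 1 ≤ S.card := Finset.card_pos.mpr ⟨i, hiS⟩
        omega
      have hS'V : S' ⊆ V := by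
        rw [hS']
        intro x hx
        rcases Finset.mem_insert.mp hx with rfl | hx
        · exact hjV
        · exact hSV (Finset.mem_of_mem_erase hx)
      have hdiff : S' \ M ⊆ (S \ M).erase i := by
        intro x hx
        rw [Finset.mem_sdiff] at hx
        rcases Finset.mem_insert.mp hx.1 with rfl | hx1
        · exact absurd hjM hx.2
        · rw [Finset.mem_erase]
          exact ⟨Finset.ne_of_mem_erase hx1, Finset.mem_sdiff.mpr
            ⟨Finset.mem_of_mem_erase hx1, hx.2⟩⟩
      have hdcard : (S' \ M).card ≤ d := by
        have h1 := Finset.card_le_card hdiff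
        have h2 := Finset.card_erase_of_mem hi
        omega
      have := ih S' hS'V (by rw [hca]; exact hdcard)
      rw [hca] at this
      exact le_trans step this

lemma greedy (p : Fin n → ℝ) (hp : ∀ i, 0 < p i ∧ p i < 1)
    (hs : List.Pairwise (rel p) ℓ) (hnd : ℓ.Nodup) (hfull : ∀ i, i ∈ ℓ)
    (V : Finset (Fin n)) (w : (Fin n → Bool) → ℕ) (hw : W1 V w)
    (S : Finset (Fin n)) (hSV : S ⊆ V) (k : ℕ) (hk : S.card ≤ k) :
    NPr p S w ≤ NPr p (maxSet ℓ V k) w :=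
  le_trans (greedy_aux ℓ p hp hs hnd hfull V w hw _ S hSV (le_refl _))
    (NPr_mono_set hp (maxSet_mono ℓ V hk) w)

end MaxSet
end AG
namespace AG
open DTree
variable {n : ℕ}

lemma ind_congr {P Q : Prop} (h : P ↔ Q) : ind P = ind Q := by
  by_cases hP : P
  · rw [ind_of hP, ind_of (h.mp hP)]
  · rw [ind_of_not hP, ind_of_not (fun hQ => hP (h.mpr hQ))]

lemma path_avoid {T : DTree n} : ∀ {used : Finset (Fin n)}, T.Proper used →
    ∀ a k, k ∈ T.path a → k ∉ used := by
  induction T with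
  | leaf v => intro used _ a k hk; simp [DTree.path] at hk
  | node i t0 t1 ih0 ih1 =>
    intro used hT a k hk
    simp only [DTree.Proper] at hT
    obtain ⟨hi, h0, h1⟩ := hT
    simp only [DTree.path, List.mem_cons] at hk
    rcases hk with rfl | hk
    · exact hi
    · intro hku
      by_cases hai : a i
      · rw [if_pos hai] at hk
        exact ih1 h1 a k hk (Finset.mem_insert_of_mem hku)
      · rw [if_neg hai] at hk
        exact ih0 h0 a k hk (Finset.mem_insert_of_mem hku)

lemma path_nodup {T : DTree n} : ∀ {used : Finset (Fin n)}, T.Proper used →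
    ∀ a, (T.path a).Nodup := by
  induction T with
  | leaf v => intro used _ a; simp [DTree.path]
  | node i t0 t1 ih0 ih1 =>
    intro used hT a
    simp only [DTree.Proper] at hT
    obtain ⟨hi, h0, h1⟩ := hT
    simp only [DTree.path]
    by_cases hai : a i
    · rw [if_pos hai]
      refine List.nodup_cons.mpr ⟨?_, ih1 h1 a⟩
      intro hmem
      exact path_avoid h1 a i hmem (Finset.mem_insert_self i used)
    · rw [if_neg hai]
      refine List.nodup_cons.mpr ⟨?_, ih0 h0 a⟩
      intro hmem
      exact path_avoid h0 a i hmem (Finset.mem_insert_self i used)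

lemma path_update {T : DTree n} : ∀ {used : Finset (Fin n)}, T.Proper used →
    ∀ a k c, k ∈ used → T.path (Function.update a k c) = T.path a := by
  induction T with
  | leaf v => intro used _ a k c _; rfl
  | node i t0 t1 ih0 ih1 =>
    intro used hT a k c hku
    simp only [DTree.Proper] at hT
    obtain ⟨hi, h0, h1⟩ := hT
    have hki : i ≠ k := fun h => hi (h ▸ hku)
    simp only [DTree.path, Function.update_of_ne hki]
    by_cases hai : a i
    · rw [if_pos hai, if_pos hai, ih1 h1 a k c (Finset.mem_insert_of_mem hku)]
    · rw [if_neg hai, if_neg hai, ih0 h0 a k c (Finset.mem_insert_of_mem hku)]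

lemma eval_agree {T : DTree n} : ∀ a b : Fin n → Bool,
    (∀ k ∈ T.path a, b k = a k) → T.eval b = T.eval a := by
  induction T with
  | leaf v => intro a b _; rfl
  | node i t0 t1 ih0 ih1 =>
    intro a b hab
    have hbi : b i = a i := hab i (by simp [DTree.path])
    simp only [DTree.eval, hbi]
    by_cases hai : a i
    · rw [if_pos hai, if_pos hai]
      exact ih1 a b (fun k hk => hab k (by simp [DTree.path, if_pos hai, hk]))
    · rw [if_neg hai, if_neg hai]
      exact ih0 a b (fun k hk => hab k (by simp [DTree.path, if_neg hai, hk]))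

lemma cost_eq_path_length {c : Fin n → ℝ} (hc : ∀ i, c i = 1) (T : DTree n)
    (a : Fin n → Bool) : T.cost c a = ((T.path a).length : ℝ) := by
  induction T with
  | leaf v => simp [DTree.cost, DTree.path]
  | node i t0 t1 ih0 ih1 =>
    simp only [DTree.cost, DTree.path, hc i]
    by_cases hai : a i
    · rw [if_pos hai, if_pos hai, ih1]
      push_cast [List.length_cons]
      ring
    · rw [if_neg hai, if_neg hai, ih0]
      push_cast [List.length_cons]
      ring

lemma update_false_eq {a : Fin n → Bool} {i : Fin n} (hai : a i = false) :
    Function.update a i false = a := by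
  funext k
  by_cases hk : k = i
  · subst hk; simp [hai]
  · simp [Function.update_of_ne hk]

lemma update_true_eq {a : Fin n → Bool} {i : Fin n} (hai : a i = true) :
    Function.update a i true = a := by
  funext k
  by_cases hk : k = i
  · subst hk; simp [hai]
  · simp [Function.update_of_ne hk]

/-- Main dominance induction. -/
lemma tree_ind (p : Fin n → ℝ) (hp : ∀ i, 0 < p i ∧ p i < 1)
    (ℓ : List (Fin n)) (hs : List.Pairwise (rel p) ℓ) (hnd : ℓ.Nodup)
    (hfull : ∀ i, i ∈ ℓ) (T : DTree n) :
    ∀ (used : Finset (Fin n)), T.Proper used → ∀ (m : ℕ) (w : (Fin n → Bool) → ℕ),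
      W1 usedᶜ w →
    (∑ a : Fin n → Bool, pr p a * ind (w a ≤ ones ((T.path a).take m).toFinset a))
      ≤ NPr p (maxSet ℓ usedᶜ m) w := by
  induction T with
  | leaf v =>
    intro used _ m w _
    calc ∑ a : Fin n → Bool, pr p a * ind (w a ≤ ones (((DTree.leaf v : DTree n).path a).take m).toFinset a)
        = NPr p (∅ : Finset (Fin n)) w := by
          apply Finset.sum_congr rfl
          intro a _
          have : ((DTree.leaf v : DTree n).path a) = [] := rfl
          rw [this, List.take_nil, List.toFinset_nil]
      _ ≤ NPr p (maxSet ℓ usedᶜ m) w :=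
          NPr_mono_set hp (Finset.empty_subset _) w
  | node i t0 t1 ih0 ih1 =>
    intro used hT m w hw
    simp only [DTree.Proper] at hT
    obtain ⟨hi, h0, h1⟩ := hT
    match m with
    | 0 =>
      calc ∑ a : Fin n → Bool, pr p a * ind (w a ≤ ones (((DTree.node i t0 t1).path a).take 0).toFinset a)
          = NPr p (∅ : Finset (Fin n)) w := by
            apply Finset.sum_congr rfl
            intro a _
            rw [List.take_zero, List.toFinset_nil]
        _ ≤ NPr p (maxSet ℓ usedᶜ 0) w :=
            NPr_mono_set hp (Finset.empty_subset _) w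
    | m + 1 =>
      set used' := insert i used with hused'
      have hiu : i ∈ usedᶜ := Finset.mem_compl.mpr hi
      have hcompl : used'ᶜ = usedᶜ.erase i := by
        rw [hused', Finset.compl_insert]
      have hicompl' : i ∉ used'ᶜ := by
        rw [hcompl]; exact Finset.notMem_erase i _
      set w1 : (Fin n → Bool) → ℕ := fun a => w (Function.update a i true) - 1 with hw1
      set w0 : (Fin n → Bool) → ℕ := fun a => w (Function.update a i false) with hw0
      have hiP : ∀ (tb : DTree n), tb.Proper used' → ∀ a,
          i ∉ ((tb.path a).take m).toFinset := by
        intro tb htb a hmem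
        exact path_avoid htb a i (List.mem_of_mem_take (List.mem_toFinset.mp hmem))
          (Finset.mem_insert_self i used)
      -- invariance under update at i
      have hYinv : ∀ (tb : DTree n), tb.Proper used' → ∀ (wB : (Fin n → Bool) → ℕ),
          (∀ a c, wB (Function.update a i c) = wB a) → ∀ a c,
          ind (wB (Function.update a i c) ≤ ones ((tb.path (Function.update a i c)).take m).toFinset (Function.update a i c))
            = ind (wB a ≤ ones ((tb.path a).take m).toFinset a) := by
        intro tb htb wB hwB a c
        rw [path_update htb a i c (Finset.mem_insert_self i used),
          ones_update (hiP tb htb a), hwB]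
      have hw1inv : ∀ a c, w1 (Function.update a i c) = w1 a := by
        intro a c; rw [hw1]; simp only [Function.update_idem]
      have hw0inv : ∀ a c, w0 (Function.update a i c) = w0 a := by
        intro a c; rw [hw0]; simp only [Function.update_idem]
      -- W1 for branch weights
      have hWbgen : ∀ (b : Bool) (wB : (Fin n → Bool) → ℕ),
          (∀ a, wB a = w (Function.update a i b) - (if b then 1 else 0)) →
          W1 used'ᶜ wB := by
        intro b wB hdef a a' hout hones
        have key : w (Function.update a i b) = w (Function.update a' i b) := by
          apply hw
          · intro k hk
            rw [Finset.notMem_compl] at hk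
            have hki : k ≠ i := fun h => hi (h ▸ hk)
            rw [Function.update_of_ne hki, Function.update_of_ne hki]
            apply hout
            rw [hcompl]
            intro hmem
            exact (Finset.mem_compl.mp (Finset.mem_of_mem_erase hmem)) hk
          · have hins : usedᶜ = insert i used'ᶜ := by
              rw [hcompl, Finset.insert_erase hiu]
            rw [hins, ones_insert hicompl', ones_insert hicompl',
              Function.update_self, Function.update_self,
              ones_update hicompl', ones_update hicompl', hones]
        rw [hdef a, hdef a', key]
      have hW1' : W1 used'ᶜ w1 := hWbgen true w1 (fun a => by rw [hw1]; simp)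
      have hW0' : W1 used'ᶜ w0 := hWbgen false w0 (fun a => by rw [hw0]; simp)
      have hsel : ∀ a : Fin n → Bool,
          ((DTree.node i t0 t1).path a).take (m+1)
            = i :: ((if a i then t1.path a else t0.path a).take m) := by
        intro a
        simp [DTree.path, List.take_cons]
      set M' := maxSet ℓ used'ᶜ m with hM'
      have hM'sub : M' ⊆ used'ᶜ := maxSet_subset ℓ used'ᶜ m
      have hiM' : i ∉ M' := fun h => hicompl' (hM'sub h)
      -- pointwise split
      have split : ∀ a : Fin n → Bool,
          pr p a * ind (w a ≤ ones (((DTree.node i t0 t1).path a).take (m+1)).toFinset a)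
          = (if a i = true then pr p a * ind (w1 a ≤ ones ((t1.path a).take m).toFinset a) else 0)
            + (if a i = false then pr p a * ind (w0 a ≤ ones ((t0.path a).take m).toFinset a) else 0) := by
        intro a
        cases hai : a i
        · rw [if_neg Bool.false_ne_true, if_pos rfl, zero_add]
          congr 1
          rw [hsel a, hai, if_neg Bool.false_ne_true, List.toFinset_cons,
            ones_insert (hiP t0 h0 a), hai, if_neg Bool.false_ne_true, Nat.zero_add]
          apply ind_congr
          simp only [hw0]
          rw [update_false_eq hai]
        · rw [if_pos rfl, if_neg (by simp), add_zero]
          congr 1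
          rw [hsel a, hai, if_pos rfl, List.toFinset_cons,
            ones_insert (hiP t1 h1 a), hai, if_pos rfl]
          apply ind_congr
          simp only [hw1]
          rw [update_true_eq hai]
          constructor
          · intro h; omega
          · intro h; omega
      -- conditioning
      have condY1 : ∑ a : Fin n → Bool,
          (if a i = true then pr p a * ind (w1 a ≤ ones ((t1.path a).take m).toFinset a) else 0)
          = p i * ∑ a : Fin n → Bool, pr p a * ind (w1 a ≤ ones ((t1.path a).take m).toFinset a) := by
        have := cond_split p i true
          (fun a => ind (w1 a ≤ ones ((t1.path a).take m).toFinset a))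
          (fun a c => hYinv t1 h1 w1 hw1inv a c)
        simpa using this
      have condY0 : ∑ a : Fin n → Bool,
          (if a i = false then pr p a * ind (w0 a ≤ ones ((t0.path a).take m).toFinset a) else 0)
          = (1 - p i) * ∑ a : Fin n → Bool, pr p a * ind (w0 a ≤ ones ((t0.path a).take m).toFinset a) := by
        have := cond_split p i false
          (fun a => ind (w0 a ≤ ones ((t0.path a).take m).toFinset a))
          (fun a c => hYinv t0 h0 w0 hw0inv a c)
        simpa using this
      have ih1' := ih1 used' h1 m w1 hW1'
      have ih0' := ih0 used' h0 m w0 hW0'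
      have condZ1 : p i * NPr p M' w1
          = ∑ a : Fin n → Bool, (if a i = true then pr p a * ind (w1 a ≤ ones M' a) else 0) := by
        have := cond_split p i true (fun a => ind (w1 a ≤ ones M' a))
          (fun a c => by
            show ind (w1 (Function.update a i c) ≤ ones M' (Function.update a i c))
              = ind (w1 a ≤ ones M' a)
            rw [hw1inv, ones_update hiM'])
        rw [NPr]
        simpa using this.symm
      have condZ0 : (1 - p i) * NPr p M' w0
          = ∑ a : Fin n → Bool, (if a i = false then pr p a * ind (w0 a ≤ ones M' a) else 0) := by
        have := cond_split p i false (fun a => ind (w0 a ≤ ones M' a))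
          (fun a c => by
            show ind (w0 (Function.update a i c) ≤ ones M' (Function.update a i c))
              = ind (w0 a ≤ ones M' a)
            rw [hw0inv, ones_update hiM'])
        rw [NPr]
        simpa using this.symm
      have recombine :
          (∑ a : Fin n → Bool, (if a i = true then pr p a * ind (w1 a ≤ ones M' a) else 0))
          + (∑ a : Fin n → Bool, (if a i = false then pr p a * ind (w0 a ≤ ones M' a) else 0))
            = NPr p (insert i M') w := by
        rw [NPr, ← Finset.sum_add_distrib]
        apply Finset.sum_congr rfl
        intro a _
        cases hai : a i
        · rw [if_neg Bool.false_ne_true, if_pos rfl, zero_add]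
          congr 1
          rw [ones_insert hiM', hai, if_neg Bool.false_ne_true, Nat.zero_add]
          apply ind_congr
          simp only [hw0]
          rw [update_false_eq hai]
        · rw [if_pos rfl, if_neg (by simp), add_zero]
          congr 1
          rw [ones_insert hiM', hai, if_pos rfl]
          apply ind_congr
          simp only [hw1]
          rw [update_true_eq hai]
          constructor
          · intro h; omega
          · intro h; omega
      have hfin : NPr p (insert i M') w ≤ NPr p (maxSet ℓ usedᶜ (m+1)) w := by
        apply greedy ℓ p hp hs hnd hfull usedᶜ w hw
        · intro x hx
          rcases Finset.mem_insert.mp hx with rfl | hx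
          · exact hiu
          · rw [hcompl] at hM'sub
            exact Finset.mem_of_mem_erase (hM'sub hx)
        · calc (insert i M').card ≤ M'.card + 1 := Finset.card_insert_le i M'
            _ ≤ m + 1 := by
              have hcard := maxSet_card_le ℓ used'ᶜ m
              rw [← hM'] at hcard
              omega
      have hpi := hp i
      calc ∑ a : Fin n → Bool, pr p a * ind (w a ≤ ones (((DTree.node i t0 t1).path a).take (m+1)).toFinset a)
          = (∑ a : Fin n → Bool, (if a i = true then pr p a * ind (w1 a ≤ ones ((t1.path a).take m).toFinset a) else 0))
            + (∑ a : Fin n → Bool, (if a i = false then pr p a * ind (w0 a ≤ ones ((t0.path a).take m).toFinset a) else 0)) := by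
            rw [← Finset.sum_add_distrib]
            exact Finset.sum_congr rfl (fun a _ => split a)
        _ ≤ p i * NPr p M' w1 + (1 - p i) * NPr p M' w0 := by
            rw [condY1, condY0]
            apply add_le_add
            · exact mul_le_mul_of_nonneg_left ih1' (le_of_lt hpi.1)
            · exact mul_le_mul_of_nonneg_left ih0' (by linarith [hpi.2])
        _ = NPr p (insert i M') w := by rw [condZ1, condZ0]; exact recombine
        _ ≤ NPr p (maxSet ℓ usedᶜ (m+1)) w := hfin

end AG
namespace AG
open DTree
variable {n : ℕ}

lemma ind_not (P : Prop) : ind (¬ P) = 1 - ind P := by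
  by_cases h : P
  · rw [ind_of h, ind_of_not (not_not_intro h)]; ring
  · rw [ind_of_not h, ind_of h]; ring

/-- number of prefix lengths m < n that do NOT yet contain w a ones -/
noncomputable def stopCount (ℓ : List (Fin n)) (w : (Fin n → Bool) → ℕ)
    (a : Fin n → Bool) : ℕ :=
  ((Finset.range n).filter (fun m => ¬ (w a ≤ ones (ℓ.take m).toFinset a))).card

lemma sum_ind_eq_card {β : Type*} (s : Finset β) (P : β → Prop) [DecidablePred P] :
    ∑ x ∈ s, ind (P x) = ((s.filter P).card : ℝ) := by
  rw [← Finset.sum_boole]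
  apply Finset.sum_congr rfl
  intro x _
  by_cases h : P x
  · rw [ind_of h, if_pos h]
  · rw [ind_of_not h, if_neg h]

lemma stopCount_eq_sum (ℓ : List (Fin n)) (w : (Fin n → Bool) → ℕ) (a : Fin n → Bool) :
    (stopCount ℓ w a : ℝ)
      = ∑ m ∈ Finset.range n, (1 - ind (w a ≤ ones (ℓ.take m).toFinset a)) := by
  rw [stopCount, ← sum_ind_eq_card]
  apply Finset.sum_congr rfl
  intro m _
  rw [ind_not]

lemma pathlen_le {T : DTree n} (hT : T.Proper ∅) (a : Fin n → Bool) :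
    (T.path a).length ≤ n := by
  have := (path_nodup hT a).length_le_card
  simpa using this

lemma dc_eq_range {D : Finset ℕ} {N : ℕ} (hsub : D ⊆ Finset.range N)
    (hdc : ∀ x ∈ D, ∀ y, y ≤ x → y ∈ D) : D = Finset.range D.card := by
  have hsub2 : D ⊆ Finset.range D.card := by
    intro x hx
    rw [Finset.mem_range]
    have hss : Finset.range (x + 1) ⊆ D := by
      intro y hy
      have := Finset.mem_range.mp hy
      exact hdc x hx y (by omega)
    have := Finset.card_le_card hss
    rw [Finset.card_range] at this
    omega
  exact Finset.eq_of_subset_of_card_le hsub2 (by rw [Finset.card_range])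

lemma take_finset_mono (ℓ : List (Fin n)) {m m' : ℕ} (h : m ≤ m') :
    (ℓ.take m).toFinset ⊆ (ℓ.take m').toFinset := by
  intro x hx
  rw [List.mem_toFinset] at hx ⊢
  have : ℓ.take m = (ℓ.take m').take m := by
    rw [List.take_take, min_eq_left h]
  rw [this] at hx
  exact List.mem_of_mem_take hx

/-- at its own stopping index the prefix contains enough ones -/
lemma stopCount_spec (ℓ : List (Fin n)) (hlen : ℓ.length = n)
    (hfull : ∀ i, i ∈ ℓ) (w : (Fin n → Bool) → ℕ) (a : Fin n → Bool)
    (hwa : w a ≤ ones Finset.univ a) :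
    w a ≤ ones (ℓ.take (stopCount ℓ w a)).toFinset a ∧ stopCount ℓ w a ≤ n := by
  set D := ((Finset.range n).filter
    (fun m => ¬ (w a ≤ ones (ℓ.take m).toFinset a))) with hD
  have hsub : D ⊆ Finset.range n := Finset.filter_subset _ _
  have hdc : ∀ x ∈ D, ∀ y, y ≤ x → y ∈ D := by
    intro x hx y hxy
    rw [hD, Finset.mem_filter] at hx ⊢
    refine ⟨Finset.mem_range.mpr (lt_of_le_of_lt hxy (Finset.mem_range.mp hx.1)), ?_⟩
    intro hle
    exact hx.2 (le_trans hle (ones_mono (take_finset_mono ℓ hxy) a))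
  have hcard : D.card ≤ n := le_trans (Finset.card_le_card hsub) (by rw [Finset.card_range])
  have hsc : stopCount ℓ w a = D.card := rfl
  constructor
  · by_cases hn : D.card < n
    · have : D.card ∉ D := by
        rw [dc_eq_range hsub hdc]
        simp
      rw [hD, Finset.mem_filter, not_and] at this
      have := this (Finset.mem_range.mpr hn)
      rw [not_not] at this
      rw [hsc]
      exact this
    · have hDn : D.card = n := by omega
      rw [hsc, hDn]
      have : ℓ.take n = ℓ := List.take_of_length_le (by omega)
      rw [this]
      have : ℓ.toFinset = Finset.univ := by
        apply Finset.eq_univ_of_forall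
        intro x
        rw [List.mem_toFinset]
        exact hfull x
      rw [this]
      exact hwa
  · rw [hsc]; exact hcard

lemma maxSet_univ (ℓ : List (Fin n)) (m : ℕ) :
    maxSet ℓ Finset.univ m = (ℓ.take m).toFinset := by
  rw [maxSet]
  congr 2
  apply List.filter_eq_self.mpr
  intro x _
  simp

/-- The dominance theorem: expected stopping time of the sorted nonadaptive order
is at most the expected path length of any adaptive tree whose paths always
collect at least `w a` ones. -/
lemma dominance (p : Fin n → ℝ) (hp : ∀ i, 0 < p i ∧ p i < 1)
    (ℓ : List (Fin n)) (hs : List.Pairwise (rel p) ℓ) (hnd : ℓ.Nodup)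
    (hfull : ∀ i, i ∈ ℓ) (w : (Fin n → Bool) → ℕ) (hw : W1 Finset.univ w)
    (T : DTree n) (hT : T.Proper ∅)
    (hpath : ∀ a, w a ≤ ones (T.path a).toFinset a) :
    ∑ a : Fin n → Bool, pr p a * (stopCount ℓ w a : ℝ)
      ≤ ∑ a : Fin n → Bool, pr p a * ((T.path a).length : ℝ) := by
  have hWuniv : W1 (∅ : Finset (Fin n))ᶜ w := by
    rw [Finset.compl_empty]
    exact hw
  -- per-m comparison
  have perm : ∀ m : ℕ,
      ∑ a : Fin n → Bool, pr p a * ind (w a ≤ ones ((T.path a).take m).toFinset a)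
        ≤ ∑ a : Fin n → Bool, pr p a * ind (w a ≤ ones (ℓ.take m).toFinset a) := by
    intro m
    have := tree_ind p hp ℓ hs hnd hfull T ∅ hT m w hWuniv
    rw [NPr] at this
    calc ∑ a : Fin n → Bool, pr p a * ind (w a ≤ ones ((T.path a).take m).toFinset a)
        ≤ ∑ a : Fin n → Bool, pr p a * ind (w a ≤ ones (maxSet ℓ (∅ : Finset (Fin n))ᶜ m) a) := this
      _ = ∑ a : Fin n → Bool, pr p a * ind (w a ≤ ones (ℓ.take m).toFinset a) := by
          apply Finset.sum_congr rfl
          intro a _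
          rw [Finset.compl_empty, maxSet_univ]
  calc ∑ a : Fin n → Bool, pr p a * (stopCount ℓ w a : ℝ)
      = ∑ m ∈ Finset.range n, ∑ a : Fin n → Bool,
          pr p a * (1 - ind (w a ≤ ones (ℓ.take m).toFinset a)) := by
        rw [Finset.sum_comm]
        apply Finset.sum_congr rfl
        intro a _
        rw [stopCount_eq_sum, Finset.mul_sum]
    _ ≤ ∑ m ∈ Finset.range n, ∑ a : Fin n → Bool,
          pr p a * (1 - ind (w a ≤ ones ((T.path a).take m).toFinset a)) := by
        apply Finset.sum_le_sum
        intro m _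
        have h2 := perm m
        have e1 : ∀ (g : (Fin n → Bool) → Prop),
            ∑ a : Fin n → Bool, pr p a * (1 - ind (g a))
              = (∑ a : Fin n → Bool, pr p a) - ∑ a : Fin n → Bool, pr p a * ind (g a) := by
          intro g
          rw [← Finset.sum_sub_distrib]
          apply Finset.sum_congr rfl
          intro a _; ring
        rw [e1, e1]
        linarith
    _ = ∑ a : Fin n → Bool, ∑ m ∈ Finset.range n,
          pr p a * (1 - ind (w a ≤ ones ((T.path a).take m).toFinset a)) := Finset.sum_comm
    _ ≤ ∑ a : Fin n → Bool, pr p a * ((T.path a).length : ℝ) := by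
        apply Finset.sum_le_sum
        intro a _
        rw [← Finset.mul_sum]
        apply mul_le_mul_of_nonneg_left _ (pr_nonneg hp a)
        set L := (T.path a).length with hL
        have hLn : L ≤ n := pathlen_le hT a
        calc ∑ m ∈ Finset.range n, (1 - ind (w a ≤ ones ((T.path a).take m).toFinset a))
            ≤ ∑ m ∈ Finset.range n, (if m < L then (1:ℝ) else 0) := by
              apply Finset.sum_le_sum
              intro m _
              by_cases hm : m < L
              · rw [if_pos hm]
                have := ind_nonneg (w a ≤ ones ((T.path a).take m).toFinset a)
                linarith
              · rw [if_neg hm]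
                have htake : (T.path a).take m = T.path a :=
                  List.take_of_length_le (by omega)
                rw [htake, ind_of (hpath a)]
                norm_num
          _ = (L : ℝ) := by
              rw [Finset.sum_ite, Finset.sum_const, Finset.sum_const]
              have : (Finset.range n).filter (fun m => m < L) = Finset.range L := by
                ext x
                simp only [Finset.mem_filter, Finset.mem_range]
                omega
              rw [this]
              simp
    
end AG
namespace AG
open DTree
variable {n : ℕ}

/-- global bit-flip as a permutation of assignments -/
def flipAll : Equiv.Perm (Fin n → Bool) :=
  Function.Involutive.toPerm (fun a k => !a k) (by intro a; funext k; simp)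

lemma flipAll_apply (a : Fin n → Bool) (k : Fin n) : flipAll a k = !a k := rfl

lemma flipAll_flipAll (a : Fin n → Bool) : flipAll (flipAll a) = a := by
  funext k; simp [flipAll_apply]

lemma pr_flip (p : Fin n → ℝ) (a : Fin n → Bool) :
    pr (fun i => 1 - p i) (flipAll a) = pr p a := by
  unfold pr
  apply Finset.prod_congr rfl
  intro k _
  rw [flipAll_apply]
  cases h : a k
  · norm_num
  · norm_num

def flipTree : DTree n → DTree n
  | .leaf v => .leaf v
  | .node i t0 t1 => .node i (flipTree t1) (flipTree t0)

lemma flipTree_proper (T : DTree n) : ∀ used, T.Proper used → (flipTree T).Proper used := by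
  induction T with
  | leaf v => intro used h; trivial
  | node i t0 t1 ih0 ih1 =>
    intro used hT
    simp only [DTree.Proper] at hT
    obtain ⟨hi, h0, h1⟩ := hT
    exact ⟨hi, ih1 _ h1, ih0 _ h0⟩

lemma flipTree_path (T : DTree n) (a : Fin n → Bool) :
    (flipTree T).path a = T.path (flipAll a) := by
  induction T with
  | leaf v => rfl
  | node i t0 t1 ih0 ih1 =>
    show (DTree.node i (flipTree t1) (flipTree t0)).path a = _
    simp only [DTree.path, flipAll_apply]
    by_cases h : a i = true
    · rw [if_pos h]; simp [h, ih0]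
    · have h' : a i = false := by revert h; cases a i <;> simp
      rw [if_neg h]; simp [h', ih1]

lemma ones_split (Q : Finset (Fin n)) (a : Fin n → Bool) :
    ones Finset.univ a = ones Q a + ones Qᶜ a := by
  unfold ones
  rw [← Finset.union_compl Q, Finset.filter_union]
  exact Finset.card_union_of_disjoint
    (Finset.disjoint_filter_filter disjoint_compl_right)

lemma card_compl_fin (Q : Finset (Fin n)) : Qᶜ.card = n - Q.card := by
  rw [Finset.card_compl, Fintype.card_fin]

/-- full decision tree evaluating h -/
def mkT (h : (Fin n → Bool) → ℕ) : List (Fin n) → (Fin n → Bool) → DTree n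
  | [], v => DTree.leaf (h v)
  | i :: l, v => DTree.node i (mkT h l (Function.update v i false))
      (mkT h l (Function.update v i true))

lemma mkT_proper (h : (Fin n → Bool) → ℕ) :
    ∀ (l : List (Fin n)) (v : Fin n → Bool) (used : Finset (Fin n)),
      l.Nodup → (∀ j ∈ l, j ∉ used) → (mkT h l v).Proper used := by
  intro l
  induction l with
  | nil => intro v used _ _; trivial
  | cons i l ih =>
    intro v used hnd hdis
    rw [List.nodup_cons] at hnd
    refine ⟨hdis i (List.mem_cons_self), ?_, ?_⟩
    · apply ih _ _ hnd.2
      intro j hj hmem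
      rcases Finset.mem_insert.mp hmem with rfl | hmem2
      · exact hnd.1 hj
      · exact hdis j (List.mem_cons_of_mem i hj) hmem2
    · apply ih _ _ hnd.2
      intro j hj hmem
      rcases Finset.mem_insert.mp hmem with rfl | hmem2
      · exact hnd.1 hj
      · exact hdis j (List.mem_cons_of_mem i hj) hmem2

lemma mkT_eval (h : (Fin n → Bool) → ℕ) :
    ∀ (l : List (Fin n)) (v a : Fin n → Bool),
      (∀ j, j ∉ l → v j = a j) → (mkT h l v).eval a = h a := by
  intro l
  induction l with
  | nil =>
    intro v a hva
    have : v = a := funext (fun j => hva j (List.not_mem_nil))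
    rw [mkT, DTree.eval, this]
  | cons i l ih =>
    intro v a hva
    show (DTree.node i _ _).eval a = h a
    rw [DTree.eval]
    cases hai : a i
    · rw [if_neg Bool.false_ne_true]
      apply ih
      intro j hj
      by_cases hji : j = i
      · subst hji; rw [Function.update_self, hai]
      · rw [Function.update_of_ne hji]
        exact hva j (by simp [hji, hj])
    · rw [if_pos rfl]
      apply ih
      intro j hj
      by_cases hji : j = i
      · subst hji; rw [Function.update_self, hai]
      · rw [Function.update_of_ne hji]
        exact hva j (by simp [hji, hj])

lemma sum_map_one {c : Fin n → ℝ} (hc : ∀ i, c i = 1) :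
    ∀ l : List (Fin n), (l.map c).sum = (l.length : ℝ) := by
  intro l
  induction l with
  | nil => simp
  | cons i l ih => simp [hc i, ih]; ring

lemma mem_take_of_getElem {α : Type*} (l : List α) (K i : ℕ) (h : i < l.length)
    (hiK : i < K) : l[i] ∈ l.take K := by
  have hlen : i < (l.take K).length := by
    rw [List.length_take]; omega
  have : (l.take K)[i] = l[i] := List.getElem_take
  rw [← this]
  exact List.getElem_mem hlen

lemma getElem_reverse' {α : Type*} (l : List α) (N k : ℕ) (hlen : l.length = N)
    (hk : k < N) :
    l.reverse[k]'(by rw [List.length_reverse, hlen]; exact hk)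
      = l[N - 1 - k]'(by rw [hlen]; omega) := by
  subst hlen
  exact List.getElem_reverse _

end AG
namespace AG
variable {n : ℕ}

lemma alpha_mono (B : ℕ) (α : ℕ → ℕ) (hmono : ∀ j, 1 ≤ j → j ≤ B → α j < α (j + 1)) :
    ∀ u v, 1 ≤ u → u ≤ v → v ≤ B + 1 → α u ≤ α v := by
  intro u v hu
  induction v with
  | zero => intro huv _; exact absurd huv (by omega)
  | succ v ih =>
    intro huv hvB
    rcases Nat.lt_or_ge u (v + 1) with h | h
    · have h1 : α u ≤ α v := ih (by omega) (by omega)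
      have h2 : α v < α (v + 1) := hmono v (by omega) (by omega)
      omega
    · have : u = v + 1 := by omega
      rw [this]

lemma class_unique {B : ℕ} {α : ℕ → ℕ} (hmono : ∀ j, 1 ≤ j → j ≤ B → α j < α (j + 1))
    {x j k : ℕ} (hj1 : 1 ≤ j) (hjB : j ≤ B) (hk1 : 1 ≤ k) (hkB : k ≤ B)
    (hxj : α j ≤ x) (hxj' : x < α (j + 1)) (hxk : α k ≤ x) (hxk' : x < α (k + 1)) :
    j = k := by
  by_contra hne
  rcases Nat.lt_or_ge j k with h | h
  · have : α (j + 1) ≤ α k := alpha_mono B α hmono (j + 1) k (by omega) (by omega) (by omega)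
    omega
  · have hkj : k < j := by omega
    have : α (k + 1) ≤ α j := alpha_mono B α hmono (k + 1) j (by omega) (by omega) (by omega)
    omega

end AG

theorem stmt7 {n : ℕ} (hn : 1 ≤ n) (p c : Fin n → ℝ)
    (hp : ∀ i, 0 < p i ∧ p i < 1) (hc : ∀ i, c i = 1)
    (B : ℕ) (hB : 2 ≤ B) (α : ℕ → ℕ)
    (hα1 : α 1 = 0) (hαtop : α (B + 1) = n + 1)
    (hmono : ∀ j, 1 ≤ j → j ≤ B → α j < α (j + 1))
    (f : (Fin n → Bool) → ℕ)
    (hf : ∀ a, 1 ≤ f a ∧ f a ≤ B ∧ α (f a) ≤ N1 a ∧ N1 a < α (f a + 1)) :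
    ∃ τ : Equiv.Perm (Fin n),
      naExpCost p c f (List.ofFn (fun t => τ t)) ≤ 4 * OPTcost p c f := by
  classical
  open AG in
  -- sorted lists
  set ℓp := AG.sList p with hℓpdef
  have hsortp : List.Pairwise (AG.rel p) ℓp := AG.sList_sorted p
  have hndp : ℓp.Nodup := AG.sList_nodup p
  have hmemp : ∀ i, i ∈ ℓp := AG.sList_mem p
  have hlenp : ℓp.length = n := AG.sList_length p
  set p' : Fin n → ℝ := fun i => 1 - p i with hp'def
  have hp' : ∀ i, 0 < p' i ∧ p' i < 1 := by
    intro i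
    constructor
    · show (0:ℝ) < 1 - p i
      linarith [(hp i).2]
    · show (1:ℝ) - p i < 1
      linarith [(hp i).1]
  set ℓz := ℓp.reverse with hℓzdef
  have hsortz : List.Pairwise (AG.rel p') ℓz := AG.sList_reverse_sorted p hsortp
  have hndz : ℓz.Nodup := List.nodup_reverse.mpr hndp
  have hmemz : ∀ i, i ∈ ℓz := fun i => List.mem_reverse.mpr (hmemp i)
  have hlenz : ℓz.length = n := by rw [hℓzdef, List.length_reverse, hlenp]
  -- the interleaving permutation
  have hidxlt : ∀ t : Fin n, (if t.val % 2 = 0 then t.val / 2 else n - 1 - t.val / 2) < n := by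
    intro t
    have := t.isLt
    split <;> omega
  set idx : Fin n → Fin n :=
    fun t => ⟨if t.val % 2 = 0 then t.val / 2 else n - 1 - t.val / 2, hidxlt t⟩ with hidxdef
  have idx_inj : Function.Injective idx := by
    intro t t' h
    have h1 := t.isLt
    have h2 := t'.isLt
    have hval : (if t.val % 2 = 0 then t.val / 2 else n - 1 - t.val / 2)
        = (if t'.val % 2 = 0 then t'.val / 2 else n - 1 - t'.val / 2) :=
      congrArg Fin.val h
    apply Fin.ext
    by_cases e1 : t.val % 2 = 0 <;> by_cases e2 : t'.val % 2 = 0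
    · rw [if_pos e1, if_pos e2] at hval; omega
    · rw [if_pos e1, if_neg e2] at hval; omega
    · rw [if_neg e1, if_pos e2] at hval; omega
    · rw [if_neg e1, if_neg e2] at hval; omega
  set g : Fin n → Fin n := fun t => ℓp.get (Fin.cast hlenp.symm (idx t)) with hgdef
  have g_inj : Function.Injective g := by
    intro t t' h
    apply idx_inj
    have := (List.Nodup.get_inj_iff hndp).mp h
    have := congrArg Fin.val this
    exact Fin.ext this
  set τ : Equiv.Perm (Fin n) := Equiv.ofBijective g (Finite.injective_iff_bijective.mp g_inj)
    with hτdef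
  refine ⟨τ, ?_⟩
  set L := List.ofFn (fun t => τ t) with hLdef
  have hτg : ∀ t, τ t = g t := fun t => rfl
  have hLlen : L.length = n := by rw [hLdef, List.length_ofFn]
  have memL : ∀ x : Fin n, x ∈ L := by
    intro x
    obtain ⟨t, ht⟩ := τ.surjective x
    rw [hLdef]
    exact List.mem_ofFn.mpr ⟨t, ht⟩
  have take_all : ∀ K : ℕ, n ≤ K → ∀ x : Fin n, x ∈ L.take K := by
    intro K hK x
    rw [List.take_of_length_le (by omega)]
    exact memL x
  have hLget : ∀ (t : ℕ) (ht : t < n), L[t]'(by rw [hLlen]; exact ht)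
      = ℓp.get (Fin.cast hlenp.symm (idx ⟨t, ht⟩)) := by
    intro t ht
    exact List.getElem_ofFn (f := fun t => τ t) (by rw [List.length_ofFn]; exact ht)
  -- prefix membership lemmas
  have pref1 : ∀ (m K : ℕ), 2 * m ≤ K → ∀ x, x ∈ ℓp.take m → x ∈ L.take K := by
    intro m K hmK x hx
    obtain ⟨k, hk, hkx⟩ := List.mem_iff_getElem.mp hx
    have hkm : k < m := by
      have := hk
      rw [List.length_take] at this
      omega
    have hkn : k < ℓp.length := by
      have := hk
      rw [List.length_take] at this
      omega
    have hxval : ℓp[k] = x := by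
      rw [← hkx, List.getElem_take]
    by_cases h2 : 2 * k < n
    · have hidx : idx ⟨2*k, h2⟩ = ⟨k, by omega⟩ := by
        apply Fin.ext
        show (if (2*k) % 2 = 0 then (2*k) / 2 else n - 1 - (2*k) / 2) = k
        rw [if_pos (by omega)]
        omega
      have hgoal : L[2*k]'(by rw [hLlen]; omega) = x := by
        refine (hLget (2*k) h2).trans ?_
        rw [hidx]
        exact hxval
      rw [← hgoal]
      exact AG.mem_take_of_getElem L K (2*k) (by rw [hLlen]; omega) (by omega)
    · exact take_all K (by omega) x
  have pref0 : ∀ (m K : ℕ), 2 * m ≤ K → ∀ x, x ∈ ℓz.take m → x ∈ L.take K := by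
    intro m K hmK x hx
    obtain ⟨k, hk, hkx⟩ := List.mem_iff_getElem.mp hx
    have hkm : k < m := by
      have := hk
      rw [List.length_take] at this
      omega
    have hkn : k < ℓz.length := by
      have := hk
      rw [List.length_take] at this
      omega
    have hknn : k < n := by omega
    have hxval : ℓz[k]'(by omega) = x := by rw [← hkx, List.getElem_take]
    have hrev : ℓp[n - 1 - k]'(by rw [hlenp]; omega) = x := by
      rw [← AG.getElem_reverse' ℓp n k hlenp hknn]
      exact hxval
    by_cases h2 : 2 * k + 1 < n
    · have hidx : idx ⟨2*k+1, h2⟩ = ⟨n - 1 - k, by omega⟩ := by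
        apply Fin.ext
        show (if (2*k+1) % 2 = 0 then (2*k+1) / 2 else n - 1 - (2*k+1) / 2) = n - 1 - k
        rw [if_neg (by omega)]
        omega
      have hgoal : L[2*k+1]'(by rw [hLlen]; omega) = x := by
        refine (hLget (2*k+1) h2).trans ?_
        rw [hidx]
        exact hrev
      rw [← hgoal]
      exact AG.mem_take_of_getElem L K (2*k+1) (by rw [hLlen]; omega) (by omega)
    · exact take_all K (by omega) x
  -- weights
  set w1 : (Fin n → Bool) → ℕ := fun a => α (f a) with hw1def
  set wz : (Fin n → Bool) → ℕ := fun a => n + 1 - α (f (AG.flipAll a) + 1) with hwzdef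
  have hcard_univ : (Finset.univ : Finset (Fin n)).card = n := by simp
  have hfN : ∀ a b : Fin n → Bool,
      AG.ones Finset.univ a = AG.ones Finset.univ b → f a = f b := by
    intro a b hab
    have ha := hf a
    have hb := hf b
    have hNab : N1 a = N1 b := hab
    have hb1 : α (f b) ≤ N1 a := by rw [hNab]; exact hb.2.2.1
    have hb2 : N1 a < α (f b + 1) := by rw [hNab]; exact hb.2.2.2
    exact AG.class_unique hmono ha.1 ha.2.1 hb.1 hb.2.1 ha.2.2.1 ha.2.2.2 hb1 hb2
  have hW1 : AG.W1 Finset.univ w1 := by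
    intro a b _ hones
    show α (f a) = α (f b)
    rw [hfN a b hones]
  have hWz : AG.W1 Finset.univ wz := by
    intro a b _ hones
    show n + 1 - α (f (AG.flipAll a) + 1) = n + 1 - α (f (AG.flipAll b) + 1)
    have hflipf : f (AG.flipAll a) = f (AG.flipAll b) := by
      apply hfN
      have h1 : AG.ones Finset.univ (AG.flipAll a)
          = Finset.univ.card - AG.ones Finset.univ a := AG.ones_flip _ a
      have h2 : AG.ones Finset.univ (AG.flipAll b)
          = Finset.univ.card - AG.ones Finset.univ b := AG.ones_flip _ b
      rw [h1, h2, hones]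
    rw [hflipf]
  -- nonemptiness of the OPT set
  have hSne : {x : ℝ | ∃ T : DTree n, T.Proper ∅ ∧ (∀ a, T.eval a = f a) ∧
      x = ∑ a : Fin n → Bool, T.cost c a * pr p a}.Nonempty := by
    refine ⟨_, AG.mkT f (List.finRange n) (fun _ => false), ?_, ?_, rfl⟩
    · exact AG.mkT_proper f (List.finRange n) _ ∅ (List.nodup_finRange n)
        (fun j _ h => absurd h (Finset.notMem_empty j))
    · intro a
      exact AG.mkT_eval f (List.finRange n) _ a
        (fun j hj => absurd (List.mem_finRange j) hj)
  -- the main estimate for every adaptive tree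
  have hmain : ∀ x ∈ {x : ℝ | ∃ T : DTree n, T.Proper ∅ ∧ (∀ a, T.eval a = f a) ∧
      x = ∑ a : Fin n → Bool, T.cost c a * pr p a}, naExpCost p c f L ≤ 4 * x := by
    rintro x ⟨T, hTp, hTe, rfl⟩
    -- certificate
    have cert : ∀ a : Fin n → Bool, α (f a) ≤ AG.ones (T.path a).toFinset a ∧
        AG.ones (T.path a).toFinset a + (n + 1)
          ≤ α (f a + 1) + (T.path a).toFinset.card := by
      intro a
      set P := (T.path a).toFinset with hPdef
      have hPcard : P.card ≤ n :=
        le_trans (Finset.card_le_univ P) (le_of_eq (Fintype.card_fin n))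
      set b0 : Fin n → Bool := fun k => if k ∈ P then a k else false with hb0def
      have hb0f : f b0 = f a := by
        rw [← hTe b0, ← hTe a]
        apply AG.eval_agree
        intro k hk
        show (if k ∈ P then a k else false) = a k
        rw [if_pos (List.mem_toFinset.mpr hk)]
      have hb0N : N1 b0 = AG.ones P a := by
        show (Finset.univ.filter (fun k => b0 k = true)).card
          = (P.filter (fun k => a k = true)).card
        congr 1
        ext k
        simp only [Finset.mem_filter, Finset.mem_univ, true_and]
        by_cases hk : k ∈ P
        · simp [hb0def, hk]
        · simp [hb0def, hk]
      have h1 := (hf b0).2.2.1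
      rw [hb0f, hb0N] at h1
      set b1 : Fin n → Bool := fun k => if k ∈ P then a k else true with hb1def
      have hb1f : f b1 = f a := by
        rw [← hTe b1, ← hTe a]
        apply AG.eval_agree
        intro k hk
        show (if k ∈ P then a k else true) = a k
        rw [if_pos (List.mem_toFinset.mpr hk)]
      have hdisj : Disjoint (P.filter (fun k => a k = true)) Pᶜ :=
        Finset.disjoint_left.mpr
          (fun x hx hx2 => (Finset.mem_compl.mp hx2) (Finset.mem_filter.mp hx).1)
      have hb1N : N1 b1 = AG.ones P a + (n - P.card) := by
        show (Finset.univ.filter (fun k => b1 k = true)).card = _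
        have hset : Finset.univ.filter (fun k => b1 k = true)
            = (P.filter (fun k => a k = true)) ∪ Pᶜ := by
          ext k
          simp only [Finset.mem_filter, Finset.mem_univ, true_and, Finset.mem_union,
            Finset.mem_compl]
          by_cases hk : k ∈ P
          · simp [hb1def, hk]
          · simp [hb1def, hk]
        rw [hset, Finset.card_union_of_disjoint hdisj, AG.card_compl_fin]
        rfl
      have h2 := (hf b1).2.2.2
      rw [hb1f, hb1N] at h2
      exact ⟨h1, by omega⟩
    -- ones-side dominance
    have hpath1 : ∀ a, w1 a ≤ AG.ones (T.path a).toFinset a := fun a => (cert a).1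
    have E1 := AG.dominance p hp ℓp hsortp hndp hmemp w1 hW1 T hTp hpath1
    -- zeros-side dominance
    set T' := AG.flipTree T with hT'def
    have hT'p : T'.Proper ∅ := AG.flipTree_proper T ∅ hTp
    have hpathz : ∀ a, wz a ≤ AG.ones (T'.path a).toFinset a := by
      intro a
      have hpp : T'.path a = T.path (AG.flipAll a) := AG.flipTree_path T a
      rw [hpp]
      set b := AG.flipAll a with hbdef
      have hcert := (cert b).2
      have hab : AG.flipAll b = a := by rw [hbdef, AG.flipAll_flipAll]
      have honesflip : AG.ones (T.path b).toFinset (AG.flipAll b)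
          = (T.path b).toFinset.card - AG.ones (T.path b).toFinset b := AG.ones_flip _ b
      rw [hab] at honesflip
      have hle := AG.ones_le_card (S := (T.path b).toFinset) b
      show n + 1 - α (f (AG.flipAll a) + 1) ≤ AG.ones (T.path b).toFinset a
      rw [← hbdef]
      omega
    have E0' := AG.dominance p' hp' ℓz hsortz hndz hmemz wz hWz T' hT'p hpathz
    have hprflip : ∀ a : Fin n → Bool, pr p' (AG.flipAll a) = pr p a :=
      fun a => AG.pr_flip p a
    have hpathflip : ∀ a : Fin n → Bool, T'.path (AG.flipAll a) = T.path a := by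
      intro a
      rw [hT'def, AG.flipTree_path, AG.flipAll_flipAll]
    have E0 : ∑ a : Fin n → Bool, pr p a * (AG.stopCount ℓz wz (AG.flipAll a) : ℝ)
        ≤ ∑ a : Fin n → Bool, pr p a * ((T.path a).length : ℝ) := by
      calc ∑ a : Fin n → Bool, pr p a * (AG.stopCount ℓz wz (AG.flipAll a) : ℝ)
          = ∑ a : Fin n → Bool, pr p' (AG.flipAll a) * (AG.stopCount ℓz wz (AG.flipAll a) : ℝ) := by
            apply Finset.sum_congr rfl
            intro a _
            rw [hprflip]
        _ = ∑ a : Fin n → Bool, pr p' a * (AG.stopCount ℓz wz a : ℝ) :=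
            Equiv.sum_comp AG.flipAll (fun a => pr p' a * (AG.stopCount ℓz wz a : ℝ))
        _ ≤ ∑ a : Fin n → Bool, pr p' a * ((T'.path a).length : ℝ) := E0'
        _ = ∑ a : Fin n → Bool, pr p' (AG.flipAll a) * ((T'.path (AG.flipAll a)).length : ℝ) :=
            (Equiv.sum_comp AG.flipAll (fun a => pr p' a * ((T'.path a).length : ℝ))).symm
        _ = ∑ a : Fin n → Bool, pr p a * ((T.path a).length : ℝ) := by
            apply Finset.sum_congr rfl
            intro a _
            rw [hprflip, hpathflip]
    have hxlen : (∑ a : Fin n → Bool, T.cost c a * pr p a)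
        = ∑ a : Fin n → Bool, pr p a * ((T.path a).length : ℝ) := by
      apply Finset.sum_congr rfl
      intro a _
      rw [AG.cost_eq_path_length hc]
      ring
    -- per-assignment nonadaptive cost bound
    have hna : ∀ a : Fin n → Bool, naCost c f a L
        ≤ 2 * (AG.stopCount ℓp w1 a : ℝ) + 2 * (AG.stopCount ℓz wz (AG.flipAll a) : ℝ) := by
      intro a
      set s1 := AG.stopCount ℓp w1 a with hs1def
      set s0 := AG.stopCount ℓz wz (AG.flipAll a) with hs0def
      have spec1 := AG.stopCount_spec ℓp hlenp hmemp w1 a (by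
        show α (f a) ≤ AG.ones Finset.univ a
        exact (hf a).2.2.1)
      have spec0 := AG.stopCount_spec ℓz hlenz hmemz wz (AG.flipAll a) (by
        show n + 1 - α (f (AG.flipAll (AG.flipAll a)) + 1) ≤ AG.ones Finset.univ (AG.flipAll a)
        rw [AG.flipAll_flipAll]
        have hflip : AG.ones Finset.univ (AG.flipAll a)
            = Finset.univ.card - AG.ones Finset.univ a := AG.ones_flip _ a
        have h4 := (hf a).2.2.2
        have h5 : AG.ones Finset.univ a ≤ n :=
          le_trans (AG.ones_le_card a) (le_of_eq hcard_univ)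
        rw [hflip, hcard_univ]
        have h6 : N1 a = AG.ones Finset.univ a := rfl
        omega)
      set K := 2 * s1 + 2 * s0 with hKdef
      have hdet : K ∈ {k : ℕ | ∀ b : Fin n → Bool,
          (∀ i ∈ L.take k, b i = a i) → f b = f a} := by
        intro b hb
        have honesb : AG.ones (ℓp.take s1).toFinset b = AG.ones (ℓp.take s1).toFinset a :=
          AG.ones_congr (fun k hk => hb k (pref1 s1 K (by omega) k (List.mem_toFinset.mp hk)))
        have h1 : α (f a) ≤ AG.ones Finset.univ b := by
          calc α (f a) ≤ AG.ones (ℓp.take s1).toFinset a := spec1.1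
            _ = AG.ones (ℓp.take s1).toFinset b := honesb.symm
            _ ≤ AG.ones Finset.univ b := AG.ones_mono (Finset.subset_univ _) b
        set Q := (ℓz.take s0).toFinset with hQdef
        have honesbz : AG.ones Q (AG.flipAll b) = AG.ones Q (AG.flipAll a) :=
          AG.ones_congr (fun k hk => by
            rw [AG.flipAll_apply, AG.flipAll_apply,
              hb k (pref0 s0 K (by omega) k (List.mem_toFinset.mp hk))])
        have hz0 : wz (AG.flipAll a) ≤ AG.ones Q (AG.flipAll a) := spec0.1
        have hwzval : wz (AG.flipAll a) = n + 1 - α (f a + 1) := by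
          show n + 1 - α (f (AG.flipAll (AG.flipAll a)) + 1) = _
          rw [AG.flipAll_flipAll]
        rw [hwzval] at hz0
        have hQcard : Q.card ≤ n :=
          le_trans (Finset.card_le_univ Q) (le_of_eq (Fintype.card_fin n))
        have hsplit := AG.ones_split Q b
        have hQc : AG.ones Qᶜ b ≤ n - Q.card := by
          have h7 := AG.ones_le_card (S := Qᶜ) b
          rw [AG.card_compl_fin] at h7
          exact h7
        have hflipQ : AG.ones Q (AG.flipAll b) = Q.card - AG.ones Q b := AG.ones_flip Q b
        have honesQle : AG.ones Q b ≤ Q.card := AG.ones_le_card b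
        have hNble : AG.ones Finset.univ b ≤ n :=
          le_trans (AG.ones_le_card b) (le_of_eq hcard_univ)
        have h2 : AG.ones Finset.univ b < α (f a + 1) := by omega
        have hfb := hf b
        have hfa := hf a
        exact AG.class_unique hmono hfb.1 hfb.2.1 hfa.1 hfa.2.1 hfb.2.2.1 hfb.2.2.2 h1 h2
      set SK := sInf {k : ℕ | ∀ b : Fin n → Bool,
          (∀ i ∈ L.take k, b i = a i) → f b = f a} with hSKdef
      have hnaval : naCost c f a L = ((L.take SK).map c).sum := rfl
      rw [hnaval, AG.sum_map_one hc]
      have hsinf : SK ≤ K := by rw [hSKdef]; exact Nat.sInf_le hdet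
      clear_value SK
      have hlen2 : (L.take SK).length ≤ K := by
        rw [List.length_take]
        exact le_trans (min_le_left _ _) hsinf
      have hc1 : ((L.take SK).length : ℝ) ≤ (K : ℝ) := by exact_mod_cast hlen2
      have hc2 : (K : ℝ) = 2 * (s1 : ℝ) + 2 * (s0 : ℝ) := by
        rw [hKdef]
        push_cast
        ring
      linarith
    -- combine
    calc naExpCost p c f L = ∑ a : Fin n → Bool, naCost c f a L * pr p a := rfl
      _ ≤ ∑ a : Fin n → Bool,
            (2 * (AG.stopCount ℓp w1 a : ℝ) + 2 * (AG.stopCount ℓz wz (AG.flipAll a) : ℝ))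
              * pr p a := by
          apply Finset.sum_le_sum
          intro a _
          exact mul_le_mul_of_nonneg_right (hna a) (AG.pr_nonneg hp a)
      _ = 2 * (∑ a : Fin n → Bool, pr p a * (AG.stopCount ℓp w1 a : ℝ))
          + 2 * (∑ a : Fin n → Bool, pr p a * (AG.stopCount ℓz wz (AG.flipAll a) : ℝ)) := by
          rw [Finset.mul_sum, Finset.mul_sum, ← Finset.sum_add_distrib]
          apply Finset.sum_congr rfl
          intro a _
          ring
      _ ≤ 2 * (∑ a : Fin n → Bool, pr p a * ((T.path a).length : ℝ))
          + 2 * (∑ a : Fin n → Bool, pr p a * ((T.path a).length : ℝ)) := by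
          have h21 := mul_le_mul_of_nonneg_left E1 (by norm_num : (0:ℝ) ≤ 2)
          have h20 := mul_le_mul_of_nonneg_left E0 (by norm_num : (0:ℝ) ≤ 2)
          linarith
      _ = 4 * (∑ a : Fin n → Bool, T.cost c a * pr p a) := by
          rw [hxlen]
          ring
  -- conclude via le_csInf
  rw [OPTcost]
  have h14 : naExpCost p c f L / 4
      ≤ sInf {x : ℝ | ∃ T : DTree n, T.Proper ∅ ∧ (∀ a, T.eval a = f a) ∧
          x = ∑ a : Fin n → Bool, T.cost c a * pr p a} := by
    apply le_csInf hSne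
    intro x hx
    have := hmain x hx
    linarith
  linarith
end
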